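/- arXiv:1003.2149 — 8 statements merged into one kernel-verified Lean document; each statement's English description precedes it below -/
import Mathlib

section
/- Let m ≥ 2. If the symbolic power I_G^{(m)} is a Cohen-Macaulay ideal, then G is connected and diam(G) ≤ 2. -/
open MvPolynomial

/-- The prime ideal `P_{ij}` of `S = k[x_1,…,x_n]` generated by all variables `x_t`
with `t ∉ {i,j}`. -/
noncomputable def varPrime (k : Type) [Field k] {n : ℕ} (i j : Fin n) :
    Ideal (MvPolynomial (Fin n) k) :=
  Ideal.span ((fun t => (X t : MvPolynomial (Fin n) k)) '' {t | t ≠ i ∧ t ≠ j})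

/-- The `m`-th symbolic power `I_G^{(m)} = ⋂_{{i,j} ∈ G} P_{ij}^m`; for `m = 1` this is
the ideal `I_G` itself. -/
noncomputable def symbolicPower (k : Type) [Field k] {n : ℕ} (G : SimpleGraph (Fin n))
    (m : ℕ) : Ideal (MvPolynomial (Fin n) k) :=
  ⨅ (i : Fin n) (j : Fin n) (_ : G.Adj i j), (varPrime k i j) ^ m

/-- An ideal `J` of the polynomial ring `S = k[x_1,…,x_n]` is Cohen-Macaulay
(i.e. `S/J` is a Cohen-Macaulay ring) iff there is a regular sequence on `S ⧸ J`
contained in the maximal graded ideal `(x_1,…,x_n)` whose length equals the Krull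
dimension of `S ⧸ J` (depth = dimension). -/
noncomputable def IsCohenMacaulayIdeal (k : Type) [Field k] {n : ℕ}
    (J : Ideal (MvPolynomial (Fin n) k)) : Prop :=
  ∃ rs : List (MvPolynomial (Fin n) k),
    (∀ r ∈ rs, r ∈ Ideal.span (Set.range (X : Fin n → MvPolynomial (Fin n) k))) ∧
    RingTheory.Sequence.IsRegular (MvPolynomial (Fin n) k ⧸ J) rs ∧
    (rs.length : WithBot (WithTop ℕ)) = ringKrullDim (MvPolynomial (Fin n) k ⧸ J)

open scoped Classical Pointwise

namespace CMAux

variable {k : Type} [Field k] {n : ℕ}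

/-- weight of an exponent vector w.r.t. a set of variables -/
noncomputable def wt (T : Set (Fin n)) (d : Fin n →₀ ℕ) : ℕ :=
  d.sum fun t e => if t ∈ T then e else 0

lemma wt_add (T : Set (Fin n)) (d₁ d₂ : Fin n →₀ ℕ) :
    wt T (d₁ + d₂) = wt T d₁ + wt T d₂ := by
  classical
  exact Finsupp.sum_add_index' (fun t => by simp) (fun t e₁ e₂ => by split_ifs <;> simp)

lemma wt_single (T : Set (Fin n)) (t : Fin n) (e : ℕ) :
    wt T (Finsupp.single t e) = if t ∈ T then e else 0 := by
  classical
  exact Finsupp.sum_single_index (by simp)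

/-- the weight grading ring homomorphism -/
noncomputable def Psi (T : Set (Fin n)) :
    MvPolynomial (Fin n) k →+* Polynomial (MvPolynomial (Fin n) k) :=
  MvPolynomial.eval₂Hom (Polynomial.C.comp MvPolynomial.C)
    (fun t => if t ∈ T then Polynomial.C (X t) * Polynomial.X else Polynomial.C (X t))

lemma Psi_X (T : Set (Fin n)) (t : Fin n) :
    Psi (k := k) T (X t)
      = if t ∈ T then Polynomial.C (X t) * Polynomial.X else Polynomial.C (X t) := by
  simp [Psi]

lemma Psi_monomial (T : Set (Fin n)) (d : Fin n →₀ ℕ) (a : k) :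
    Psi T (monomial d a)
      = Polynomial.C (monomial d a) * Polynomial.X ^ (wt T d) := by
  classical
  rw [Psi, eval₂Hom_monomial]
  have h1 : ∀ t e, ((if t ∈ T then Polynomial.C (X t : MvPolynomial (Fin n) k) * Polynomial.X
        else Polynomial.C (X t)) ^ e)
      = Polynomial.C ((X t : MvPolynomial (Fin n) k) ^ e)
          * Polynomial.X ^ (if t ∈ T then e else 0) := by
    intro t e
    split_ifs with h
    · rw [mul_pow, map_pow]
    · rw [map_pow, pow_zero, mul_one]
  have h2 : (d.prod fun t e => (if t ∈ T then Polynomial.C (X t : MvPolynomial (Fin n) k)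
        * Polynomial.X else Polynomial.C (X t)) ^ e)
      = (d.prod fun t e => Polynomial.C ((X t : MvPolynomial (Fin n) k) ^ e))
          * (d.prod fun t e => Polynomial.X ^ (if t ∈ T then e else 0)) := by
    rw [← Finsupp.prod_mul]
    exact Finsupp.prod_congr fun t _ => h1 t (d t)
  have h3 : (d.prod fun t e => Polynomial.C ((X t : MvPolynomial (Fin n) k) ^ e))
      = Polynomial.C (d.prod fun t e => (X t : MvPolynomial (Fin n) k) ^ e) :=
    (map_finsuppProd (Polynomial.C : MvPolynomial (Fin n) k →+* Polynomial (MvPolynomial (Fin n) k)) d (fun t e => (X t) ^ e)).symm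
  have h4 : (d.prod fun (t : Fin n) (e : ℕ) =>
        (Polynomial.X : Polynomial (MvPolynomial (Fin n) k)) ^ (if t ∈ T then e else 0))
      = Polynomial.X ^ (wt T d) :=
    Finset.prod_pow_eq_pow_sum d.support _ _
  rw [h2, h3, h4, monomial_eq, map_mul]
  simp only [RingHom.comp_apply]
  ring

lemma coeff_coeff_Psi (T : Set (Fin n)) (p : MvPolynomial (Fin n) k) (i : ℕ) (d : Fin n →₀ ℕ) :
    ((Psi T p).coeff i).coeff d = if wt T d = i then p.coeff d else 0 := by
  classical
  induction p using MvPolynomial.induction_on' with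
  | monomial e a =>
    rw [Psi_monomial, Polynomial.coeff_C_mul, Polynomial.coeff_X_pow]
    rw [MvPolynomial.coeff_monomial]
    by_cases he : e = d
    · subst he
      by_cases hi : wt T e = i
      · simp [hi]
      · simp [hi, Ne.symm hi]
    · split_ifs <;> simp [MvPolynomial.coeff_monomial, he]
  | add p q hp hq =>
    rw [map_add, Polynomial.coeff_add, MvPolynomial.coeff_add, hp, hq, MvPolynomial.coeff_add]
    split_ifs <;> simp

/-- the prime generated by the variables in `T` -/
noncomputable def PP (k : Type) [Field k] {n : ℕ} (T : Set (Fin n)) :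
    Ideal (MvPolynomial (Fin n) k) :=
  Ideal.span ((fun t => (X t : MvPolynomial (Fin n) k)) '' T)

lemma X_mem_PP {T : Set (Fin n)} {t : Fin n} (ht : t ∈ T) :
    (X t : MvPolynomial (Fin n) k) ∈ PP k T :=
  Ideal.subset_span ⟨t, ht, rfl⟩

lemma X_dvd_Psi_of_mem_PP {T : Set (Fin n)} {p : MvPolynomial (Fin n) k} (hp : p ∈ PP k T) :
    Polynomial.X ∣ Psi T p := by
  have hle : PP k T ≤ Ideal.comap (Psi (k := k) T) (Ideal.span {Polynomial.X}) := by
    rw [PP, Ideal.span_le]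
    rintro - ⟨t, ht, rfl⟩
    simp only [Set.mem_setOf_eq, SetLike.mem_coe, Ideal.mem_comap, Psi_X, if_pos ht]
    exact Ideal.mem_span_singleton.mpr (dvd_mul_left _ _)
  exact Ideal.mem_span_singleton.mp (hle hp)

lemma Xpow_dvd_Psi_of_mem_pow {T : Set (Fin n)} {m : ℕ} {p : MvPolynomial (Fin n) k}
    (hp : p ∈ (PP k T) ^ m) : Polynomial.X ^ m ∣ Psi T p := by
  induction m generalizing p with
  | zero => simpa using one_dvd _
  | succ m ih =>
    rw [pow_succ] at hp
    refine Submodule.mul_induction_on hp (fun a ha b hb => ?_) (fun x y hx hy => by rw [map_add]; exact dvd_add hx hy)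
    rw [map_mul, pow_succ]
    exact mul_dvd_mul (ih ha) (X_dvd_Psi_of_mem_PP hb)

lemma prodpow_mem (T : Set (Fin n)) (s : Finset (Fin n)) (hs : ∀ t ∈ s, t ∈ T)
    (g : Fin n → ℕ) :
    (∏ t ∈ s, (X t : MvPolynomial (Fin n) k) ^ g t) ∈ (PP k T) ^ (∑ t ∈ s, g t) := by
  classical
  induction s using Finset.induction_on with
  | empty => simp [Ideal.one_eq_top]
  | @insert a s ha ih =>
    rw [Finset.prod_insert ha, Finset.sum_insert ha, pow_add]
    exact Ideal.mul_mem_mul (Ideal.pow_mem_pow (X_mem_PP (hs a (s.mem_insert_self a))) _)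
      (ih fun t ht => hs t (Finset.mem_insert_of_mem ht))

lemma monomial_mem_pow {T : Set (Fin n)} {m : ℕ} {d : Fin n →₀ ℕ} (h : m ≤ wt T d) (a : k) :
    monomial d a ∈ (PP k T) ^ m := by
  classical
  have hsplit : (d.prod fun t e => (X t : MvPolynomial (Fin n) k) ^ e)
      = (∏ t ∈ d.support.filter (· ∈ T), (X t : MvPolynomial (Fin n) k) ^ d t)
        * ∏ t ∈ d.support.filter (¬ · ∈ T), (X t : MvPolynomial (Fin n) k) ^ d t :=
    (Finset.prod_filter_mul_prod_filter_not d.support _ _).symm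
  have hwt : wt T d = ∑ t ∈ d.support.filter (· ∈ T), d t := by
    rw [wt, Finsupp.sum, Finset.sum_filter]
  have hmem : (∏ t ∈ d.support.filter (· ∈ T), (X t : MvPolynomial (Fin n) k) ^ d t)
      ∈ (PP k T) ^ (wt T d) := by
    rw [hwt]
    exact prodpow_mem T _ (fun t ht => (Finset.mem_filter.mp ht).2) _
  have : monomial d a = (C a * ∏ t ∈ d.support.filter (¬ · ∈ T),
      (X t : MvPolynomial (Fin n) k) ^ d t)
        * ∏ t ∈ d.support.filter (· ∈ T), (X t : MvPolynomial (Fin n) k) ^ d t := by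
    rw [monomial_eq, hsplit]; ring
  rw [this]
  exact Ideal.pow_le_pow_right h (Ideal.mul_mem_left _ _ hmem)

lemma mem_pow_iff_dvd {T : Set (Fin n)} {m : ℕ} {p : MvPolynomial (Fin n) k} :
    p ∈ (PP k T) ^ m ↔ Polynomial.X ^ m ∣ Psi T p := by
  constructor
  · exact Xpow_dvd_Psi_of_mem_pow
  · intro h
    have hc : ∀ d ∈ p.support, m ≤ wt T d := by
      intro d hd
      by_contra hlt
      push_neg at hlt
      have h0 : (Psi T p).coeff (wt T d) = 0 := Polynomial.X_pow_dvd_iff.mp h _ hlt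
      have h1 := coeff_coeff_Psi T p (wt T d) d
      rw [h0, if_pos rfl] at h1
      exact (MvPolynomial.mem_support_iff.mp hd) h1.symm
    have : p = ∑ d ∈ p.support, monomial d (coeff d p) := (support_sum_monomial_coeff p).symm
    rw [this]
    exact Ideal.sum_mem _ fun d hd => monomial_mem_pow (hc d hd) _

lemma coeff_eq_zero_of_mem_pow {T : Set (Fin n)} {m : ℕ} {p : MvPolynomial (Fin n) k}
    (hp : p ∈ (PP k T) ^ m) {d : Fin n →₀ ℕ} (hd : wt T d < m) : coeff d p = 0 := by
  have h0 : (Psi T p).coeff (wt T d) = 0 :=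
    Polynomial.X_pow_dvd_iff.mp (mem_pow_iff_dvd.mp hp) _ hd
  have h1 := coeff_coeff_Psi T p (wt T d) d
  rwa [h0, if_pos rfl, MvPolynomial.coeff_zero, eq_comm] at h1

lemma not_X_dvd_of_not_mem {T : Set (Fin n)} {p : MvPolynomial (Fin n) k} (hp : p ∉ PP k T) :
    ¬ (Polynomial.X ∣ Psi T p) := fun h => hp (by
  rw [← pow_one (PP k T)]
  exact mem_pow_iff_dvd.mpr (by simpa using h))

lemma mem_pow_of_mul_mem {T : Set (Fin n)} {m : ℕ} {c r : MvPolynomial (Fin n) k}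
    (h : c * r ∈ (PP k T) ^ m) (hr : r ∉ PP k T) : c ∈ (PP k T) ^ m := by
  rw [mem_pow_iff_dvd] at h ⊢
  rw [map_mul] at h
  exact (Polynomial.prime_X).pow_dvd_of_dvd_mul_right m (not_X_dvd_of_not_mem hr) h

lemma PP_ne_top (T : Set (Fin n)) : PP k T ≠ ⊤ := by
  intro h
  have h1 : (1 : MvPolynomial (Fin n) k) ∈ PP k T := h ▸ Submodule.mem_top
  have := X_dvd_Psi_of_mem_PP h1
  rw [map_one] at this
  exact Polynomial.not_isUnit_X (isUnit_of_dvd_one this)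

lemma PP_prime (T : Set (Fin n)) : (PP k T).IsPrime := by
  refine ⟨PP_ne_top T, fun {a b} hab => ?_⟩
  have h1 : Polynomial.X ∣ Psi T a * Psi T b := by
    rw [← map_mul]
    exact X_dvd_Psi_of_mem_PP hab
  rcases (Polynomial.prime_X).2.2 _ _ h1 with h | h
  · left
    rw [← pow_one (PP k T)]
    exact mem_pow_iff_dvd.mpr (by simpa using h)
  · right
    rw [← pow_one (PP k T)]
    exact mem_pow_iff_dvd.mpr (by simpa using h)

lemma X_not_mem_PP {T : Set (Fin n)} {t : Fin n} (ht : t ∉ T) :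
    (X t : MvPolynomial (Fin n) k) ∉ PP k T := by
  intro h
  have := X_dvd_Psi_of_mem_PP h
  rw [Psi_X, if_neg ht] at this
  obtain ⟨q, hq⟩ := this
  have := congrArg (fun p => Polynomial.coeff p 0) hq
  simp only [Polynomial.coeff_C, if_pos rfl] at this
  rw [Polynomial.coeff_X_mul_zero] at this
  exact X_ne_zero t this


/-- the complement set of an edge -/
def Te (i j : Fin n) : Set (Fin n) := {t | t ≠ i ∧ t ≠ j}

lemma mem_Te {t i j : Fin n} : t ∈ Te i j ↔ t ≠ i ∧ t ≠ j := Iff.rfl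

lemma varPrime_eq_PP (i j : Fin n) : varPrime k i j = PP k (Te i j) := rfl

lemma Te_symm (i j : Fin n) : Te i j = Te j i := Set.ext fun t => and_comm

lemma varPrime_symm (i j : Fin n) : varPrime k i j = varPrime k j i := by
  rw [varPrime_eq_PP, varPrime_eq_PP, Te_symm]

lemma mem_symbolicPower_iff {G : SimpleGraph (Fin n)} {m : ℕ} {p : MvPolynomial (Fin n) k} :
    p ∈ symbolicPower k G m ↔ ∀ i j, G.Adj i j → p ∈ (varPrime k i j) ^ m := by
  simp [symbolicPower, Ideal.mem_iInf]

lemma exists_third (hn : 3 ≤ n) (i j : Fin n) : ∃ s : Fin n, s ≠ i ∧ s ≠ j := by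
  by_contra h
  push_neg at h
  have hsub : (Finset.univ : Finset (Fin n)) ⊆ {i, j} := by
    intro s _
    by_cases hsi : s = i
    · simp [hsi]
    · simp [h s hsi]
  have := Finset.card_le_card hsub
  have hc : ({i, j} : Finset (Fin n)).card ≤ 2 :=
    (Finset.card_insert_le _ _).trans (by simp)
  simp [Finset.card_univ] at this
  omega

section Main

variable {G : SimpleGraph (Fin n)} {m : ℕ}

/-- a regular element is in no minimal prime -/
lemma not_mem_varPrime_of_reg (hn : 3 ≤ n) (hm : 2 ≤ m)
    {r : MvPolynomial (Fin n) k}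
    (hreg : ∀ s, r * s ∈ symbolicPower k G m → s ∈ symbolicPower k G m)
    {i j : Fin n} (hij : G.Adj i j) : r ∉ varPrime k i j := by
  intro hmem
  obtain ⟨s, hsi, hsj⟩ := exists_third hn i j
  obtain ⟨m', hm'⟩ : ∃ m', m = m' + 1 := ⟨m - 1, by omega⟩
  set g : MvPolynomial (Fin n) k := X i ^ m * X j ^ m * X s ^ m' with hg
  rw [varPrime_eq_PP] at hmem
  have hgJ : r * g ∈ symbolicPower k G m := by
    rw [mem_symbolicPower_iff]
    intro i' j' h'
    by_cases hsame : (i = i' ∧ j = j') ∨ (i = j' ∧ j = i')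
    · have hPeq : varPrime k i' j' = varPrime k i j := by
        rcases hsame with ⟨rfl, rfl⟩ | ⟨rfl, rfl⟩
        · rfl
        · exact (varPrime_symm i j).symm
      rw [hPeq, varPrime_eq_PP]
      have h1 : X s ^ m' * r ∈ PP k (Te i j) ^ m := by
        rw [hm', pow_succ]
        exact Ideal.mul_mem_mul (Ideal.pow_mem_pow (X_mem_PP (mem_Te.mpr ⟨hsi, hsj⟩)) m') hmem
      have : r * g = (X i ^ m * X j ^ m) * (X s ^ m' * r) := by rw [hg]; ring
      rw [this]
      exact Ideal.mul_mem_left _ _ h1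
    · have hij' : i ≠ j := G.ne_of_adj hij
      rw [varPrime_eq_PP]
      have hy : (X i : MvPolynomial (Fin n) k) ∈ PP k (Te i' j') ∨ (X j : MvPolynomial (Fin n) k) ∈ PP k (Te i' j') := by
        by_cases h1 : i ≠ i' ∧ i ≠ j'
        · exact Or.inl (X_mem_PP (mem_Te.mpr ⟨h1.1, h1.2⟩))
        · push_neg at h1
          refine Or.inr (X_mem_PP (mem_Te.mpr ⟨?_, ?_⟩))
          · intro hji'
            by_cases h2 : i = i'
            · exact hij' (h2.trans hji'.symm)
            · exact hsame (Or.inr ⟨h1 h2, hji'⟩)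
          · intro hjj'
            by_cases h2 : i = i'
            · exact hsame (Or.inl ⟨h2, hjj'⟩)
            · exact hij' ((h1 h2).trans hjj'.symm)
      rcases hy with hy | hy
      · have : r * g = (X j ^ m * X s ^ m' * r) * X i ^ m := by rw [hg]; ring
        rw [this]
        exact Ideal.mul_mem_left _ _ (Ideal.pow_mem_pow hy m)
      · have : r * g = (X i ^ m * X s ^ m' * r) * X j ^ m := by rw [hg]; ring
        rw [this]
        exact Ideal.mul_mem_left _ _ (Ideal.pow_mem_pow hy m)
  have hgnot : g ∉ symbolicPower k G m := by
    intro hgJ'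
    have hPm : g ∈ PP k (Te i j) ^ m := by
      rw [← varPrime_eq_PP]
      exact mem_symbolicPower_iff.mp hgJ' i j hij
    have hE : g = monomial (Finsupp.single i m + Finsupp.single j m + Finsupp.single s m') 1 := by
      rw [hg, X_pow_eq_monomial, X_pow_eq_monomial, X_pow_eq_monomial,
        monomial_mul, monomial_mul, one_mul, one_mul]
    have hwt : wt (Te i j) (Finsupp.single i m + Finsupp.single j m + Finsupp.single s m') < m := by
      rw [wt_add, wt_add, wt_single, wt_single, wt_single]
      rw [if_neg (fun h => (mem_Te.mp h).1 rfl), if_neg (fun h => (mem_Te.mp h).2 rfl), if_pos (mem_Te.mpr ⟨hsi, hsj⟩)]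
      omega
    have := coeff_eq_zero_of_mem_pow hPm hwt
    rw [hE, MvPolynomial.coeff_monomial, if_pos rfl] at this
    exact one_ne_zero this
  exact hgnot (hreg g hgJ)


lemma main_contra (hn : 3 ≤ n) (hm : 2 ≤ m)
    (hG : ∀ w : Fin n, ∃ z : Fin n, G.Adj w z)
    {u v : Fin n} (hne : u ≠ v) (hnadj : ¬ G.Adj u v)
    (hcom : ∀ t, ¬ (G.Adj u t ∧ G.Adj t v))
    {r1 r2 : MvPolynomial (Fin n) k}
    (hr1m : r1 ∈ Ideal.span (Set.range (X : Fin n → MvPolynomial (Fin n) k)))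
    (hr2m : r2 ∈ Ideal.span (Set.range (X : Fin n → MvPolynomial (Fin n) k)))
    (hreg1 : ∀ s, r1 * s ∈ symbolicPower k G m → s ∈ symbolicPower k G m)
    (hreg2 : ∀ s, r2 * s ∈ symbolicPower k G m ⊔ Ideal.span {r1} →
      s ∈ symbolicPower k G m ⊔ Ideal.span {r1}) : False := by
  obtain ⟨m', hm'⟩ : ∃ m', m = m' + 1 := ⟨m - 1, by omega⟩
  set J := symbolicPower k G m with hJdef
  -- the two "local" radical ideals
  set J1 : Ideal (MvPolynomial (Fin n) k) :=
    ⨅ (w : Fin n) (_ : G.Adj u w), varPrime k u w with hJ1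
  set J2 : Ideal (MvPolynomial (Fin n) k) :=
    ⨅ (z : Fin n) (_ : G.Adj v z), varPrime k v z with hJ2
  have hJ1mem : ∀ {p}, p ∈ J1 → ∀ w, G.Adj u w → p ∈ PP k (Te u w) := by
    intro p hp w hw
    rw [← varPrime_eq_PP]
    exact Ideal.mem_iInf.mp (Ideal.mem_iInf.mp hp w) hw
  have hJ2mem : ∀ {p}, p ∈ J2 → ∀ z, G.Adj v z → p ∈ PP k (Te v z) := by
    intro p hp z hz
    rw [← varPrime_eq_PP]
    exact Ideal.mem_iInf.mp (Ideal.mem_iInf.mp hp z) hz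
  -- decomposition of the maximal ideal
  have hsub : Ideal.span (Set.range (X : Fin n → MvPolynomial (Fin n) k)) ≤ J1 ⊔ J2 := by
    rw [Ideal.span_le]
    rintro - ⟨t, rfl⟩
    by_cases hut : t = u ∨ G.Adj u t
    · refine SetLike.mem_coe.mpr (Ideal.mem_sup_right ?_)
      refine Ideal.mem_iInf.mpr fun z => Ideal.mem_iInf.mpr fun hz => ?_
      rw [varPrime_eq_PP]
      refine X_mem_PP (mem_Te.mpr ⟨?_, ?_⟩)
      · rcases hut with rfl | hadj
        · exact hne
        · intro htv; exact hnadj (htv ▸ hadj)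
      · intro htz
        subst htz
        rcases hut with rfl | hadj
        · exact hnadj hz.symm
        · exact hcom t ⟨hadj, hz.symm⟩
    · push_neg at hut
      refine SetLike.mem_coe.mpr (Ideal.mem_sup_left ?_)
      refine Ideal.mem_iInf.mpr fun w => Ideal.mem_iInf.mpr fun hw => ?_
      rw [varPrime_eq_PP]
      refine X_mem_PP (mem_Te.mpr ⟨hut.1, ?_⟩)
      intro htw
      exact hut.2 (htw ▸ hw)
  obtain ⟨a1, ha1, b1, hb1, hsum1⟩ := Submodule.mem_sup.mp (hsub hr1m)
  obtain ⟨a2, ha2, b2, hb2, hsum2⟩ := Submodule.mem_sup.mp (hsub hr2m)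
  -- the distinguished monomial
  set f : MvPolynomial (Fin n) k := X u ^ m' * X v ^ m' with hf
  -- membership of f in powers of edge primes
  have hfU : ∀ j', G.Adj u j' → f ∈ PP k (Te u j') ^ m' := by
    intro j' hj'
    have hvT : v ∈ Te u j' := mem_Te.mpr ⟨hne.symm, fun hvj => hnadj (hvj ▸ hj')⟩
    exact Ideal.mul_mem_left _ _ (Ideal.pow_mem_pow (X_mem_PP hvT) m')
  have hfV : ∀ j', G.Adj v j' → f ∈ PP k (Te v j') ^ m' := by
    intro j' hj'
    have huT : u ∈ Te v j' := mem_Te.mpr ⟨hne, fun huj => hnadj (by rw [huj]; exact hj'.symm)⟩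
    have : f = X v ^ m' * X u ^ m' := by rw [hf]; ring
    rw [this]
    exact Ideal.mul_mem_left _ _ (Ideal.pow_mem_pow (X_mem_PP huT) m')
  have hfO : ∀ i j : Fin n, u ≠ i → u ≠ j → v ≠ i → v ≠ j → f ∈ PP k (Te i j) ^ m := by
    intro i j h1 h2 h3 h4
    have hXu : (X u : MvPolynomial (Fin n) k) ∈ PP k (Te i j) := X_mem_PP (mem_Te.mpr ⟨h1, h2⟩)
    have hXv : (X v : MvPolynomial (Fin n) k) ∈ PP k (Te i j) := X_mem_PP (mem_Te.mpr ⟨h3, h4⟩)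
    have h5 : (X u * X v : MvPolynomial (Fin n) k) ∈ PP k (Te i j) ^ 2 := by
      rw [sq]
      exact Ideal.mul_mem_mul hXu hXv
    have h6 : f = (X u * X v) ^ m' := by rw [hf, mul_pow]
    rw [h6]
    have h7 : ((X u * X v : MvPolynomial (Fin n) k)) ^ m' ∈ (PP k (Te i j) ^ 2) ^ m' :=
      Ideal.pow_mem_pow h5 m'
    rw [← pow_mul] at h7
    exact Ideal.pow_le_pow_right (by omega) h7
  -- membership of a·f in m-th powers at edges through u
  have haP : ∀ {a}, a ∈ J1 → ∀ j', G.Adj u j' → a * f ∈ PP k (Te u j') ^ m := by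
    intro a ha j' hj'
    rw [hm', pow_succ']
    exact Ideal.mul_mem_mul (hJ1mem ha j' hj') (hfU j' hj')
  have hbP : ∀ {b}, b ∈ J2 → ∀ j', G.Adj v j' → b * f ∈ PP k (Te v j') ^ m := by
    intro b hb j' hj'
    rw [hm', pow_succ']
    exact Ideal.mul_mem_mul (hJ2mem hb j' hj') (hfV j' hj')
  -- the fundamental relation lands in J
  have hJle : ∀ {p}, p ∈ J → ∀ i j, G.Adj i j → p ∈ PP k (Te i j) ^ m := by
    intro p hp i j hij
    rw [← varPrime_eq_PP]
    exact mem_symbolicPower_iff.mp hp i j hij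
  have hh1 : r2 * (a1 * f) - r1 * (a2 * f) ∈ J := by
    rw [hJdef, mem_symbolicPower_iff]
    intro i j hij
    rw [varPrime_eq_PP]
    by_cases hu : i = u ∨ j = u
    · have key : ∀ {a}, a ∈ J1 → a * f ∈ PP k (Te i j) ^ m := by
        intro a ha
        rcases hu with rfl | rfl
        · exact haP ha j hij
        · rw [Te_symm]
          exact haP ha i hij.symm
      exact sub_mem (Ideal.mul_mem_left _ _ (key ha1)) (Ideal.mul_mem_left _ _ (key ha2))
    · by_cases hv : i = v ∨ j = v
      · have key : ∀ {b}, b ∈ J2 → b * f ∈ PP k (Te i j) ^ m := by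
          intro b hb
          rcases hv with rfl | rfl
          · exact hbP hb j hij
          · rw [Te_symm]
            exact hbP hb i hij.symm
        have heq : r2 * (a1 * f) - r1 * (a2 * f) = r1 * (b2 * f) - r2 * (b1 * f) := by
          linear_combination (f * r2) * hsum1 - (f * r1) * hsum2
        rw [heq]
        exact sub_mem (Ideal.mul_mem_left _ _ (key hb2)) (Ideal.mul_mem_left _ _ (key hb1))
      · push_neg at hu hv
        have hfm : f ∈ PP k (Te i j) ^ m :=
          hfO i j (fun h => hu.1 h.symm) (fun h => hu.2 h.symm)
            (fun h => hv.1 h.symm) (fun h => hv.2 h.symm)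
        exact sub_mem (Ideal.mul_mem_left _ _ (Ideal.mul_mem_left _ _ hfm))
          (Ideal.mul_mem_left _ _ (Ideal.mul_mem_left _ _ hfm))
  -- apply regularity of r2
  have hkey : r2 * (a1 * f) ∈ J ⊔ Ideal.span {r1} := by
    have : r2 * (a1 * f) = (r2 * (a1 * f) - r1 * (a2 * f)) + r1 * (a2 * f) := by ring
    rw [this]
    refine Submodule.add_mem _ (Ideal.mem_sup_left hh1) (Ideal.mem_sup_right ?_)
    exact Ideal.mem_span_singleton'.mpr ⟨a2 * f, by ring⟩
  have haf : a1 * f ∈ J ⊔ Ideal.span {r1} := hreg2 _ hkey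
  obtain ⟨j0, hj0, z, hz, hsumf⟩ := Submodule.mem_sup.mp haf
  obtain ⟨c, hc⟩ := Ideal.mem_span_singleton'.mp hz
  -- pick edges at u and at v
  obtain ⟨w0, hw0⟩ := hG u
  obtain ⟨z0, hz0⟩ := hG v
  -- regularity of r1 : not in the minimal primes
  have hr1P0 : r1 ∉ PP k (Te u w0) := by
    rw [← varPrime_eq_PP]
    exact not_mem_varPrime_of_reg hn hm hreg1 hw0
  have hr1P1 : r1 ∉ PP k (Te v z0) := by
    rw [← varPrime_eq_PP]
    exact not_mem_varPrime_of_reg hn hm hreg1 hz0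
  rw [← hc] at hsumf
  -- step (i) : c ∈ P0^m
  have hcr1 : c * r1 ∈ PP k (Te u w0) ^ m := by
    have : c * r1 = a1 * f - j0 := by linear_combination hsumf
    rw [this]
    exact sub_mem (haP ha1 w0 hw0) (hJle hj0 u w0 hw0)
  have hcP : c ∈ PP k (Te u w0) ^ m := mem_pow_of_mul_mem hcr1 hr1P0
  -- step (ii) : f - c ∈ P1^m
  have hfcr1 : (f - c) * r1 ∈ PP k (Te v z0) ^ m := by
    have : (f - c) * r1 = j0 + b1 * f := by
      linear_combination -hsumf - f * hsum1
    rw [this]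
    exact Submodule.add_mem _ (hJle hj0 v z0 hz0) (hbP hb1 z0 hz0)
  have hfcP : f - c ∈ PP k (Te v z0) ^ m := mem_pow_of_mul_mem hfcr1 hr1P1
  -- the distinguished exponent
  set D : Fin n →₀ ℕ := Finsupp.single u m' + Finsupp.single v m' with hD
  have hwt0 : wt (Te u w0) D < m := by
    rw [hD, wt_add, wt_single, wt_single]
    rw [if_neg (fun h => (mem_Te.mp h).1 rfl)]
    have hv0 : v ∈ Te u w0 := mem_Te.mpr ⟨hne.symm, fun hvw => hnadj (hvw ▸ hw0)⟩
    rw [if_pos hv0]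
    omega
  have hwt1 : wt (Te v z0) D < m := by
    rw [hD, wt_add, wt_single, wt_single]
    rw [if_neg (fun h => (mem_Te.mp h).1 rfl)]
    have hu0 : u ∈ Te v z0 := mem_Te.mpr ⟨hne, fun huz => hnadj (by rw [huz]; exact hz0.symm)⟩
    rw [if_pos hu0]
    omega
  have hc0 : coeff D c = 0 := coeff_eq_zero_of_mem_pow hcP hwt0
  have hfc0 : coeff D (f - c) = 0 := coeff_eq_zero_of_mem_pow hfcP hwt1
  have hcoefff : coeff D f = 0 := by
    have : f = c + (f - c) := by ring
    rw [this, MvPolynomial.coeff_add, hc0, hfc0, add_zero]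
  have hfmono : f = monomial D 1 := by
    rw [hf, X_pow_eq_monomial, X_pow_eq_monomial, monomial_mul, one_mul]
  rw [hfmono, MvPolynomial.coeff_monomial, if_pos rfl] at hcoefff
  exact one_ne_zero hcoefff


/-- membership in the pointwise scaled top submodule of the quotient -/
lemma mem_smul_top_iff {J : Ideal (MvPolynomial (Fin n) k)} (r1 w : MvPolynomial (Fin n) k) :
    Ideal.Quotient.mk J w ∈
      (r1 • (⊤ : Submodule (MvPolynomial (Fin n) k) (MvPolynomial (Fin n) k ⧸ J))) ↔
      w ∈ J ⊔ Ideal.span {r1} := by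
  constructor
  · intro hw
    have hset : (Ideal.Quotient.mk J w : MvPolynomial (Fin n) k ⧸ J)
        ∈ r1 • ((⊤ : Submodule (MvPolynomial (Fin n) k) (MvPolynomial (Fin n) k ⧸ J)) : Set _) := by
      rw [← Submodule.coe_pointwise_smul]
      exact hw
    obtain ⟨y, -, hy⟩ := Set.mem_smul_set.mp hset
    have hsd : r1 • y = Ideal.Quotient.mk J r1 * y := rfl
    obtain ⟨t, rfl⟩ := Ideal.Quotient.mk_surjective y
    have h1 : Ideal.Quotient.mk J (r1 * t) = Ideal.Quotient.mk J w := by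
      rw [← hy, hsd, map_mul]
    have h2 : r1 * t - w ∈ J := (Ideal.Quotient.mk_eq_mk_iff_sub_mem _ _).mp h1
    refine Submodule.mem_sup.mpr ⟨w - r1 * t, ?_, r1 * t, ?_, by ring⟩
    · simpa using J.neg_mem h2
    · exact Ideal.mem_span_singleton'.mpr ⟨t, by ring⟩
  · intro hw
    obtain ⟨j, hj, z, hz, hsum⟩ := Submodule.mem_sup.mp hw
    obtain ⟨c, rfl⟩ := Ideal.mem_span_singleton'.mp hz
    have h1 : Ideal.Quotient.mk J w = r1 • Ideal.Quotient.mk J c := by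
      have hsd : r1 • Ideal.Quotient.mk J c = Ideal.Quotient.mk J r1 * Ideal.Quotient.mk J c := rfl
      rw [hsd, ← map_mul, Ideal.Quotient.mk_eq_mk_iff_sub_mem]
      have : w - r1 * c = j := by linear_combination -hsum
      rw [this]
      exact hj
    rw [h1]
    exact Submodule.smul_mem_pointwise_smul _ _ _ Submodule.mem_top

lemma reg1_translate {J : Ideal (MvPolynomial (Fin n) k)} {r : MvPolynomial (Fin n) k}
    (h : IsSMulRegular (MvPolynomial (Fin n) k ⧸ J) r) :
    ∀ s, r * s ∈ J → s ∈ J := by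
  intro s hs
  have hsd : r • (Ideal.Quotient.mk J s) = Ideal.Quotient.mk J r * Ideal.Quotient.mk J s := rfl
  have h1 : r • (Ideal.Quotient.mk J s) = r • (0 : MvPolynomial (Fin n) k ⧸ J) := by
    rw [smul_zero, hsd, ← map_mul]
    exact Ideal.Quotient.eq_zero_iff_mem.mpr hs
  have h2 := h h1
  exact Ideal.Quotient.eq_zero_iff_mem.mp h2

lemma reg2_translate {J : Ideal (MvPolynomial (Fin n) k)} {r1 r2 : MvPolynomial (Fin n) k}
    (h : IsSMulRegular (QuotSMulTop r1 (MvPolynomial (Fin n) k ⧸ J)) r2) :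
    ∀ s, r2 * s ∈ J ⊔ Ideal.span {r1} → s ∈ J ⊔ Ideal.span {r1} := by
  intro s hs
  rw [← mem_smul_top_iff r1 s]
  rw [← Submodule.Quotient.mk_eq_zero]
  refine h ?_
  show r2 • Submodule.Quotient.mk (Ideal.Quotient.mk J s)
      = r2 • (0 : QuotSMulTop r1 (MvPolynomial (Fin n) k ⧸ J))
  rw [smul_zero, ← Submodule.Quotient.mk_smul, Submodule.Quotient.mk_eq_zero]
  have h3 : r2 • (Ideal.Quotient.mk J s) = Ideal.Quotient.mk J (r2 * s) := by
    have hsd : r2 • (Ideal.Quotient.mk J s) = Ideal.Quotient.mk J r2 * Ideal.Quotient.mk J s := rfl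
    rw [hsd, map_mul]
  rw [h3, mem_smul_top_iff]
  exact hs

/-- Krull dimension of the quotient is at least 2. -/
lemma two_le_dim {G : SimpleGraph (Fin n)} {m : ℕ} (hm : m ≠ 0)
    {u w : Fin n} (huw : G.Adj u w) :
    ((2:ℕ) : WithBot (WithTop ℕ)) ≤
      ringKrullDim (MvPolynomial (Fin n) k ⧸ symbolicPower k G m) := by
  set J := symbolicPower k G m with hJ
  have huw' : u ≠ w := G.ne_of_adj huw
  set p0 : Ideal (MvPolynomial (Fin n) k) := PP k (Te u w) with hp0
  set p1 : Ideal (MvPolynomial (Fin n) k) := PP k {t | t ≠ u} with hp1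
  set p2 : Ideal (MvPolynomial (Fin n) k) := PP k Set.univ with hp2
  have hJp0 : J ≤ p0 := by
    have h1 : J ≤ (varPrime k u w) ^ m := by
      rw [hJ, symbolicPower]
      exact (iInf_le _ u).trans ((iInf_le _ w).trans (iInf_le _ huw))
    exact h1.trans ((Ideal.pow_le_self hm).trans (le_of_eq (varPrime_eq_PP u w)))
  have hle01 : p0 ≤ p1 := Ideal.span_mono (Set.image_mono (fun t ht => (mem_Te.mp ht).1))
  have hle12 : p1 ≤ p2 := Ideal.span_mono (Set.image_mono (fun t _ => Set.mem_univ t))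
  have hne01 : p0 ≠ p1 := by
    intro he
    have h1 : (X w : MvPolynomial (Fin n) k) ∈ p1 := X_mem_PP huw'.symm
    rw [← he] at h1
    exact X_not_mem_PP (by simp [Te]) h1
  have hne12 : p1 ≠ p2 := by
    intro he
    have h1 : (X u : MvPolynomial (Fin n) k) ∈ p2 := X_mem_PP (Set.mem_univ u)
    rw [← he] at h1
    exact X_not_mem_PP (by simp) h1
  -- map to the quotient
  set mk := Ideal.Quotient.mk J with hmk
  have hker : RingHom.ker mk = J := Ideal.mk_ker
  have hcomap : ∀ p : Ideal (MvPolynomial (Fin n) k), J ≤ p →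
      Ideal.comap mk (Ideal.map mk p) = p := by
    intro p hp
    rw [Ideal.comap_map_of_surjective mk Ideal.Quotient.mk_surjective p]
    rw [← RingHom.ker_eq_comap_bot, hker]
    exact sup_eq_left.mpr hp
  have hq0 : (Ideal.map mk p0).IsPrime := by
    haveI : p0.IsPrime := PP_prime _
    exact Ideal.map_isPrime_of_surjective Ideal.Quotient.mk_surjective (hker.le.trans hJp0)
  have hq1 : (Ideal.map mk p1).IsPrime := by
    haveI : p1.IsPrime := PP_prime _
    exact Ideal.map_isPrime_of_surjective Ideal.Quotient.mk_surjective
      (hker.le.trans (hJp0.trans hle01))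
  have hq2 : (Ideal.map mk p2).IsPrime := by
    haveI : p2.IsPrime := PP_prime _
    exact Ideal.map_isPrime_of_surjective Ideal.Quotient.mk_surjective
      (hker.le.trans (hJp0.trans (hle01.trans hle12)))
  set q0 : PrimeSpectrum (MvPolynomial (Fin n) k ⧸ J) := ⟨Ideal.map mk p0, hq0⟩
  set q1 : PrimeSpectrum (MvPolynomial (Fin n) k ⧸ J) := ⟨Ideal.map mk p1, hq1⟩
  set q2 : PrimeSpectrum (MvPolynomial (Fin n) k ⧸ J) := ⟨Ideal.map mk p2, hq2⟩
  have hlt01 : q0 < q1 := by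
    refine (PrimeSpectrum.asIdeal_lt_asIdeal q0 q1).mp ?_
    refine lt_of_le_of_ne (Ideal.map_mono hle01) (fun he => hne01 ?_)
    rw [← hcomap p0 hJp0, ← hcomap p1 (hJp0.trans hle01)]
    exact congrArg (Ideal.comap mk) he
  have hlt12 : q1 < q2 := by
    refine (PrimeSpectrum.asIdeal_lt_asIdeal q1 q2).mp ?_
    refine lt_of_le_of_ne (Ideal.map_mono hle12) (fun he => hne12 ?_)
    rw [← hcomap p1 (hJp0.trans hle01), ← hcomap p2 (hJp0.trans (hle01.trans hle12))]
    exact congrArg (Ideal.comap mk) he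
  set series : LTSeries (PrimeSpectrum (MvPolynomial (Fin n) k ⧸ J)) :=
    ((RelSeries.singleton _ q2).cons q1 hlt12).cons q0 (by exact hlt01) with hseries
  have hlen : series.length = 2 := rfl
  have := Order.LTSeries.length_le_krullDim series
  rw [hlen] at this
  exact this

end Main
end CMAux

/-- If `m ≥ 2` and the symbolic power `I_G^{(m)}` is Cohen-Macaulay, then `G` is
connected and `diam(G) ≤ 2`. -/
theorem stmt_0 (k : Type) [Field k] (n : ℕ) (hn : 3 ≤ n)
    (G : SimpleGraph (Fin n)) (hG : ∀ v : Fin n, ∃ u : Fin n, G.Adj v u)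
    (m : ℕ) (hm : 2 ≤ m)
    (hCM : IsCohenMacaulayIdeal k (symbolicPower k G m)) :
    G.Connected ∧ G.ediam ≤ 2 := by
  classical
  suffices hd : G.ediam ≤ 2 by
    refine ⟨?_, hd⟩
    rw [SimpleGraph.connected_iff]
    refine ⟨fun a b => SimpleGraph.reachable_of_edist_ne_top ?_, ⟨⟨0, by omega⟩⟩⟩
    have h1 : G.edist a b ≤ 2 := le_trans SimpleGraph.edist_le_ediam hd
    exact ne_top_of_le_ne_top (by simp) h1
  by_contra hd
  have h3 : ∃ u v : Fin n, ¬ G.edist u v ≤ 2 := by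
    by_contra hall
    push_neg at hall
    exact hd (SimpleGraph.ediam_le_of_edist_le fun u v => hall u v)
  obtain ⟨u, v, huv⟩ := h3
  have hne : u ≠ v := by
    rintro rfl
    exact huv (by simp [SimpleGraph.edist_self])
  have hnadj : ¬ G.Adj u v := by
    intro h
    have h1 := SimpleGraph.edist_le (SimpleGraph.Walk.cons h SimpleGraph.Walk.nil)
    simp only [SimpleGraph.Walk.length_cons, SimpleGraph.Walk.length_nil] at h1
    exact huv (h1.trans (by norm_num))
  have hcom : ∀ t, ¬ (G.Adj u t ∧ G.Adj t v) := by
    rintro t ⟨h1, h2⟩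
    have h3 := SimpleGraph.edist_le
      (SimpleGraph.Walk.cons h1 (SimpleGraph.Walk.cons h2 SimpleGraph.Walk.nil))
    simp only [SimpleGraph.Walk.length_cons, SimpleGraph.Walk.length_nil] at h3
    exact huv (h3.trans (by norm_num))
  obtain ⟨rs, hmem, hreg, hlen⟩ := hCM
  obtain ⟨w0, hw0⟩ := hG u
  have hdim := CMAux.two_le_dim (k := k) (by omega : m ≠ 0) hw0
  rw [← hlen] at hdim
  have h2len : 2 ≤ rs.length := by exact_mod_cast hdim
  match rs, hmem, hreg, h2len with
  | r1 :: r2 :: tl, hmem, hreg, _ =>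
    have hwk := hreg.toIsWeaklyRegular
    rw [RingTheory.Sequence.isWeaklyRegular_cons_iff] at hwk
    obtain ⟨hwk1, hwk2⟩ := hwk
    rw [RingTheory.Sequence.isWeaklyRegular_cons_iff] at hwk2
    obtain ⟨hwk2, -⟩ := hwk2
    exact CMAux.main_contra hn hm hG hne hnadj hcom
      (hmem r1 (by simp)) (hmem r2 (by simp))
      (CMAux.reg1_translate hwk1) (CMAux.reg2_translate hwk2)
end

section
/- Let n ≥ 4 and m ≥ 3. Then I_G^{(m)} = I_G^m if and only if n = 4 and G is a path, or a cycle, or the union of two disjoint edges. -/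
open MvPolynomial

/-- `G` is a path: its edges form a Hamiltonian path on the `n` vertices. -/
def IsPathGraph {n : ℕ} (G : SimpleGraph (Fin n)) : Prop :=
  ∃ f : Fin n ≃ Fin n, ∀ i j : Fin n,
    G.Adj (f i) (f j) ↔ (i.val + 1 = j.val ∨ j.val + 1 = i.val)

/-- `G` is a cycle: its edges form a Hamiltonian cycle on the `n` vertices. -/
def IsCycleGraph {n : ℕ} (G : SimpleGraph (Fin n)) : Prop :=
  ∃ f : Fin n ≃ Fin n, ∀ i j : Fin n,
    G.Adj (f i) (f j) ↔ ((i.val + 1) % n = j.val ∨ (j.val + 1) % n = i.val)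

/-- `G` is the union of two disjoint edges: `n = 4` and `G` consists of exactly two
edges with no common vertex. -/
def IsTwoDisjointEdges {n : ℕ} (G : SimpleGraph (Fin n)) : Prop :=
  n = 4 ∧ ∃ a b c d : Fin n, a ≠ b ∧ a ≠ c ∧ a ≠ d ∧ b ≠ c ∧ b ≠ d ∧ c ≠ d ∧
    ∀ u v : Fin n, G.Adj u v ↔
      ((u = a ∧ v = b) ∨ (u = b ∧ v = a) ∨ (u = c ∧ v = d) ∨ (u = d ∧ v = c))

namespace Stmt6
variable {k : Type} [Field k] {n : ℕ}

/-- weighted degree -/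
def wdeg (ω : Fin n → ℕ) (d : Fin n →₀ ℕ) : ℕ := ∑ t, ω t * d t

lemma wdeg_add (ω : Fin n → ℕ) (d e : Fin n →₀ ℕ) : wdeg ω (d + e) = wdeg ω d + wdeg ω e := by
  simp [wdeg, mul_add, Finset.sum_add_distrib]

noncomputable def QI (k : Type) [Field k] {n : ℕ} (ω : Fin n → ℕ) (W : ℕ) :
    Ideal (MvPolynomial (Fin n) k) :=
  Ideal.span ((fun d => (monomial d (1:k) : MvPolynomial (Fin n) k)) '' {d | W ≤ wdeg ω d})

lemma memQI_iff {ω : Fin n → ℕ} {W : ℕ} {p : MvPolynomial (Fin n) k} :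
    p ∈ QI k ω W ↔ ∀ d ∈ p.support, W ≤ wdeg ω d := by
  constructor
  · intro hp d hd
    obtain ⟨si, hsi, hle⟩ := mem_ideal_span_monomial_image.mp hp d hd
    refine le_trans hsi ?_
    exact Finset.sum_le_sum fun t _ => Nat.mul_le_mul_left _ (hle t)
  · intro h
    rw [← support_sum_monomial_coeff p]
    refine Ideal.sum_mem _ fun d hd => ?_
    have h1 : (monomial d (coeff d p) : MvPolynomial (Fin n) k)
        = C (coeff d p) * monomial d 1 := by
      rw [C_mul_monomial, mul_one]
    rw [h1]
    exact Ideal.mul_mem_left _ _ (Ideal.subset_span ⟨d, h d hd, rfl⟩)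

lemma mul_mem_QI {ω : Fin n → ℕ} {A B : ℕ} {p q : MvPolynomial (Fin n) k}
    (hp : p ∈ QI k ω A) (hq : q ∈ QI k ω B) : p * q ∈ QI k ω (A + B) := by
  rw [memQI_iff] at *
  intro d hd
  obtain ⟨d1, hd1, d2, hd2, rfl⟩ := Finset.mem_add.mp (MvPolynomial.support_mul p q hd)
  rw [wdeg_add]
  exact Nat.add_le_add (hp d1 hd1) (hq d2 hd2)

lemma pow_le_QI {ω : Fin n → ℕ} {W : ℕ} {I : Ideal (MvPolynomial (Fin n) k)}
    (h : I ≤ QI k ω W) (m : ℕ) : I ^ m ≤ QI k ω (m * W) := by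
  induction m with
  | zero => intro p _; rw [memQI_iff]; intro d _; simp
  | succ m ih =>
      rw [pow_succ]
      refine Ideal.mul_le.mpr fun r hr s hs => ?_
      have := mul_mem_QI (ih hr) (h hs)
      rwa [Nat.succ_mul]

lemma monomial_mem_pow_span (s : Finset (Fin n)) (m : ℕ) (d : Fin n →₀ ℕ)
    (h : m ≤ ∑ t ∈ s, d t) :
    (monomial d (1:k)) ∈ (Ideal.span ((fun t => (X t : MvPolynomial (Fin n) k)) '' ↑s)) ^ m := by
  induction m generalizing d with
  | zero => simp
  | succ m ih =>
      have hex : ∃ t ∈ s, 0 < d t := by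
        by_contra hc
        push_neg at hc
        have : ∑ t ∈ s, d t = 0 := Finset.sum_eq_zero fun t ht => by
          have := hc t ht; omega
        omega
      obtain ⟨t, hts, htpos⟩ := hex
      set d' := d - Finsupp.single t 1 with hd'
      have hdd : d' + Finsupp.single t 1 = d := by
        ext a
        simp only [Finsupp.add_apply, hd', Finsupp.tsub_apply, Finsupp.single_apply]
        by_cases hat : t = a
        · subst hat; simp; omega
        · simp [hat]
      have hsum : m ≤ ∑ t' ∈ s, d' t' := by
        have h2 : ∑ t' ∈ s, d t' = ∑ t' ∈ s, d' t' + ∑ t' ∈ s, (Finsupp.single t 1) t' := by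
          rw [← Finset.sum_add_distrib]
          refine Finset.sum_congr rfl fun x _ => ?_
          rw [← hdd]; simp
        have h3 : ∑ t' ∈ s, (Finsupp.single t 1 : Fin n →₀ ℕ) t' = 1 := by
          rw [Finset.sum_eq_single t]
          · simp
          · intro b _ hb; simp [Finsupp.single_apply, Ne.symm hb]
          · intro hb; exact absurd hts hb
        omega
      have hmono : (monomial d (1:k)) = monomial d' 1 * X t := by
        rw [X, monomial_mul, mul_one, hdd]
      rw [hmono, pow_succ]
      exact Ideal.mul_mem_mul (ih d' hsum) (Ideal.subset_span ⟨t, hts, rfl⟩)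


/-- number of variables outside {i,j} counted with multiplicity -/
def sig (i j : Fin n) (d : Fin n →₀ ℕ) : ℕ :=
  ∑ t ∈ Finset.univ.filter (fun t => t ≠ i ∧ t ≠ j), d t

lemma sig_add_eq (i j : Fin n) (hij : i ≠ j) (d : Fin n →₀ ℕ) :
    sig i j d + d i + d j = ∑ t, d t := by
  have h1 : Finset.univ.filter (fun t => ¬(t ≠ i ∧ t ≠ j)) = ({i, j} : Finset (Fin n)) := by
    ext t; simp; tauto
  have h2 := Finset.sum_filter_add_sum_filter_not Finset.univ (fun t => t ≠ i ∧ t ≠ j) (fun t => d t)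
  rw [h1, Finset.sum_pair hij] at h2
  unfold sig
  omega

lemma total_single (u : Fin n) (c : ℕ) : ∑ t, (Finsupp.single u c : Fin n →₀ ℕ) t = c := by
  rw [Finset.sum_eq_single u]
  · simp
  · intro b _ hb; simp [Finsupp.single_apply, Ne.symm hb]
  · simp

lemma varPrime_eq (i j : Fin n) :
    varPrime k i j = Ideal.span ((fun t => (X t : MvPolynomial (Fin n) k)) ''
      ↑(Finset.univ.filter (fun t => t ≠ i ∧ t ≠ j))) := by
  unfold varPrime
  congr 1
  ext t; simp

lemma monomial_mem_varPrime_pow {i j : Fin n} {m : ℕ} {d : Fin n →₀ ℕ}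
    (h : m ≤ sig i j d) (c : k) : monomial d c ∈ (varPrime k i j) ^ m := by
  have h1 : (monomial d c : MvPolynomial (Fin n) k) = C c * monomial d 1 := by
    rw [C_mul_monomial, mul_one]
  rw [h1, varPrime_eq]
  exact Ideal.mul_mem_left _ _ (monomial_mem_pow_span _ m d h)

lemma wdeg_single (ω : Fin n → ℕ) (t : Fin n) (c : ℕ) :
    wdeg ω (Finsupp.single t c) = ω t * c := by
  unfold wdeg
  rw [Finset.sum_eq_single t]
  · simp
  · intro b _ hb; simp [Finsupp.single_apply, Ne.symm hb]
  · simp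

lemma supp_of_mem_varPrime_pow {i j : Fin n} {m : ℕ} {p : MvPolynomial (Fin n) k}
    (hp : p ∈ (varPrime k i j) ^ m) : ∀ d ∈ p.support, m ≤ sig i j d := by
  intro d hd
  set ω : Fin n → ℕ := fun t => if t ≠ i ∧ t ≠ j then 1 else 0 with hω
  have h1 : varPrime k i j ≤ QI k ω 1 := by
    rw [varPrime]
    refine Ideal.span_le.mpr ?_
    rintro x ⟨t, ht, rfl⟩
    rw [SetLike.mem_coe, memQI_iff]
    intro e he
    have hsupp : e = Finsupp.single t 1 := by
      rw [MvPolynomial.support_X] at he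
      simpa using he
    subst hsupp
    rw [wdeg_single]
    simp only [Set.mem_setOf_eq] at ht
    simp [hω, ht.1, ht.2]
  have h2 := pow_le_QI h1 m hp
  rw [memQI_iff] at h2
  have h3 := h2 d hd
  have h4 : wdeg ω d = sig i j d := by
    unfold wdeg sig
    rw [Finset.sum_filter]
    refine Finset.sum_congr rfl fun t _ => ?_
    by_cases h : t ≠ i ∧ t ≠ j <;> simp [hω, h]
  omega

lemma mem_symbolicPower_iff {G : SimpleGraph (Fin n)} {m : ℕ} {p : MvPolynomial (Fin n) k} :
    p ∈ symbolicPower k G m ↔ ∀ i j, G.Adj i j → p ∈ (varPrime k i j) ^ m := by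
  simp [symbolicPower, Ideal.mem_iInf]

lemma pow_le_symbolic (G : SimpleGraph (Fin n)) (m : ℕ) :
    (symbolicPower k G 1) ^ m ≤ symbolicPower k G m := by
  intro p hp
  rw [mem_symbolicPower_iff]
  intro i j hij
  have h1 : symbolicPower k G 1 ≤ varPrime k i j := by
    intro q hq
    have := mem_symbolicPower_iff.mp hq i j hij
    rwa [pow_one] at this
  exact Ideal.pow_right_mono h1 m hp


lemma witness_ne {G : SimpleGraph (Fin n)} {m : ℕ} (w : Fin n →₀ ℕ) (ω : Fin n → ℕ) (W : ℕ)
    (hsym : ∀ i j, G.Adj i j → m ≤ sig i j w)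
    (hI : symbolicPower k G 1 ≤ QI k ω W)
    (hlt : wdeg ω w < m * W) :
    symbolicPower k G m ≠ (symbolicPower k G 1) ^ m := by
  classical
  intro heq
  have h1 : (monomial w (1:k) : MvPolynomial (Fin n) k) ∈ symbolicPower k G m :=
    mem_symbolicPower_iff.mpr fun i j hij => monomial_mem_varPrime_pow (hsym i j hij) 1
  rw [heq] at h1
  have h2 := pow_le_QI hI m h1
  rw [memQI_iff] at h2
  have h3 := h2 w (by rw [MvPolynomial.support_monomial]; simp [one_ne_zero])
  omega

lemma I_le_QI {G : SimpleGraph (Fin n)} (ω : Fin n → ℕ) (W : ℕ)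
    (h : ∀ d : Fin n →₀ ℕ, (∀ i j, G.Adj i j → 1 ≤ sig i j d) → W ≤ wdeg ω d) :
    symbolicPower k G 1 ≤ QI k ω W := by
  intro p hp
  rw [memQI_iff]
  intro d hd
  exact h d fun i j hij => by
    have h1 := mem_symbolicPower_iff.mp hp i j hij
    rw [pow_one] at h1
    have h2 : p ∈ (varPrime k i j) ^ 1 := by rwa [pow_one]
    exact supp_of_mem_varPrime_pow h2 d hd

lemma wdeg_one (d : Fin n →₀ ℕ) : wdeg (fun _ => 1) d = ∑ t, d t := by
  simp [wdeg]

lemma caseA (G : SimpleGraph (Fin n)) (hn5 : 5 ≤ n)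
    (hG : ∀ v : Fin n, ∃ u : Fin n, G.Adj v u)
    (m : ℕ) (hm : 3 ≤ m) (u v : Fin n) (huv : u ≠ v) (hnadj : ¬ G.Adj u v) :
    symbolicPower k G m ≠ (symbolicPower k G 1) ^ m := by
  classical
  -- pick three further points
  obtain ⟨S, hS, hScard⟩ := Finset.exists_subset_card_eq
    (show 3 ≤ (Finset.univ \ {u, v} : Finset (Fin n)).card by
      rw [Finset.card_sdiff_of_subset (by simp)]
      have : ({u, v} : Finset (Fin n)).card ≤ 2 := Finset.card_insert_le _ _ |>.trans (by simp)
      have h4 : (Finset.univ : Finset (Fin n)).card = n := by simp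
      omega)
  obtain ⟨p1, p2, p3, h12, h13, h23, rfl⟩ := Finset.card_eq_three.mp hScard
  have hp1 : p1 ≠ u ∧ p1 ≠ v := by
    have := hS (by simp : p1 ∈ ({p1, p2, p3} : Finset (Fin n)))
    simp [Finset.mem_sdiff] at this; tauto
  have hp2 : p2 ≠ u ∧ p2 ≠ v := by
    have := hS (by simp : p2 ∈ ({p1, p2, p3} : Finset (Fin n)))
    simp [Finset.mem_sdiff] at this; tauto
  have hp3 : p3 ≠ u ∧ p3 ≠ v := by
    have := hS (by simp : p3 ∈ ({p1, p2, p3} : Finset (Fin n)))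
    simp [Finset.mem_sdiff] at this; tauto
  set w : Fin n →₀ ℕ := Finsupp.single u (m-2) + Finsupp.single v (m-2) +
    Finsupp.single p1 1 + Finsupp.single p2 1 + Finsupp.single p3 1 with hw
  have htot : ∑ t, w t = 2*m - 1 := by
    have : ∑ t, w t = (m-2) + (m-2) + 1 + 1 + 1 := by
      simp only [hw, Finsupp.add_apply, Finset.sum_add_distrib, total_single]
    omega
  have hu_eval : w u = m - 2 := by
    simp [hw, Finsupp.single_apply, Ne.symm huv, hp1.1, hp2.1, hp3.1]
  have hv_eval : w v = m - 2 := by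
    simp [hw, Finsupp.single_apply, huv, hp1.2, hp2.2, hp3.2]
  have hple : ∀ x, x ≠ u → x ≠ v → w x ≤ 1 := by
    intro x hxu hxv
    simp only [hw, Finsupp.add_apply, Finsupp.single_apply]
    split_ifs <;> simp_all
  have hwub : ∀ x, w x ≤ m - 2 := by
    intro x
    by_cases hxu : x = u
    · subst hxu; omega
    by_cases hxv : x = v
    · subst hxv; omega
    have := hple x hxu hxv; omega
  refine witness_ne w (fun _ => 1) 2 ?_ ?_ ?_
  · intro i j hij
    have hne := G.ne_of_adj hij
    have hsum := sig_add_eq i j hne w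
    rw [htot] at hsum
    have hwij : w i + w j ≤ m - 1 := by
      by_cases hi : i = u ∨ i = v
      · have hj : j ≠ u ∧ j ≠ v := by
          constructor <;> rintro rfl <;> rcases hi with rfl | rfl
          · exact G.irrefl hij
          · exact hnadj (G.adj_symm hij)
          · exact hnadj hij
          · exact G.irrefl hij
        have h1 := hple j hj.1 hj.2
        have h2 : w i ≤ m - 2 := hwub i
        omega
      · push_neg at hi
        have h1 := hple i hi.1 hi.2
        have h2 : w j ≤ m - 2 := hwub j
        omega
    omega
  · refine I_le_QI _ _ fun d hd => ?_
    rw [wdeg_one]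
    by_contra hc
    push_neg at hc
    by_cases hex : ∃ t, 0 < d t
    · obtain ⟨t, ht⟩ := hex
      obtain ⟨u1, hu1⟩ := hG t
      have h1 := hd t u1 hu1
      have h2 := sig_add_eq t u1 (G.ne_of_adj hu1) d
      omega
    · push_neg at hex
      have h0 : ∑ t, d t = 0 := Finset.sum_eq_zero fun t _ => by have := hex t; omega
      obtain ⟨u1, hu1⟩ := hG u
      have h1 := hd u u1 hu1
      have h2 := sig_add_eq u u1 (G.ne_of_adj hu1) d
      omega
  · rw [wdeg_one, htot]; omega


lemma caseB (G : SimpleGraph (Fin n)) (hn : 4 ≤ n)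
    (hcomp : ∀ u v : Fin n, u ≠ v → G.Adj u v)
    (m : ℕ) (hm : 3 ≤ m) :
    symbolicPower k G m ≠ (symbolicPower k G 1) ^ m := by
  classical
  have h0 : (0:ℕ) < n := by omega
  have h1n : (1:ℕ) < n := by omega
  have h2n : (2:ℕ) < n := by omega
  have h3n : (3:ℕ) < n := by omega
  set a : Fin n := ⟨0, h0⟩ with hadef
  set b : Fin n := ⟨1, h1n⟩ with hbdef
  set c : Fin n := ⟨2, h2n⟩ with hcdef
  set e : Fin n := ⟨3, h3n⟩ with hedef
  have hab : a ≠ b := by simp [hadef, hbdef, Fin.ext_iff]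
  have hac : a ≠ c := by simp [hadef, hcdef, Fin.ext_iff]
  have hae : a ≠ e := by simp [hadef, hedef, Fin.ext_iff]
  have hbc : b ≠ c := by simp [hbdef, hcdef, Fin.ext_iff]
  have hbe : b ≠ e := by simp [hbdef, hedef, Fin.ext_iff]
  have hce : c ≠ e := by simp [hcdef, hedef, Fin.ext_iff]
  set hh := (m+1)/2 with hhdef
  set w : Fin n →₀ ℕ := Finsupp.single a hh + Finsupp.single b hh +
    Finsupp.single c hh + Finsupp.single e hh with hw
  have htot : ∑ t, w t = 4*hh := by
    have : ∑ t, w t = hh + hh + hh + hh := by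
      simp only [hw, Finsupp.add_apply, Finset.sum_add_distrib, total_single]
    omega
  have hwub : ∀ x, w x ≤ hh := by
    intro x
    simp only [hw, Finsupp.add_apply, Finsupp.single_apply]
    split_ifs <;> first | omega | simp_all
  refine witness_ne w (fun _ => 1) 3 ?_ ?_ ?_
  · intro i j hij
    have hne := G.ne_of_adj hij
    have hsum := sig_add_eq i j hne w
    have h1 := hwub i
    have h2 := hwub j
    omega
  · refine I_le_QI _ _ fun d hd => ?_
    rw [wdeg_one]
    by_contra hc
    push_neg at hc
    by_cases hex : ∃ t1 t2, t1 ≠ t2 ∧ 0 < d t1 ∧ 0 < d t2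
    · obtain ⟨t1, t2, hne, hd1, hd2⟩ := hex
      have ha1 := hd t1 t2 (hcomp _ _ hne)
      have hs := sig_add_eq t1 t2 hne d
      omega
    · push_neg at hex
      by_cases hex1 : ∃ t, 0 < d t
      · obtain ⟨t, ht⟩ := hex1
        set j := if t = a then b else a with hj
        have hjt : j ≠ t := by
          by_cases h : t = a
          · subst h; simp [hj]; exact Ne.symm hab
          · simp [hj, h]; exact fun hx => h (Eq.symm hx)
        have hdj : d j = 0 := by
          have := hex t j (Ne.symm hjt) ht
          omega
        have htotal : ∑ s, d s = d t := by
          refine Finset.sum_eq_single t (fun s _ hs => ?_) (by simp)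
          have := hex t s (Ne.symm hs) ht
          omega
        have ha1 := hd t j (hcomp _ _ (Ne.symm hjt))
        have hs := sig_add_eq t j (Ne.symm hjt) d
        omega
      · push_neg at hex1
        have h0' : ∑ s, d s = 0 := Finset.sum_eq_zero fun s _ => by have := hex1 s; omega
        have ha1 := hd a b (hcomp a b hab)
        have hs := sig_add_eq a b hab d
        omega
  · rw [wdeg_one, htot]; omega

lemma sum_univ_four_distinct (v a b c : Fin 4) (hva : v ≠ a) (hvb : v ≠ b) (hvc : v ≠ c)
    (hab : a ≠ b) (hac : a ≠ c) (hbc : b ≠ c) (f : Fin 4 → ℕ) :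
    ∑ t, f t = f v + f a + f b + f c := by
  have huniv : ({v, a, b, c} : Finset (Fin 4)) = Finset.univ := by
    refine Finset.eq_univ_of_card _ ?_
    rw [Finset.card_insert_of_notMem (by simp [hva, hvb, hvc]),
      Finset.card_insert_of_notMem (by simp [hab, hac]),
      Finset.card_insert_of_notMem (by simp [hbc]), Finset.card_singleton]
    simp
  rw [← huniv, Finset.sum_insert (by simp [hva, hvb, hvc]),
    Finset.sum_insert (by simp [hab, hac]), Finset.sum_insert (by simp [hbc]),
    Finset.sum_singleton]
  ring

lemma caseC (G : SimpleGraph (Fin 4)) (m : ℕ) (hm : 3 ≤ m)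
    (v a b c : Fin 4) (hva : v ≠ a) (hvb : v ≠ b) (hvc : v ≠ c)
    (hab : a ≠ b) (hac : a ≠ c) (hbc : b ≠ c)
    (hea : G.Adj v a) (heb : G.Adj v b) (hec : G.Adj v c) :
    symbolicPower k G m ≠ (symbolicPower k G 1) ^ m := by
  classical
  set hh := (m+1)/2 with hhdef
  set l := m/2 with hldef
  set w : Fin 4 →₀ ℕ := Finsupp.single v hh + Finsupp.single a hh +
    Finsupp.single b hh + Finsupp.single c l with hw
  have htot : ∑ t, w t = 3*hh + l := by
    have : ∑ t, w t = hh + hh + hh + l := by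
      simp only [hw, Finsupp.add_apply, Finset.sum_add_distrib, total_single]
    omega
  have hwub : ∀ x, w x ≤ hh := by
    intro x
    simp only [hw, Finsupp.add_apply, Finsupp.single_apply]
    split_ifs <;> first | omega | simp_all
  have hwdeg : ∀ d : Fin 4 →₀ ℕ,
      wdeg (fun t => if t = v then 0 else 1) d = d a + d b + d c := by
    intro d
    unfold wdeg
    rw [sum_univ_four_distinct v a b c hva hvb hvc hab hac hbc
      (fun t => (if t = v then 0 else 1) * d t)]
    simp [Ne.symm hva, Ne.symm hvb, Ne.symm hvc]
  refine witness_ne w (fun t => if t = v then 0 else 1) 2 ?_ ?_ ?_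
  · intro i j hij
    have hne := G.ne_of_adj hij
    have hsum := sig_add_eq i j hne w
    have h1 := hwub i
    have h2 := hwub j
    omega
  · refine I_le_QI _ _ fun d hd => ?_
    rw [hwdeg]
    have hsum4 := sum_univ_four_distinct v a b c hva hvb hvc hab hac hbc (fun t => d t)
    have c1 := hd v a hea
    have c2 := hd v b heb
    have c3 := hd v c hec
    have s1 := sig_add_eq v a hva d
    have s2 := sig_add_eq v b hvb d
    have s3 := sig_add_eq v c hvc d
    omega
  · rw [hwdeg]
    have e1 : w a = hh := by
      simp [hw, Finsupp.single_apply, hva, Ne.symm hab, Ne.symm hac]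
    have e2 : w b = hh := by
      simp [hw, Finsupp.single_apply, hvb, hab, Ne.symm hbc]
    have e3 : w c = l := by
      simp [hw, Finsupp.single_apply, hvc, hac, hbc]
    omega


lemma four_cover (A B C D : Fin 4) (hab : A ≠ B) (hac : A ≠ C) (had : A ≠ D)
    (hbc : B ≠ C) (hbd : B ≠ D) (hcd : C ≠ D) :
    ∀ t : Fin 4, t = A ∨ t = B ∨ t = C ∨ t = D := by
  intro t
  have huniv : ({A, B, C, D} : Finset (Fin 4)) = Finset.univ := by
    refine Finset.eq_univ_of_card _ ?_
    rw [Finset.card_insert_of_notMem (by simp [hab, hac, had]),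
      Finset.card_insert_of_notMem (by simp [hbc, hbd]),
      Finset.card_insert_of_notMem (by simp [hcd]), Finset.card_singleton]
    simp
  have : t ∈ ({A, B, C, D} : Finset (Fin 4)) := by rw [huniv]; simp
  simpa using this

lemma monomial_mem_of_le {I : Ideal (MvPolynomial (Fin n) k)} {s d : Fin n →₀ ℕ}
    (hle : s ≤ d) (h : (monomial s (1:k) : MvPolynomial (Fin n) k) ∈ I) (c : k) :
    monomial d c ∈ I := by
  have heq : (monomial d c : MvPolynomial (Fin n) k) = monomial (d - s) c * monomial s 1 := by
    rw [monomial_mul, mul_one, tsub_add_cancel_of_le hle]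
  rw [heq]
  exact Ideal.mul_mem_left _ _ h

lemma genMemI (G : SimpleGraph (Fin n)) (x y : Fin n) (hxy : x ≠ y)
    (hnadj : ¬ G.Adj x y) : (X x * X y : MvPolynomial (Fin n) k) ∈ symbolicPower k G 1 := by
  rw [mem_symbolicPower_iff]
  intro i j hij
  rw [pow_one]
  by_cases hx : x ≠ i ∧ x ≠ j
  · exact Ideal.mul_mem_right _ _ (Ideal.subset_span ⟨x, hx, rfl⟩)
  · push_neg at hx
    have hy : y ≠ i ∧ y ≠ j := by
      constructor <;> rintro rfl
      · by_cases hxi : x = y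
        · exact hxy hxi
        · have hxj : x = j := by tauto
          subst hxj
          exact hnadj (G.adj_symm hij)
      · by_cases hxj : x = y
        · exact hxy hxj
        · have hxi : x = i := by tauto
          subst hxi
          exact hnadj hij
    exact Ideal.mul_mem_left _ _ (Ideal.subset_span ⟨y, hy, rfl⟩)

lemma XX_pow (x y : Fin n) (e : ℕ) :
    ((X x * X y : MvPolynomial (Fin n) k)) ^ e
      = monomial (e • (Finsupp.single x 1 + Finsupp.single y 1)) 1 := by
  have h1 : (X x * X y : MvPolynomial (Fin n) k)
      = monomial (Finsupp.single x 1 + Finsupp.single y 1) 1 := by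
    rw [X, X, monomial_mul, one_mul]
  rw [h1, monomial_pow, one_pow]


lemma eqPath (G : SimpleGraph (Fin 4)) (m : ℕ)
    (A B C D : Fin 4) (hab : A ≠ B) (hac : A ≠ C) (had : A ≠ D)
    (hbc : B ≠ C) (hbd : B ≠ D) (hcd : C ≠ D)
    (adjAB : G.Adj A B) (adjBC : G.Adj B C) (adjCD : G.Adj C D)
    (nadjAC : ¬ G.Adj A C) (nadjAD : ¬ G.Adj A D) (nadjBD : ¬ G.Adj B D) :
    symbolicPower k G m = (symbolicPower k G 1) ^ m := by
  classical
  refine le_antisymm ?_ (pow_le_symbolic G m)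
  intro p hp
  rw [mem_symbolicPower_iff] at hp
  rw [← support_sum_monomial_coeff p]
  refine Ideal.sum_mem _ fun d hd => ?_
  have c1 := supp_of_mem_varPrime_pow (hp A B adjAB) d hd
  have c2 := supp_of_mem_varPrime_pow (hp B C adjBC) d hd
  have c3 := supp_of_mem_varPrime_pow (hp C D adjCD) d hd
  have s1 := sig_add_eq A B hab d
  have s2 := sig_add_eq B C hbc d
  have s3 := sig_add_eq C D hcd d
  have hsum4 := sum_univ_four_distinct A B C D hab hac had hbc hbd hcd (fun t => d t)
  set e1 := min (d C) (min (d A) m) with he1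
  set e3 := min (d B) (min (d D) (m - e1)) with he3
  set e2 := m - e1 - e3 with he2
  have hE1 : e1 + (e2 + e3) = m := by omega
  have hEa : e1 + e2 ≤ d A := by omega
  have hEb : e3 ≤ d B := by omega
  have hEc : e1 ≤ d C := by omega
  have hEd : e2 + e3 ≤ d D := by omega
  set s : Fin 4 →₀ ℕ := e1 • (Finsupp.single A 1 + Finsupp.single C 1)
      + (e2 • (Finsupp.single A 1 + Finsupp.single D 1)
        + e3 • (Finsupp.single B 1 + Finsupp.single D 1)) with hs
  have hsle : s ≤ d := by
    rw [Finsupp.le_def]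
    intro t
    rcases four_cover A B C D hab hac had hbc hbd hcd t with rfl | rfl | rfl | rfl <;>
      · simp only [hs, Finsupp.add_apply, Finsupp.smul_apply, Finsupp.single_apply,
          smul_eq_mul]
        simp [Finsupp.single_apply, hab, hac, had, hbc, hbd, hcd, Ne.symm hab, Ne.symm hac,
          Ne.symm had, Ne.symm hbc, Ne.symm hbd, Ne.symm hcd]
        omega
  have hmem : (monomial s (1:k) : MvPolynomial (Fin 4) k) ∈ (symbolicPower k G 1) ^ m := by
    have hfac : (monomial s (1:k) : MvPolynomial (Fin 4) k)
        = (X A * X C) ^ e1 * ((X A * X D) ^ e2 * (X B * X D) ^ e3) := by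
      rw [XX_pow, XX_pow, XX_pow, monomial_mul, monomial_mul, hs]
      norm_num
    rw [hfac, ← hE1, pow_add, pow_add]
    exact Ideal.mul_mem_mul (Ideal.pow_mem_pow (genMemI G A C hac nadjAC) e1)
      (Ideal.mul_mem_mul (Ideal.pow_mem_pow (genMemI G A D had nadjAD) e2)
        (Ideal.pow_mem_pow (genMemI G B D hbd nadjBD) e3))
  exact monomial_mem_of_le hsle hmem _


lemma eqCycle (G : SimpleGraph (Fin 4)) (m : ℕ)
    (A B C D : Fin 4) (hab : A ≠ B) (hac : A ≠ C) (had : A ≠ D)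
    (hbc : B ≠ C) (hbd : B ≠ D) (hcd : C ≠ D)
    (adjAB : G.Adj A B) (adjBC : G.Adj B C) (adjCD : G.Adj C D) (adjDA : G.Adj D A)
    (nadjAC : ¬ G.Adj A C) (nadjBD : ¬ G.Adj B D) :
    symbolicPower k G m = (symbolicPower k G 1) ^ m := by
  classical
  refine le_antisymm ?_ (pow_le_symbolic G m)
  intro p hp
  rw [mem_symbolicPower_iff] at hp
  rw [← support_sum_monomial_coeff p]
  refine Ideal.sum_mem _ fun d hd => ?_
  have c1 := supp_of_mem_varPrime_pow (hp A B adjAB) d hd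
  have c2 := supp_of_mem_varPrime_pow (hp B C adjBC) d hd
  have c3 := supp_of_mem_varPrime_pow (hp C D adjCD) d hd
  have c4 := supp_of_mem_varPrime_pow (hp D A adjDA) d hd
  have s1 := sig_add_eq A B hab d
  have s2 := sig_add_eq B C hbc d
  have s3 := sig_add_eq C D hcd d
  have s4 := sig_add_eq D A (Ne.symm had) d
  have hsum4 := sum_univ_four_distinct A B C D hab hac had hbc hbd hcd (fun t => d t)
  set e1 := min (d A) (min (d C) m) with he1
  set e2 := m - e1 with he2
  have hE1 : e1 + e2 = m := by omega
  have hEa : e1 ≤ d A := by omega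
  have hEb : e2 ≤ d B := by omega
  have hEc : e1 ≤ d C := by omega
  have hEd : e2 ≤ d D := by omega
  set s : Fin 4 →₀ ℕ := e1 • (Finsupp.single A 1 + Finsupp.single C 1)
      + e2 • (Finsupp.single B 1 + Finsupp.single D 1) with hs
  have hsle : s ≤ d := by
    rw [Finsupp.le_def]
    intro t
    rcases four_cover A B C D hab hac had hbc hbd hcd t with rfl | rfl | rfl | rfl <;>
      · simp only [hs, Finsupp.add_apply, Finsupp.smul_apply, Finsupp.single_apply,
          smul_eq_mul]
        simp [Finsupp.single_apply, hab, hac, had, hbc, hbd, hcd, Ne.symm hab, Ne.symm hac,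
          Ne.symm had, Ne.symm hbc, Ne.symm hbd, Ne.symm hcd]
        omega
  have hmem : (monomial s (1:k) : MvPolynomial (Fin 4) k) ∈ (symbolicPower k G 1) ^ m := by
    have hfac : (monomial s (1:k) : MvPolynomial (Fin 4) k)
        = (X A * X C) ^ e1 * (X B * X D) ^ e2 := by
      rw [XX_pow, XX_pow, monomial_mul, hs]
      norm_num
    rw [hfac, ← hE1, pow_add]
    exact Ideal.mul_mem_mul (Ideal.pow_mem_pow (genMemI G A C hac nadjAC) e1)
      (Ideal.pow_mem_pow (genMemI G B D hbd nadjBD) e2)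
  exact monomial_mem_of_le hsle hmem _

lemma eq2K2 (G : SimpleGraph (Fin 4)) (m : ℕ)
    (A B C D : Fin 4) (hab : A ≠ B) (hac : A ≠ C) (had : A ≠ D)
    (hbc : B ≠ C) (hbd : B ≠ D) (hcd : C ≠ D)
    (adjAB : G.Adj A B) (adjCD : G.Adj C D)
    (nadjAC : ¬ G.Adj A C) (nadjAD : ¬ G.Adj A D)
    (nadjBC : ¬ G.Adj B C) (nadjBD : ¬ G.Adj B D) :
    symbolicPower k G m = (symbolicPower k G 1) ^ m := by
  classical
  refine le_antisymm ?_ (pow_le_symbolic G m)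
  intro p hp
  rw [mem_symbolicPower_iff] at hp
  rw [← support_sum_monomial_coeff p]
  refine Ideal.sum_mem _ fun d hd => ?_
  have c1 := supp_of_mem_varPrime_pow (hp A B adjAB) d hd
  have c2 := supp_of_mem_varPrime_pow (hp C D adjCD) d hd
  have s1 := sig_add_eq A B hab d
  have s2 := sig_add_eq C D hcd d
  have hsum4 := sum_univ_four_distinct A B C D hab hac had hbc hbd hcd (fun t => d t)
  set pa := min (d A) m with hpa
  set qc := min (d C) m with hqc
  set u1 := min pa qc with hu1
  set u2 := pa - u1 with hu2
  set u3 := qc - u1 with hu3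
  set u4 := min (m - pa) (m - qc) with hu4
  have hE1 : u1 + (u2 + (u3 + u4)) = m := by omega
  have hEa : u1 + u2 ≤ d A := by omega
  have hEb : u3 + u4 ≤ d B := by omega
  have hEc : u1 + u3 ≤ d C := by omega
  have hEd : u2 + u4 ≤ d D := by omega
  set s : Fin 4 →₀ ℕ := u1 • (Finsupp.single A 1 + Finsupp.single C 1)
      + (u2 • (Finsupp.single A 1 + Finsupp.single D 1)
        + (u3 • (Finsupp.single B 1 + Finsupp.single C 1)
          + u4 • (Finsupp.single B 1 + Finsupp.single D 1))) with hs
  have hsle : s ≤ d := by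
    rw [Finsupp.le_def]
    intro t
    rcases four_cover A B C D hab hac had hbc hbd hcd t with rfl | rfl | rfl | rfl <;>
      · simp only [hs, Finsupp.add_apply, Finsupp.smul_apply, Finsupp.single_apply,
          smul_eq_mul]
        simp [Finsupp.single_apply, hab, hac, had, hbc, hbd, hcd, Ne.symm hab, Ne.symm hac,
          Ne.symm had, Ne.symm hbc, Ne.symm hbd, Ne.symm hcd]
        omega
  have hmem : (monomial s (1:k) : MvPolynomial (Fin 4) k) ∈ (symbolicPower k G 1) ^ m := by
    have hfac : (monomial s (1:k) : MvPolynomial (Fin 4) k)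
        = (X A * X C) ^ u1 * ((X A * X D) ^ u2 * ((X B * X C) ^ u3 * (X B * X D) ^ u4)) := by
      rw [XX_pow, XX_pow, XX_pow, XX_pow, monomial_mul, monomial_mul, monomial_mul, hs]
      norm_num
    rw [hfac, ← hE1, pow_add, pow_add, pow_add]
    exact Ideal.mul_mem_mul (Ideal.pow_mem_pow (genMemI G A C hac nadjAC) u1)
      (Ideal.mul_mem_mul (Ideal.pow_mem_pow (genMemI G A D had nadjAD) u2)
        (Ideal.mul_mem_mul (Ideal.pow_mem_pow (genMemI G B C hbc nadjBC) u3)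
          (Ideal.pow_mem_pow (genMemI G B D hbd nadjBD) u4)))
  exact monomial_mem_of_le hsle hmem _



def pairIdx (i j : Fin 4) : Fin 6 :=
  ⟨if min i.val j.val = 0 then max i.val j.val - 1
    else if min i.val j.val = 1 then max i.val j.val + 1 else 5, by
      have hi := i.isLt; have hj := j.isLt
      split_ifs <;> omega⟩

def adjOf (bb : Fin 6 → Bool) (i j : Fin 4) : Bool :=
  if i = j then false else bb (pairIdx i j)

def BPathP (bb : Fin 6 → Bool) : Prop :=
  ∃ g : Fin 4 → Fin 4, Function.Bijective g ∧
    ∀ i j : Fin 4, (adjOf bb (g i) (g j) = true ↔ (i.val + 1 = j.val ∨ j.val + 1 = i.val))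

def BCycleP (bb : Fin 6 → Bool) : Prop :=
  ∃ g : Fin 4 → Fin 4, Function.Bijective g ∧
    ∀ i j : Fin 4, (adjOf bb (g i) (g j) = true ↔
      ((i.val + 1) % 4 = j.val ∨ (j.val + 1) % 4 = i.val))

def B2K2P (bb : Fin 6 → Bool) : Prop :=
  ∃ a b c d : Fin 4, a ≠ b ∧ a ≠ c ∧ a ≠ d ∧ b ≠ c ∧ b ≠ d ∧ c ≠ d ∧
    ∀ u v : Fin 4, (adjOf bb u v = true ↔
      ((u = a ∧ v = b) ∨ (u = b ∧ v = a) ∨ (u = c ∧ v = d) ∨ (u = d ∧ v = c)))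

instance (bb : Fin 6 → Bool) : Decidable (BPathP bb) := by unfold BPathP; infer_instance
instance (bb : Fin 6 → Bool) : Decidable (BCycleP bb) := by unfold BCycleP; infer_instance
instance (bb : Fin 6 → Bool) : Decidable (B2K2P bb) := by unfold B2K2P; infer_instance

set_option maxRecDepth 100000 in
lemma classify : ∀ bb : Fin 6 → Bool,
    (∀ v : Fin 4, ∃ u, adjOf bb v u = true) →
    (∀ v : Fin 4, ∃ u, u ≠ v ∧ adjOf bb v u = false) →
    BPathP bb ∨ BCycleP bb ∨ B2K2P bb := by decide


def pairA : Fin 6 → Fin 4 := ![0, 0, 0, 1, 1, 2]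
def pairB : Fin 6 → Fin 4 := ![1, 2, 3, 2, 3, 3]

lemma classifyG (G : SimpleGraph (Fin 4)) (hG : ∀ v : Fin 4, ∃ u, G.Adj v u)
    (hnd3 : ∀ v : Fin 4, ∃ u, u ≠ v ∧ ¬ G.Adj v u) :
    IsPathGraph G ∨ IsCycleGraph G ∨ IsTwoDisjointEdges G := by
  classical
  set bb : Fin 6 → Bool := fun e => decide (G.Adj (pairA e) (pairB e)) with hbb
  have hb : ∀ i j, G.Adj i j ↔ adjOf bb i j = true := by
    intro i j
    fin_cases i <;> fin_cases j <;>
      simp [adjOf, pairIdx, pairA, pairB, hbb, G.adj_comm] <;>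
      first
        | exact fun h => G.irrefl h
        | exact Iff.rfl
        | exact G.adj_comm _ _
        | exact (@decide_eq_true_iff _ _).symm
        | exact (G.adj_comm _ _).trans (@decide_eq_true_iff _ _).symm
        | rw [G.adj_comm]
  have h1 : ∀ v : Fin 4, ∃ u, adjOf bb v u = true := fun v => by
    obtain ⟨u, hu⟩ := hG v
    exact ⟨u, (hb v u).mp hu⟩
  have h2 : ∀ v : Fin 4, ∃ u, u ≠ v ∧ adjOf bb v u = false := fun v => by
    obtain ⟨u, huv, hu⟩ := hnd3 v
    refine ⟨u, huv, ?_⟩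
    rw [← Bool.not_eq_true]
    exact fun hc => hu ((hb v u).mpr hc)
  rcases classify bb h1 h2 with ⟨g, hgbij, hgadj⟩ | ⟨g, hgbij, hgadj⟩ |
      ⟨a, b, c, d, d1, d2, d3, d4, d5, d6, hq⟩
  · left
    refine ⟨Equiv.ofBijective g hgbij, fun i j => ?_⟩
    exact (hb _ _).trans (hgadj i j)
  · right; left
    refine ⟨Equiv.ofBijective g hgbij, fun i j => ?_⟩
    exact (hb _ _).trans (hgadj i j)
  · right; right
    exact ⟨rfl, a, b, c, d, d1, d2, d3, d4, d5, d6, fun u v => (hb u v).trans (hq u v)⟩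

end Stmt6

/-- Let `n ≥ 4` and `m ≥ 3`. Then `I_G^{(m)} = I_G^m` if and only if `n = 4` and `G`
is a path, or a cycle, or the union of two disjoint edges. -/
theorem stmt_6 (k : Type) [Field k] (n : ℕ) (hn : 4 ≤ n)
    (G : SimpleGraph (Fin n)) (hG : ∀ v : Fin n, ∃ u : Fin n, G.Adj v u)
    (m : ℕ) (hm : 3 ≤ m) :
    symbolicPower k G m = (symbolicPower k G 1) ^ m ↔
      n = 4 ∧ (IsPathGraph G ∨ IsCycleGraph G ∨ IsTwoDisjointEdges G) := by

  constructor
  · intro heq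
    have hn4 : n = 4 := by
      by_contra hne
      have hn5 : 5 ≤ n := by omega
      by_cases hcomp : ∀ u v : Fin n, u ≠ v → G.Adj u v
      · exact Stmt6.caseB G hn hcomp m hm heq
      · push_neg at hcomp
        obtain ⟨u, v, huv, hnadj⟩ := hcomp
        exact Stmt6.caseA G hn5 hG m hm u v huv hnadj heq
    subst hn4
    refine ⟨rfl, ?_⟩
    have hnd3 : ∀ v : Fin 4, ∃ u, u ≠ v ∧ ¬ G.Adj v u := by
      intro v
      by_contra hc
      push_neg at hc
      fin_cases v
      · exact Stmt6.caseC G m hm 0 1 2 3 (by decide) (by decide) (by decide)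
          (by decide) (by decide) (by decide)
          (hc 1 (by decide)) (hc 2 (by decide)) (hc 3 (by decide)) heq
      · exact Stmt6.caseC G m hm 1 0 2 3 (by decide) (by decide) (by decide)
          (by decide) (by decide) (by decide)
          (hc 0 (by decide)) (hc 2 (by decide)) (hc 3 (by decide)) heq
      · exact Stmt6.caseC G m hm 2 0 1 3 (by decide) (by decide) (by decide)
          (by decide) (by decide) (by decide)
          (hc 0 (by decide)) (hc 1 (by decide)) (hc 3 (by decide)) heq
      · exact Stmt6.caseC G m hm 3 0 1 2 (by decide) (by decide) (by decide)
          (by decide) (by decide) (by decide)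
          (hc 0 (by decide)) (hc 1 (by decide)) (hc 2 (by decide)) heq
    exact Stmt6.classifyG G hG hnd3
  · rintro ⟨hn4, hcase⟩
    subst hn4
    rcases hcase with ⟨f, hf⟩ | ⟨f, hf⟩ | ⟨-, a, b, c, d, d1, d2, d3, d4, d5, d6, hadj⟩
    · exact Stmt6.eqPath G m (f 0) (f 1) (f 2) (f 3)
        (f.injective.ne (by decide)) (f.injective.ne (by decide)) (f.injective.ne (by decide))
        (f.injective.ne (by decide)) (f.injective.ne (by decide)) (f.injective.ne (by decide))
        ((hf 0 1).mpr (by decide)) ((hf 1 2).mpr (by decide)) ((hf 2 3).mpr (by decide))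
        (fun h => absurd ((hf 0 2).mp h) (by decide))
        (fun h => absurd ((hf 0 3).mp h) (by decide))
        (fun h => absurd ((hf 1 3).mp h) (by decide))
    · exact Stmt6.eqCycle G m (f 0) (f 1) (f 2) (f 3)
        (f.injective.ne (by decide)) (f.injective.ne (by decide)) (f.injective.ne (by decide))
        (f.injective.ne (by decide)) (f.injective.ne (by decide)) (f.injective.ne (by decide))
        ((hf 0 1).mpr (by decide)) ((hf 1 2).mpr (by decide)) ((hf 2 3).mpr (by decide))
        ((hf 3 0).mpr (by decide))
        (fun h => absurd ((hf 0 2).mp h) (by decide))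
        (fun h => absurd ((hf 1 3).mp h) (by decide))
    · refine Stmt6.eq2K2 G m a b c d d1 d2 d3 d4 d5 d6
        ((hadj a b).mpr (Or.inl ⟨rfl, rfl⟩)) ((hadj c d).mpr (by tauto)) ?_ ?_ ?_ ?_ <;>
        · intro h
          rcases (hadj _ _).mp h with ⟨h', h''⟩ | ⟨h', h''⟩ | ⟨h', h''⟩ | ⟨h', h''⟩ <;>
            simp_all
end

section
/- Let n ≥ 4. Then I_G^{(m)} = I_G^m holds for all m ≥ 1 if and only if n = 4 and G is a path, or a cycle, or the union of two disjoint edges. (Equivalently, for a pure (n-3)-dimensional simplicial complex Δ on n ≥ 4 vertices whose facet complements form the graph G, the vertex cover algebra A(Δ), i.e. the symbolic Rees algebra of I_G, is a standard graded S-algebra if and only if n = 4 and G is a path, a cycle, or the union of two disjoint edges.) -/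
open MvPolynomial

namespace Stmt9

open Finset Pointwise

variable {k : Type} [Field k] {n : ℕ}

/-- Sum of the coordinates of `a` outside `{i,j}`. -/
def eSum (a : Fin n → ℕ) (i j : Fin n) : ℕ :=
  ∑ t ∈ univ.filter (fun t => t ≠ i ∧ t ≠ j), a t

lemma eSum_add (a b : Fin n → ℕ) (i j : Fin n) :
    eSum (a + b) i j = eSum a i j + eSum b i j := by
  simp [eSum, Pi.add_apply, Finset.sum_add_distrib]

lemma eSum_mono {a b : Fin n → ℕ} (h : ∀ t, a t ≤ b t) (i j : Fin n) :
    eSum a i j ≤ eSum b i j :=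
  Finset.sum_le_sum fun t _ => h t

lemma eSum_eq_sub {i j : Fin n} (hij : i ≠ j) (a : Fin n → ℕ) :
    eSum a i j = (∑ t, a t) - a i - a j := by
  have h1 : (∑ t, a t) = eSum a i j + (a i + a j) := by
    rw [← Finset.sum_filter_add_sum_filter_not univ (fun t => t ≠ i ∧ t ≠ j)]
    congr 1
    have h2 : univ.filter (fun t => ¬(t ≠ i ∧ t ≠ j)) = {i, j} := by
      ext t; simp; tauto
    rw [h2, Finset.sum_pair hij]
  omega

lemma eSum_single (i j t : Fin n) (hti : t ≠ i) (htj : t ≠ j) :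
    eSum (⇑(Finsupp.single t 1) : Fin n → ℕ) i j = 1 := by
  rw [eSum, Finset.sum_eq_single t]
  · simp
  · intro b _ hb; simp [Finsupp.single_apply_eq_zero, hb.symm]
  · intro h; exact absurd (by simp [hti, htj]) h

/-- The ideal of polynomials all of whose monomials satisfy a monotone property. -/
def monIdeal (P : (Fin n →₀ ℕ) → Prop)
    (hP : ∀ d d' : Fin n →₀ ℕ, d ≤ d' → P d → P d') :
    Ideal (MvPolynomial (Fin n) k) where
  carrier := {f | ∀ d ∈ f.support, P d}
  zero_mem' := by simp
  add_mem' := by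
    intro f g hf hg d hd
    rcases Finset.mem_union.1 (Finsupp.support_add hd) with h | h
    · exact hf d h
    · exact hg d h
  smul_mem' := by
    intro g f hf d hd
    rcases Finset.mem_add.1 (MvPolynomial.support_mul g f hd) with ⟨d1, _, d2, h2, rfl⟩
    exact hP _ _ le_add_self (hf d2 h2)

lemma mem_monIdeal {P : (Fin n →₀ ℕ) → Prop} {hP} {f : MvPolynomial (Fin n) k} :
    f ∈ monIdeal P hP ↔ ∀ d ∈ f.support, P d := Iff.rfl

lemma esum_mono_le {d d' : Fin n →₀ ℕ} (h : d ≤ d') {i j : Fin n} {m : ℕ}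
    (hm : m ≤ eSum (⇑d) i j) : m ≤ eSum (⇑d') i j :=
  le_trans hm (eSum_mono (fun t => Finsupp.le_def.mp h t) i j)

lemma varPrime_le (i j : Fin n) :
    varPrime k i j ≤ monIdeal (k := k) (fun d => 1 ≤ eSum (⇑d) i j)
      (fun _ _ h => esum_mono_le h) := by
  rw [varPrime, Ideal.span_le]
  rintro _ ⟨t, ⟨hti, htj⟩, rfl⟩ d hd
  simp only at hd
  rw [MvPolynomial.support_X] at hd
  simp only [one_ne_zero, if_false, Finset.mem_singleton] at hd
  subst hd
  rw [eSum_single i j t hti htj]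

/-- Membership in powers of `varPrime`, one direction. -/
lemma varPrime_pow_le (i j : Fin n) (m : ℕ) :
    (varPrime k i j) ^ m ≤ monIdeal (fun d => m ≤ eSum (⇑d) i j)
      (fun _ _ h => esum_mono_le h) := by
  induction m with
  | zero => intro f _ d _; simp
  | succ m ih =>
    rw [pow_succ, Ideal.mul_le]
    intro r hr s hs d hd
    rcases Finset.mem_add.1 (MvPolynomial.support_mul r s hd) with ⟨d1, h1, d2, h2, rfl⟩
    have hr1 : m ≤ eSum (⇑d1) i j := ih hr d1 h1
    have hs1 : 1 ≤ eSum (⇑d2) i j := varPrime_le i j hs d2 h2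
    have : eSum (⇑(d1 + d2)) i j = eSum (⇑d1) i j + eSum (⇑d2) i j := by
      rw [Finsupp.coe_add]; exact eSum_add _ _ i j
    omega

/-- A monomial with enough degree outside `{i,j}` lies in the `m`-th power. -/
lemma monomial_mem_varPrime_pow (i j : Fin n) (m : ℕ) :
    ∀ d : Fin n →₀ ℕ, m ≤ eSum (⇑d) i j →
      (monomial d 1 : MvPolynomial (Fin n) k) ∈ (varPrime k i j) ^ m := by
  induction m with
  | zero => intro d _; simp
  | succ m ih =>
    intro d hd
    have hpos : eSum (⇑d) i j ≠ 0 := by omega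
    have : ∃ t ∈ univ.filter (fun t : Fin n => t ≠ i ∧ t ≠ j), d t ≠ 0 :=
      Finset.exists_ne_zero_of_sum_ne_zero hpos
    rcases this with ⟨t, ht, hdt⟩
    rw [Finset.mem_filter] at ht
    obtain ⟨-, hti, htj⟩ := ht
    have hle : Finsupp.single t 1 ≤ d := Finsupp.single_le_iff.2 (by omega)
    have hsplit : Finsupp.single t 1 + (d - Finsupp.single t 1) = d :=
      add_tsub_cancel_of_le hle
    have heq : (monomial d 1 : MvPolynomial (Fin n) k)
        = X t * monomial (d - Finsupp.single t 1) 1 := by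
      have : (X t : MvPolynomial (Fin n) k) = monomial (Finsupp.single t 1) 1 := rfl
      rw [this, monomial_mul, hsplit, one_mul]
    rw [heq, pow_succ, mul_comm ((varPrime k i j)^m)]
    apply Ideal.mul_mem_mul
    · exact Ideal.subset_span ⟨t, ⟨hti, htj⟩, rfl⟩
    · apply ih
      have h2 := eSum_add (⇑(Finsupp.single t 1) : Fin n → ℕ)
        (⇑(d - Finsupp.single t 1 : Fin n →₀ ℕ)) i j
      rw [← Finsupp.coe_add, hsplit, eSum_single i j t hti htj] at h2
      omega

lemma mem_varPrime_pow {i j : Fin n} {m : ℕ} {f : MvPolynomial (Fin n) k} :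
    f ∈ (varPrime k i j) ^ m ↔ ∀ d ∈ f.support, m ≤ eSum (⇑d) i j := by
  constructor
  · exact fun h d hd => varPrime_pow_le i j m h d hd
  · intro h
    rw [← support_sum_monomial_coeff f]
    apply Ideal.sum_mem
    intro d hd
    have : (monomial d (coeff d f) : MvPolynomial (Fin n) k)
        = C (coeff d f) * monomial d 1 := by rw [C_mul_monomial, mul_one]
    rw [this]
    exact Ideal.mul_mem_left _ _ (monomial_mem_varPrime_pow i j m d (h d hd))

/-- `a` is an `m`-cover of (the complement hypergraph of) `G`. -/
def Cov (G : SimpleGraph (Fin n)) (m : ℕ) (a : Fin n → ℕ) : Prop :=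
  ∀ i j : Fin n, G.Adj i j → m ≤ eSum a i j

lemma cov_mono_le {G : SimpleGraph (Fin n)} {m : ℕ} {d d' : Fin n →₀ ℕ} (h : d ≤ d')
    (hd : Cov G m ⇑d) : Cov G m ⇑d' := fun i j hij => esum_mono_le h (hd i j hij)

lemma mem_symbolicPower {G : SimpleGraph (Fin n)} {m : ℕ} {f : MvPolynomial (Fin n) k} :
    f ∈ symbolicPower k G m ↔ ∀ d ∈ f.support, Cov G m ⇑d := by
  rw [symbolicPower]
  simp only [Ideal.mem_iInf, mem_varPrime_pow]
  constructor
  · intro h d hd i j hij; exact h i j hij d hd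
  · intro h i j hij d hd; exact h d hd i j hij

/-- Decomposability of `a` into `m` many `1`-covers. -/
def Dec (G : SimpleGraph (Fin n)) (m : ℕ) (a : Fin n → ℕ) : Prop :=
  ∃ c : ℕ → (Fin n → ℕ), (∀ i < m, Cov G 1 (c i)) ∧
    ∀ t, (∑ i ∈ Finset.range m, c i t) ≤ a t

lemma dec_mono_le {G : SimpleGraph (Fin n)} {m : ℕ} {d d' : Fin n →₀ ℕ} (h : d ≤ d')
    (hd : Dec G m ⇑d) : Dec G m ⇑d' := by
  obtain ⟨c, hc, hle⟩ := hd
  exact ⟨c, hc, fun t => le_trans (hle t) (Finsupp.le_def.mp h t)⟩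

lemma le_symbolicPower_pow (G : SimpleGraph (Fin n)) (m : ℕ) :
    (symbolicPower k G 1) ^ m ≤ symbolicPower k G m := by
  have h1 : ∀ i j : Fin n, G.Adj i j → symbolicPower k G 1 ≤ varPrime k i j := by
    intro i j hij
    rw [symbolicPower]
    refine le_trans (iInf_le _ i) (le_trans (iInf_le _ j) (le_trans (iInf_le _ hij) ?_))
    rw [pow_one]
  rw [symbolicPower]
  refine le_iInf fun i => le_iInf fun j => le_iInf fun hij => ?_
  exact pow_le_pow_left' (h1 i j hij) m

/-- ordinary power of `I_G` is contained in the "decomposable" monomial ideal. -/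
lemma pow_le_dec (G : SimpleGraph (Fin n)) (m : ℕ) :
    (symbolicPower k G 1) ^ m ≤ monIdeal (k := k) (fun d => Dec G m ⇑d)
      (fun _ _ h => dec_mono_le h) := by
  induction m with
  | zero =>
    intro f _ d _
    exact ⟨fun _ _ => 0, fun i hi => absurd hi (by omega), by simp⟩
  | succ m ih =>
    rw [pow_succ, Ideal.mul_le]
    intro r hr s hs d hd
    rcases Finset.mem_add.1 (MvPolynomial.support_mul r s hd) with ⟨d1, h1, d2, h2, rfl⟩
    obtain ⟨c, hc, hle⟩ := ih hr d1 h1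
    have hs2 : Cov G 1 ⇑d2 := mem_symbolicPower.mp hs d2 h2
    refine ⟨fun i => if i < m then c i else ⇑d2, fun i hi => ?_, fun t => ?_⟩
    · by_cases h : i < m
      · simpa [h] using hc i h
      · simpa [h] using hs2
    · have : ∀ i ∈ Finset.range m, (if i < m then c i else ⇑d2) t = c i t := by
        intro i hi; simp [Finset.mem_range.mp hi]
      rw [Finset.sum_range_succ, Finset.sum_congr rfl this]
      simp only [lt_irrefl, if_false]
      have := hle t
      have h2 : (d1 + d2) t = d1 t + d2 t := rfl
      rw [h2]
      omega

lemma prod_monomial_one (m : ℕ) (c : ℕ → (Fin n →₀ ℕ)) :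
    (∏ i ∈ Finset.range m, (monomial (c i) 1 : MvPolynomial (Fin n) k))
      = monomial (∑ i ∈ Finset.range m, c i) 1 := by
  induction m with
  | zero => simp [monomial_zero']
  | succ m ih =>
    rw [Finset.prod_range_succ, Finset.sum_range_succ, ih, monomial_mul, one_mul]

/-- decomposable monomials lie in the ordinary power. -/
lemma dec_monomial_mem (G : SimpleGraph (Fin n)) (m : ℕ) (d : Fin n →₀ ℕ)
    (hd : Dec G m ⇑d) : (monomial d 1 : MvPolynomial (Fin n) k)
      ∈ (symbolicPower k G 1) ^ m := by
  obtain ⟨c, hc, hle⟩ := hd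
  set cF : ℕ → (Fin n →₀ ℕ) := fun i => Finsupp.equivFunOnFinite.symm (c i) with hcF
  have hsumle : (∑ i ∈ Finset.range m, cF i) ≤ d := by
    rw [Finsupp.le_def]
    intro t
    have h1 : (∑ i ∈ Finset.range m, cF i) t = ∑ i ∈ Finset.range m, c i t := by
      rw [Finsupp.finset_sum_apply]
      exact Finset.sum_congr rfl fun i _ => rfl
    rw [h1]; exact hle t
  have hsplit : (d - ∑ i ∈ Finset.range m, cF i) + (∑ i ∈ Finset.range m, cF i) = d := by
    rw [tsub_add_cancel_of_le hsumle]
  have heq : (monomial d 1 : MvPolynomial (Fin n) k)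
      = monomial (d - ∑ i ∈ Finset.range m, cF i) 1
        * ∏ i ∈ Finset.range m, monomial (cF i) 1 := by
    rw [prod_monomial_one, monomial_mul, one_mul, hsplit]
  rw [heq]
  apply Ideal.mul_mem_left
  have : ∀ mm : ℕ, (∀ i < mm, Cov G 1 (c i)) →
      (∏ i ∈ Finset.range mm, (monomial (cF i) 1 : MvPolynomial (Fin n) k))
        ∈ (symbolicPower k G 1) ^ mm := by
    intro mm
    induction mm with
    | zero => simp
    | succ mm ih =>
      intro hmm
      rw [Finset.prod_range_succ, pow_succ]
      apply Ideal.mul_mem_mul (ih (fun i hi => hmm i (by omega)))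
      rw [mem_symbolicPower]
      intro e he
      classical
      rw [MvPolynomial.support_monomial, if_neg (one_ne_zero)] at he
      rw [Finset.mem_singleton] at he
      subst he
      have : ⇑(cF mm) = c mm := rfl
      rw [this]
      exact hmm mm (by omega)
  exact this m hc

lemma main_equiv (G : SimpleGraph (Fin n)) :
    (∀ m : ℕ, 1 ≤ m → symbolicPower k G m = (symbolicPower k G 1) ^ m) ↔
      (∀ m : ℕ, 1 ≤ m → ∀ a : Fin n → ℕ, Cov G m a → Dec G m a) := by
  classical
  constructor
  · intro h m hm a ha
    set aF := Finsupp.equivFunOnFinite.symm a with haFdef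
    have haF : ⇑aF = a := rfl
    have h1 : (monomial aF 1 : MvPolynomial (Fin n) k) ∈ symbolicPower k G m := by
      rw [mem_symbolicPower]
      intro d hd
      rw [support_monomial, if_neg one_ne_zero, Finset.mem_singleton] at hd
      subst hd
      rw [haF]; exact ha
    rw [h m hm] at h1
    have h2 := pow_le_dec (k := k) G m h1 aF
      (by rw [support_monomial, if_neg one_ne_zero]; exact Finset.mem_singleton_self _)
    simpa only [haF] using h2
  · intro h m hm
    apply le_antisymm
    · intro f hf
      rw [mem_symbolicPower] at hf
      rw [← support_sum_monomial_coeff f]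
      apply Ideal.sum_mem
      intro d hd
      have heq : (monomial d (coeff d f) : MvPolynomial (Fin n) k)
          = C (coeff d f) * monomial d 1 := by rw [C_mul_monomial, mul_one]
      rw [heq]
      exact Ideal.mul_mem_left _ _ (dec_monomial_mem G m d (h m hm ⇑d (hf d hd)))
    · exact le_symbolicPower_pow G m

/-! ### Combinatorial layer -/

lemma exists_fourth (x y z : Fin 4) (hxy : x ≠ y) (hxz : x ≠ z) (hyz : y ≠ z) :
    ∃ w, w ≠ x ∧ w ≠ y ∧ w ≠ z ∧ ∀ u : Fin 4, u = x ∨ u = y ∨ u = z ∨ u = w := by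
  revert x y z; decide

lemma exists_three (v : Fin 4) :
    ∃ x y z : Fin 4, x ≠ v ∧ y ≠ v ∧ z ≠ v ∧ x ≠ y ∧ x ≠ z ∧ y ≠ z ∧
      ∀ u, u = v ∨ u = x ∨ u = y ∨ u = z := by
  revert v; decide

lemma fin4_cases (i : Fin 4) : i = 0 ∨ i = 1 ∨ i = 2 ∨ i = 3 := by revert i; decide

lemma sum_eq_four {x y z w : Fin 4} (h : ∀ u : Fin 4, u = x ∨ u = y ∨ u = z ∨ u = w)
    (hxy : x ≠ y) (hxz : x ≠ z) (hxw : x ≠ w) (hyz : y ≠ z) (hyw : y ≠ w) (hzw : z ≠ w)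
    (c : Fin 4 → ℕ) : ∑ t, c t = c x + c y + c z + c w := by
  have huniv : (Finset.univ : Finset (Fin 4)) = {x, y, z, w} := by
    ext u
    simp only [Finset.mem_univ, true_iff, Finset.mem_insert, Finset.mem_singleton]
    exact h u
  rw [huniv, Finset.sum_insert (by simp [hxy, hxz, hxw]),
    Finset.sum_insert (by simp [hyz, hyw]), Finset.sum_pair hzw]
  omega

lemma cover_two_points {G : SimpleGraph (Fin n)} (hn : 0 < n)
    (hG : ∀ v, ∃ u, G.Adj v u) {c : Fin n → ℕ} (hc : Cov G 1 c) :
    ∃ t t' : Fin n, t ≠ t' ∧ 1 ≤ c t ∧ 1 ≤ c t' := by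
  obtain ⟨u, hu⟩ := hG ⟨0, hn⟩
  have h1 := hc _ _ hu
  rw [eSum] at h1
  obtain ⟨t, -, hct⟩ := Finset.exists_ne_zero_of_sum_ne_zero
    (show ∑ s ∈ Finset.univ.filter (fun s => s ≠ (⟨0, hn⟩ : Fin n) ∧ s ≠ u), c s ≠ 0
      by omega)
  obtain ⟨u', hu'⟩ := hG t
  have h2 := hc _ _ hu'
  rw [eSum] at h2
  obtain ⟨t', ht', hct'⟩ := Finset.exists_ne_zero_of_sum_ne_zero
    (show ∑ s ∈ Finset.univ.filter (fun s => s ≠ t ∧ s ≠ u'), c s ≠ 0 by omega)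
  rw [Finset.mem_filter] at ht'
  exact ⟨t, t', (ht'.2.1).symm, by omega, by omega⟩

lemma cover_total_two {G : SimpleGraph (Fin n)} (hn : 0 < n)
    (hG : ∀ v, ∃ u, G.Adj v u) {c : Fin n → ℕ} (hc : Cov G 1 c) :
    2 ≤ ∑ t, c t := by
  obtain ⟨t, t', hne, h1, h2⟩ := cover_two_points hn hG hc
  have hsub : ({t, t'} : Finset (Fin n)).sum c ≤ ∑ s, c s :=
    Finset.sum_le_sum_of_subset (Finset.subset_univ _)
  rw [Finset.sum_pair hne] at hsub
  omega

lemma no_CombT_of_ge5 {G : SimpleGraph (Fin n)} (hn5 : 5 ≤ n)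
    (hG : ∀ v, ∃ u, G.Adj v u) :
    ¬ (∀ m, 1 ≤ m → ∀ a, Cov G m a → Dec G m a) := by
  intro H
  have hcov : Cov G (n-2) (fun _ => 1) := by
    intro i j hij
    rw [eSum_eq_sub (G.ne_of_adj hij)]
    simp only [Finset.sum_const, Finset.card_univ, smul_eq_mul, mul_one, Fintype.card_fin]
    omega
  obtain ⟨c, hc, hle⟩ := H (n-2) (by omega) _ hcov
  have htot : ∀ i ∈ Finset.range (n-2), 2 ≤ ∑ t, c i t :=
    fun i hi => cover_total_two (by omega) hG (hc i (Finset.mem_range.mp hi))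
  have hsum : ∑ i ∈ Finset.range (n-2), ∑ t, c i t ≤ n := by
    rw [Finset.sum_comm]
    calc ∑ t : Fin n, ∑ i ∈ Finset.range (n-2), c i t
        ≤ ∑ _t : Fin n, 1 := Finset.sum_le_sum (fun t _ => hle t)
      _ = n := by simp
  have h2 : 2 * (n-2) ≤ ∑ i ∈ Finset.range (n-2), ∑ t, c i t := by
    calc 2 * (n-2) = ∑ _i ∈ Finset.range (n-2), 2 := by
          rw [Finset.sum_const, Finset.card_range]; ring
      _ ≤ _ := Finset.sum_le_sum htot
  omega

lemma cov1_pair {G : SimpleGraph (Fin 4)} {cv : Fin 4 → ℕ} (hcov : Cov G 1 cv)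
    {p q r s : Fin 4} (hadj : G.Adj p q)
    (h : ∀ u : Fin 4, u = p ∨ u = q ∨ u = r ∨ u = s)
    (h2 : p ≠ r) (h3 : p ≠ s) (h4 : q ≠ r) (h5 : q ≠ s) (h6 : r ≠ s) :
    1 ≤ cv r + cv s := by
  have h0 := hcov p q hadj
  rw [eSum_eq_sub (G.ne_of_adj hadj),
    sum_eq_four h (G.ne_of_adj hadj) h2 h3 h4 h5 h6] at h0
  omega

lemma sum_two_apply (c : ℕ → Fin 4 → ℕ) (t : Fin 4) :
    ∑ i ∈ Finset.range 2, c i t = c 0 t + c 1 t := by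
  rw [Finset.sum_range_succ, Finset.sum_range_one]

lemma no_CombT_triangle {G : SimpleGraph (Fin 4)} (hG : ∀ v, ∃ u, G.Adj v u)
    {x y z : Fin 4} (hxy : G.Adj x y) (hxz : G.Adj x z) (hyz : G.Adj y z) :
    ¬ (∀ m, 1 ≤ m → ∀ a, Cov G m a → Dec G m a) := by
  intro H
  obtain ⟨w, hwx, hwy, hwz, hcover⟩ :=
    exists_fourth x y z (G.ne_of_adj hxy) (G.ne_of_adj hxz) (G.ne_of_adj hyz)
  have hcov : Cov G 2 (fun _ => 1) := by
    intro i j hij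
    rw [eSum_eq_sub (G.ne_of_adj hij)]
    simp only [Finset.sum_const, Finset.card_univ, smul_eq_mul, mul_one, Fintype.card_fin]
    omega
  obtain ⟨c, hc, hle⟩ := H 2 (by omega) _ hcov
  have hp : ∀ t, c 0 t + c 1 t ≤ 1 := by
    intro t
    have h := hle t
    rw [sum_two_apply] at h
    exact h
  have hcov2 : ∀ u : Fin 4, u = x ∨ u = z ∨ u = y ∨ u = w :=
    fun u => by rcases hcover u with h|h|h|h <;> tauto
  have hcov3 : ∀ u : Fin 4, u = y ∨ u = z ∨ u = x ∨ u = w :=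
    fun u => by rcases hcover u with h|h|h|h <;> tauto
  have hcov4 : ∀ u : Fin 4, u = w ∨ u = x ∨ u = y ∨ u = z :=
    fun u => by rcases hcover u with h|h|h|h <;> tauto
  have hcov5 : ∀ u : Fin 4, u = w ∨ u = y ∨ u = x ∨ u = z :=
    fun u => by rcases hcover u with h|h|h|h <;> tauto
  have hcov6 : ∀ u : Fin 4, u = w ∨ u = z ∨ u = x ∨ u = y :=
    fun u => by rcases hcover u with h|h|h|h <;> tauto
  have key : ∀ i < 2, 1 ≤ c i z + c i w ∧ 1 ≤ c i y + c i w ∧ 1 ≤ c i x + c i w ∧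
      (1 ≤ c i y + c i z ∨ 1 ≤ c i x + c i z ∨ 1 ≤ c i x + c i y) := by
    intro i hi
    have hcv := hc i hi
    refine ⟨cov1_pair hcv hxy hcover (G.ne_of_adj hxz) hwx.symm (G.ne_of_adj hyz)
        hwy.symm hwz.symm,
      cov1_pair hcv hxz hcov2 (G.ne_of_adj hxy) hwx.symm (G.ne_of_adj hyz).symm
        hwz.symm hwy.symm,
      cov1_pair hcv hyz hcov3 (G.ne_of_adj hxy).symm hwy.symm (G.ne_of_adj hxz).symm
        hwz.symm hwx.symm, ?_⟩
    obtain ⟨u, hu⟩ := hG w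
    rcases hcover u with rfl | rfl | rfl | rfl
    · exact Or.inl (cov1_pair hcv hu hcov4 hwy hwz (G.ne_of_adj hxy)
        (G.ne_of_adj hxz) (G.ne_of_adj hyz))
    · exact Or.inr (Or.inl (cov1_pair hcv hu hcov5 hwx hwz (G.ne_of_adj hxy).symm
        (G.ne_of_adj hyz) (G.ne_of_adj hxz)))
    · exact Or.inr (Or.inr (cov1_pair hcv hu hcov6 hwx hwy (G.ne_of_adj hxz).symm
        (G.ne_of_adj hyz).symm (G.ne_of_adj hxy)))
    · exact absurd rfl (G.ne_of_adj hu)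
  have k0 := key 0 (by omega); have k1 := key 1 (by omega)
  have p1 := hp x; have p2 := hp y; have p3 := hp z; have p4 := hp w
  rcases k0.2.2.2 with h|h|h <;> rcases k1.2.2.2 with h'|h'|h' <;> omega

lemma no_CombT_star {G : SimpleGraph (Fin 4)} {v : Fin 4} (hG : ∀ w, ∃ u, G.Adj w u)
    (hstar : ∀ p q, G.Adj p q → p = v ∨ q = v) (hadj : ∀ u, u ≠ v → G.Adj v u) :
    ¬ (∀ m, 1 ≤ m → ∀ a, Cov G m a → Dec G m a) := by
  intro H
  classical
  obtain ⟨x, y, z, hxv, hyv, hzv, hxy, hxz, hyz, hcover⟩ := exists_three v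
  have hsum : ∀ c : Fin 4 → ℕ, ∑ t, c t = c v + c x + c y + c z :=
    fun c => sum_eq_four hcover hxv.symm hyv.symm hzv.symm hxy hxz hyz c
  set a : Fin 4 → ℕ := fun t => if t = v then 0 else 1 with ha
  have hav : a v = 0 := if_pos rfl
  have hax : a x = 1 := if_neg hxv
  have hay : a y = 1 := if_neg hyv
  have haz : a z = 1 := if_neg hzv
  have hcov : Cov G 2 a := by
    intro i j hij
    rw [eSum_eq_sub (G.ne_of_adj hij), hsum a]
    rcases hstar i j hij with rfl | rfl
    · have h1 : a j = 1 := if_neg (G.ne_of_adj hij).symm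
      omega
    · have h1 : a i = 1 := if_neg (G.ne_of_adj hij)
      omega
  obtain ⟨c, hc, hle⟩ := H 2 (by omega) _ hcov
  have hp : ∀ t, c 0 t + c 1 t ≤ a t := fun t => by
    have h := hle t; rwa [sum_two_apply] at h
  have hcov2 : ∀ u : Fin 4, u = v ∨ u = y ∨ u = x ∨ u = z :=
    fun u => by rcases hcover u with h|h|h|h <;> tauto
  have hcov3 : ∀ u : Fin 4, u = v ∨ u = z ∨ u = x ∨ u = y :=
    fun u => by rcases hcover u with h|h|h|h <;> tauto
  have key : ∀ i < 2, 1 ≤ c i y + c i z ∧ 1 ≤ c i x + c i z ∧ 1 ≤ c i x + c i y := by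
    intro i hi
    have hcv := hc i hi
    exact ⟨cov1_pair hcv (hadj x hxv) hcover hyv.symm hzv.symm hxy hxz hyz,
      cov1_pair hcv (hadj y hyv) hcov2 hxv.symm hzv.symm hxy.symm hyz hxz,
      cov1_pair hcv (hadj z hzv) hcov3 hxv.symm hyv.symm hxz.symm hyz.symm hxy⟩
  have k0 := key 0 (by omega); have k1 := key 1 (by omega)
  have p1 := hp x; have p2 := hp y; have p3 := hp z
  rw [hax] at p1; rw [hay] at p2; rw [haz] at p3
  omega

/-! ### Decomposition for bipartite complement structure -/

lemma bip_step (E : List (Fin 4 × Fin 4)) (col : Fin 4 → Bool)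
    (hcol : ∀ p ∈ E, col p.1 = false ∧ col p.2 = true) (M : ℕ) (hM : 1 ≤ M)
    (a : Fin 4 → ℕ) (ha : ∀ p ∈ E, M ≤ a p.1 + a p.2) :
    ∃ c : Fin 4 → ℕ, (∀ p ∈ E, 1 ≤ c p.1 + c p.2) ∧ (∀ t, c t ≤ a t) ∧
      (∀ p ∈ E, M - 1 ≤ (a p.1 - c p.1) + (a p.2 - c p.2)) := by
  classical
  set c : Fin 4 → ℕ := fun u => if col u = true then (if M ≤ a u then 1 else 0)
    else (if ∃ p ∈ E, p.1 = u ∧ a p.2 < M then 1 else 0) with hcdef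
  have hval1 : ∀ t, col t = true → M ≤ a t → c t = 1 := by
    intro t h1 h2; rw [hcdef]; simp only []; rw [if_pos h1, if_pos h2]
  have hval2 : ∀ t, col t = true → ¬ M ≤ a t → c t = 0 := by
    intro t h1 h2; rw [hcdef]; simp only []; rw [if_pos h1, if_neg h2]
  have hval3 : ∀ t, col t = false → (∃ p ∈ E, p.1 = t ∧ a p.2 < M) → c t = 1 := by
    intro t h1 h2; rw [hcdef]; simp only []
    rw [if_neg (by simp [h1]), if_pos h2]
  have hval4 : ∀ t, col t = false → ¬ (∃ p ∈ E, p.1 = t ∧ a p.2 < M) → c t = 0 := by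
    intro t h1 h2; rw [hcdef]; simp only []
    rw [if_neg (by simp [h1]), if_neg h2]
  have hclea : ∀ t, c t ≤ a t := by
    intro t
    by_cases h1 : col t = true
    · by_cases h2 : M ≤ a t
      · rw [hval1 t h1 h2]; omega
      · rw [hval2 t h1 h2]; omega
    · have h1' : col t = false := by simpa using h1
      by_cases h3 : ∃ p ∈ E, p.1 = t ∧ a p.2 < M
      · obtain ⟨p, hp, hp1, hp2⟩ := h3
        have h4 := ha p hp
        rw [hval3 t h1' ⟨p, hp, hp1, hp2⟩]
        subst hp1
        omega
      · rw [hval4 t h1' h3]; omega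
  refine ⟨c, ?_, hclea, ?_⟩
  · intro p hp
    obtain ⟨hc1, hc2⟩ := hcol p hp
    by_cases h2 : M ≤ a p.2
    · rw [hval1 _ hc2 h2]; omega
    · rw [hval3 _ hc1 ⟨p, hp, rfl, by omega⟩]; omega
  · intro p hp
    obtain ⟨hc1, hc2⟩ := hcol p hp
    have h1 := hclea p.1
    have h2 := hclea p.2
    have h3 := ha p hp
    by_cases h4 : M ≤ a p.2
    · rw [hval1 _ hc2 h4]; omega
    · rw [hval2 _ hc2 h4, hval3 _ hc1 ⟨p, hp, rfl, by omega⟩]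
      omega

def cons4 (c0 : Fin 4 → ℕ) (c : ℕ → Fin 4 → ℕ) : ℕ → Fin 4 → ℕ :=
  fun i => match i with
  | 0 => c0
  | (i' + 1) => c i'

lemma bip_decomp (E : List (Fin 4 × Fin 4)) (col : Fin 4 → Bool)
    (hcol : ∀ p ∈ E, col p.1 = false ∧ col p.2 = true) :
    ∀ m, 1 ≤ m → ∀ a : Fin 4 → ℕ, (∀ p ∈ E, m ≤ a p.1 + a p.2) →
      ∃ c : ℕ → (Fin 4 → ℕ), (∀ i < m, ∀ p ∈ E, 1 ≤ c i p.1 + c i p.2) ∧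
        ∀ t, (∑ i ∈ Finset.range m, c i t) ≤ a t := by
  intro m hm
  obtain ⟨m', rfl⟩ : ∃ m', m = m' + 1 := ⟨m - 1, by omega⟩
  clear hm
  induction m' with
  | zero =>
    intro a ha
    refine ⟨fun _ => a, fun i hi p hp => ?_, fun t => by simp⟩
    have : i = 0 := by omega
    subst this
    exact ha p hp
  | succ m' ih =>
    intro a ha
    obtain ⟨c0, hcov0, hle0, hres⟩ := bip_step E col hcol (m' + 2) (by omega) a ha
    obtain ⟨c, hc, hle⟩ := ih (fun t => a t - c0 t) (fun p hp =>
      show m' + 1 ≤ (a p.1 - c0 p.1) + (a p.2 - c0 p.2) by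
        have h1 := hres p hp; omega)
    refine ⟨cons4 c0 c, fun i hi p hp => ?_, fun t => ?_⟩
    · match i with
      | 0 => exact hcov0 p hp
      | (i' + 1) => exact hc i' (by omega) p hp
    · rw [Finset.sum_range_succ']
      rw [Finset.sum_congr rfl (fun i _ => show cons4 c0 c (i + 1) t = c i t from rfl)]
      have h1 : ∑ i ∈ Finset.range (m' + 1), c i t ≤ a t - c0 t := hle t
      have h2 := hle0 t
      have h3 : cons4 c0 c 0 t = c0 t := rfl
      omega

lemma cover_of_distinct (p q r s : Fin 4) (h1 : p ≠ q) (h2 : p ≠ r) (h3 : p ≠ s)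
    (h4 : q ≠ r) (h5 : q ≠ s) (h6 : r ≠ s) :
    ∀ u : Fin 4, u = p ∨ u = q ∨ u = r ∨ u = s := by
  revert p q r s; decide

lemma equiv_cover (f : Fin 4 ≃ Fin 4) :
    ∀ u : Fin 4, u = f 0 ∨ u = f 1 ∨ u = f 2 ∨ u = f 3 := by
  intro u
  have hu := (f.apply_symm_apply u).symm
  rcases fin4_cases (f.symm u) with h|h|h|h <;> rw [h] at hu <;> tauto

lemma equiv_sum (f : Fin 4 ≃ Fin 4) (c : Fin 4 → ℕ) :
    ∑ t, c t = c (f 0) + c (f 1) + c (f 2) + c (f 3) :=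
  sum_eq_four (equiv_cover f) (f.injective.ne (by decide)) (f.injective.ne (by decide))
    (f.injective.ne (by decide)) (f.injective.ne (by decide)) (f.injective.ne (by decide))
    (f.injective.ne (by decide)) c

lemma combT_path {G : SimpleGraph (Fin 4)} (f : Fin 4 ≃ Fin 4)
    (hf : ∀ i j : Fin 4, G.Adj (f i) (f j) ↔ (i.val + 1 = j.val ∨ j.val + 1 = i.val)) :
    ∀ m, 1 ≤ m → ∀ a, Cov G m a → Dec G m a := by
  have n01 : f 0 ≠ f 1 := f.injective.ne (by decide)
  have n02 : f 0 ≠ f 2 := f.injective.ne (by decide)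
  have n03 : f 0 ≠ f 3 := f.injective.ne (by decide)
  have n12 : f 1 ≠ f 2 := f.injective.ne (by decide)
  have n13 : f 1 ≠ f 3 := f.injective.ne (by decide)
  have n23 : f 2 ≠ f 3 := f.injective.ne (by decide)
  have a01 : G.Adj (f 0) (f 1) := (hf 0 1).mpr (by decide)
  have a12 : G.Adj (f 1) (f 2) := (hf 1 2).mpr (by decide)
  have a23 : G.Adj (f 2) (f 3) := (hf 2 3).mpr (by decide)
  intro m hm a ha
  classical
  set E : List (Fin 4 × Fin 4) := [(f 2, f 3), (f 0, f 3), (f 0, f 1)] with hE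
  set col : Fin 4 → Bool := fun v => decide (v = f 3 ∨ v = f 1) with hcol
  have hcolE : ∀ p ∈ E, col p.1 = false ∧ col p.2 = true := by
    intro p hp
    have hp' : p = (f 2, f 3) ∨ p = (f 0, f 3) ∨ p = (f 0, f 1) := by simpa [hE] using hp
    rcases hp' with rfl | rfl | rfl <;>
      exact ⟨by simp [hcol, n23, n12.symm], by simp [hcol]⟩
  have hEcon : ∀ p ∈ E, m ≤ a p.1 + a p.2 := by
    intro p hp
    have hp' : p = (f 2, f 3) ∨ p = (f 0, f 3) ∨ p = (f 0, f 1) := by simpa [hE] using hp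
    rcases hp' with rfl | rfl | rfl
    · have h := ha _ _ a01
      rw [eSum_eq_sub (G.ne_of_adj a01), equiv_sum f a] at h
      simp only []
      omega
    · have h := ha _ _ a12
      rw [eSum_eq_sub (G.ne_of_adj a12), equiv_sum f a] at h
      simp only []
      omega
    · have h := ha _ _ a23
      rw [eSum_eq_sub (G.ne_of_adj a23), equiv_sum f a] at h
      simp only []
      omega
  obtain ⟨c, hc, hle⟩ := bip_decomp E col hcolE m hm a hEcon
  refine ⟨c, fun i hi => ?_, hle⟩
  have h23 : 1 ≤ c i (f 2) + c i (f 3) := hc i hi (f 2, f 3) (by simp [hE])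
  have h03 : 1 ≤ c i (f 0) + c i (f 3) := hc i hi (f 0, f 3) (by simp [hE])
  have h01 : 1 ≤ c i (f 0) + c i (f 1) := hc i hi (f 0, f 1) (by simp [hE])
  intro u v huv
  rw [eSum_eq_sub (G.ne_of_adj huv), equiv_sum f (c i)]
  have hu := (f.apply_symm_apply u).symm
  have hv := (f.apply_symm_apply v).symm
  have hrel := (hf (f.symm u) (f.symm v)).mp (by rw [← hu, ← hv]; exact huv)
  rcases fin4_cases (f.symm u) with h|h|h|h <;> rw [h] at hu hrel <;>
    rcases fin4_cases (f.symm v) with h'|h'|h'|h' <;> rw [h'] at hv hrel <;>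
    first
      | exact absurd hrel (by decide)
      | (rw [hu, hv]; omega)

lemma combT_cycle {G : SimpleGraph (Fin 4)} (f : Fin 4 ≃ Fin 4)
    (hf : ∀ i j : Fin 4, G.Adj (f i) (f j) ↔
      ((i.val + 1) % 4 = j.val ∨ (j.val + 1) % 4 = i.val)) :
    ∀ m, 1 ≤ m → ∀ a, Cov G m a → Dec G m a := by
  have n01 : f 0 ≠ f 1 := f.injective.ne (by decide)
  have n02 : f 0 ≠ f 2 := f.injective.ne (by decide)
  have n03 : f 0 ≠ f 3 := f.injective.ne (by decide)
  have n12 : f 1 ≠ f 2 := f.injective.ne (by decide)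
  have n13 : f 1 ≠ f 3 := f.injective.ne (by decide)
  have n23 : f 2 ≠ f 3 := f.injective.ne (by decide)
  have a01 : G.Adj (f 0) (f 1) := (hf 0 1).mpr (by decide)
  have a12 : G.Adj (f 1) (f 2) := (hf 1 2).mpr (by decide)
  have a23 : G.Adj (f 2) (f 3) := (hf 2 3).mpr (by decide)
  have a30 : G.Adj (f 3) (f 0) := (hf 3 0).mpr (by decide)
  intro m hm a ha
  classical
  set E : List (Fin 4 × Fin 4) := [(f 2, f 3), (f 0, f 3), (f 0, f 1), (f 2, f 1)] with hE
  set col : Fin 4 → Bool := fun v => decide (v = f 3 ∨ v = f 1) with hcol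
  have hcolE : ∀ p ∈ E, col p.1 = false ∧ col p.2 = true := by
    intro p hp
    have hp' : p = (f 2, f 3) ∨ p = (f 0, f 3) ∨ p = (f 0, f 1) ∨ p = (f 2, f 1) := by
      simpa [hE] using hp
    rcases hp' with rfl | rfl | rfl | rfl <;>
      exact ⟨by simp [hcol, n23, n12.symm], by simp [hcol]⟩
  have hEcon : ∀ p ∈ E, m ≤ a p.1 + a p.2 := by
    intro p hp
    have hp' : p = (f 2, f 3) ∨ p = (f 0, f 3) ∨ p = (f 0, f 1) ∨ p = (f 2, f 1) := by
      simpa [hE] using hp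
    rcases hp' with rfl | rfl | rfl | rfl
    · have h := ha _ _ a01
      rw [eSum_eq_sub (G.ne_of_adj a01), equiv_sum f a] at h
      simp only []
      omega
    · have h := ha _ _ a12
      rw [eSum_eq_sub (G.ne_of_adj a12), equiv_sum f a] at h
      simp only []
      omega
    · have h := ha _ _ a23
      rw [eSum_eq_sub (G.ne_of_adj a23), equiv_sum f a] at h
      simp only []
      omega
    · have h := ha _ _ a30
      rw [eSum_eq_sub (G.ne_of_adj a30), equiv_sum f a] at h
      simp only []
      omega
  obtain ⟨c, hc, hle⟩ := bip_decomp E col hcolE m hm a hEcon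
  refine ⟨c, fun i hi => ?_, hle⟩
  have h23 : 1 ≤ c i (f 2) + c i (f 3) := hc i hi (f 2, f 3) (by simp [hE])
  have h03 : 1 ≤ c i (f 0) + c i (f 3) := hc i hi (f 0, f 3) (by simp [hE])
  have h01 : 1 ≤ c i (f 0) + c i (f 1) := hc i hi (f 0, f 1) (by simp [hE])
  have h21 : 1 ≤ c i (f 2) + c i (f 1) := hc i hi (f 2, f 1) (by simp [hE])
  intro u v huv
  rw [eSum_eq_sub (G.ne_of_adj huv), equiv_sum f (c i)]
  have hu := (f.apply_symm_apply u).symm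
  have hv := (f.apply_symm_apply v).symm
  have hrel := (hf (f.symm u) (f.symm v)).mp (by rw [← hu, ← hv]; exact huv)
  rcases fin4_cases (f.symm u) with h|h|h|h <;> rw [h] at hu hrel <;>
    rcases fin4_cases (f.symm v) with h'|h'|h'|h' <;> rw [h'] at hv hrel <;>
    first
      | exact absurd hrel (by decide)
      | (rw [hu, hv]; omega)

lemma combT_tde {G : SimpleGraph (Fin 4)} {p q r s : Fin 4}
    (h1 : p ≠ q) (h2 : p ≠ r) (h3 : p ≠ s) (h4 : q ≠ r) (h5 : q ≠ s) (h6 : r ≠ s)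
    (hiff : ∀ u v : Fin 4, G.Adj u v ↔
      ((u = p ∧ v = q) ∨ (u = q ∧ v = p) ∨ (u = r ∧ v = s) ∨ (u = s ∧ v = r))) :
    ∀ m, 1 ≤ m → ∀ a, Cov G m a → Dec G m a := by
  have hcover := cover_of_distinct p q r s h1 h2 h3 h4 h5 h6
  have hsum : ∀ c : Fin 4 → ℕ, ∑ t, c t = c p + c q + c r + c s :=
    fun c => sum_eq_four hcover h1 h2 h3 h4 h5 h6 c
  have apq : G.Adj p q := (hiff p q).mpr (by tauto)
  have ars : G.Adj r s := (hiff r s).mpr (by tauto)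
  intro m hm a ha
  classical
  set E : List (Fin 4 × Fin 4) := [(r, s), (p, q)] with hE
  set col : Fin 4 → Bool := fun v => decide (v = q ∨ v = s) with hcol
  have hcolE : ∀ x ∈ E, col x.1 = false ∧ col x.2 = true := by
    intro x hx
    have hx' : x = (r, s) ∨ x = (p, q) := by simpa [hE] using hx
    rcases hx' with rfl | rfl
    · exact ⟨by simp [hcol, h4.symm, h6], by simp [hcol]⟩
    · exact ⟨by simp [hcol, h1, h3], by simp [hcol]⟩
  have hEcon : ∀ x ∈ E, m ≤ a x.1 + a x.2 := by
    intro x hx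
    have hx' : x = (r, s) ∨ x = (p, q) := by simpa [hE] using hx
    rcases hx' with rfl | rfl
    · have h := ha _ _ apq
      rw [eSum_eq_sub (G.ne_of_adj apq), hsum a] at h
      simp only []
      omega
    · have h := ha _ _ ars
      rw [eSum_eq_sub (G.ne_of_adj ars), hsum a] at h
      simp only []
      omega
  obtain ⟨c, hc, hle⟩ := bip_decomp E col hcolE m hm a hEcon
  refine ⟨c, fun i hi => ?_, hle⟩
  have hrs : 1 ≤ c i r + c i s := hc i hi (r, s) (by simp [hE])
  have hpq : 1 ≤ c i p + c i q := hc i hi (p, q) (by simp [hE])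
  intro u v huv
  rw [eSum_eq_sub (G.ne_of_adj huv), hsum (c i)]
  rcases (hiff u v).mp huv with ⟨rfl, rfl⟩ | ⟨rfl, rfl⟩ | ⟨rfl, rfl⟩ | ⟨rfl, rfl⟩ <;> omega

/-! ### Classification of graphs on 4 vertices -/

def mkAdj (e01 e02 e03 e12 e13 e23 : Bool) : Fin 4 → Fin 4 → Bool :=
  ![![false, e01, e02, e03], ![e01, false, e12, e13],
    ![e02, e12, false, e23], ![e03, e13, e23, false]]

def PATHB (b : Fin 4 → Fin 4 → Bool) : Prop :=
  ∃ f : Fin 4 ≃ Fin 4, ∀ i j : Fin 4,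
    b (f i) (f j) = true ↔ (i.val + 1 = j.val ∨ j.val + 1 = i.val)

def CYCLEB (b : Fin 4 → Fin 4 → Bool) : Prop :=
  ∃ f : Fin 4 ≃ Fin 4, ∀ i j : Fin 4,
    b (f i) (f j) = true ↔ ((i.val + 1) % 4 = j.val ∨ (j.val + 1) % 4 = i.val)

def TDEB (b : Fin 4 → Fin 4 → Bool) : Prop :=
  ∃ p q r s : Fin 4, p ≠ q ∧ p ≠ r ∧ p ≠ s ∧ q ≠ r ∧ q ≠ s ∧ r ≠ s ∧
    ∀ u v : Fin 4, b u v = true ↔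
      ((u = p ∧ v = q) ∨ (u = q ∧ v = p) ∨ (u = r ∧ v = s) ∨ (u = s ∧ v = r))

def TRIB (b : Fin 4 → Fin 4 → Bool) : Prop :=
  ∃ x y z : Fin 4, x ≠ y ∧ x ≠ z ∧ y ≠ z ∧ b x y = true ∧ b x z = true ∧ b y z = true

def STARB (b : Fin 4 → Fin 4 → Bool) : Prop :=
  ∃ v : Fin 4, (∀ p q, b p q = true → p = v ∨ q = v) ∧ (∀ u, u ≠ v → b v u = true)

instance (b) : Decidable (PATHB b) := by unfold PATHB; infer_instance
instance (b) : Decidable (CYCLEB b) := by unfold CYCLEB; infer_instance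
instance (b) : Decidable (TDEB b) := by unfold TDEB; infer_instance
instance (b) : Decidable (TRIB b) := by unfold TRIB; infer_instance
instance (b) : Decidable (STARB b) := by unfold STARB; infer_instance

set_option maxRecDepth 100000 in
set_option maxHeartbeats 4000000 in
lemma classifyB : ∀ e01 e02 e03 e12 e13 e23 : Bool,
    (∀ v : Fin 4, ∃ u, mkAdj e01 e02 e03 e12 e13 e23 v u = true) →
    TRIB (mkAdj e01 e02 e03 e12 e13 e23) ∨ STARB (mkAdj e01 e02 e03 e12 e13 e23) ∨
    PATHB (mkAdj e01 e02 e03 e12 e13 e23) ∨ CYCLEB (mkAdj e01 e02 e03 e12 e13 e23) ∨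
    TDEB (mkAdj e01 e02 e03 e12 e13 e23) := by decide

end Stmt9


/-- Let `n ≥ 4`. Then `I_G^{(m)} = I_G^m` holds for all `m ≥ 1` (equivalently, the
vertex cover algebra / symbolic Rees algebra of `I_G` is standard graded) if and only
if `n = 4` and `G` is a path, or a cycle, or the union of two disjoint edges. -/
theorem stmt_9 (k : Type) [Field k] (n : ℕ) (hn : 4 ≤ n)
    (G : SimpleGraph (Fin n)) (hG : ∀ v : Fin n, ∃ u : Fin n, G.Adj v u) :
    (∀ m : ℕ, 1 ≤ m → symbolicPower k G m = (symbolicPower k G 1) ^ m) ↔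
      n = 4 ∧ (IsPathGraph G ∨ IsCycleGraph G ∨ IsTwoDisjointEdges G) := by

  rw [Stmt9.main_equiv G]
  constructor
  · intro H
    have hn4 : n = 4 := by
      by_contra h
      exact Stmt9.no_CombT_of_ge5 (by omega) hG H
    subst hn4
    refine ⟨rfl, ?_⟩
    obtain ⟨e01, h01⟩ : ∃ t : Bool, (G.Adj 0 1 ↔ t = true) := by
      by_cases h : G.Adj 0 1
      exacts [⟨true, by simp [h]⟩, ⟨false, by simp [h]⟩]
    obtain ⟨e02, h02⟩ : ∃ t : Bool, (G.Adj 0 2 ↔ t = true) := by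
      by_cases h : G.Adj 0 2
      exacts [⟨true, by simp [h]⟩, ⟨false, by simp [h]⟩]
    obtain ⟨e03, h03⟩ : ∃ t : Bool, (G.Adj 0 3 ↔ t = true) := by
      by_cases h : G.Adj 0 3
      exacts [⟨true, by simp [h]⟩, ⟨false, by simp [h]⟩]
    obtain ⟨e12, h12⟩ : ∃ t : Bool, (G.Adj 1 2 ↔ t = true) := by
      by_cases h : G.Adj 1 2
      exacts [⟨true, by simp [h]⟩, ⟨false, by simp [h]⟩]
    obtain ⟨e13, h13⟩ : ∃ t : Bool, (G.Adj 1 3 ↔ t = true) := by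
      by_cases h : G.Adj 1 3
      exacts [⟨true, by simp [h]⟩, ⟨false, by simp [h]⟩]
    obtain ⟨e23, h23⟩ : ∃ t : Bool, (G.Adj 2 3 ↔ t = true) := by
      by_cases h : G.Adj 2 3
      exacts [⟨true, by simp [h]⟩, ⟨false, by simp [h]⟩]
    have hb : ∀ i j : Fin 4, G.Adj i j ↔ Stmt9.mkAdj e01 e02 e03 e12 e13 e23 i j = true := by
      intro i j
      fin_cases i <;> fin_cases j <;>
        simp only [Stmt9.mkAdj, Matrix.cons_val_zero, Matrix.cons_val_one, Matrix.head_cons,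
          Matrix.cons_val_two, Matrix.tail_cons, Matrix.cons_val_three, Fin.isValue] <;>
        first
          | exact h01 | exact h02 | exact h03 | exact h12 | exact h13 | exact h23
          | exact (G.adj_comm _ _).trans h01 | exact (G.adj_comm _ _).trans h02
          | exact (G.adj_comm _ _).trans h03 | exact (G.adj_comm _ _).trans h12
          | exact (G.adj_comm _ _).trans h13 | exact (G.adj_comm _ _).trans h23
          | simp [SimpleGraph.irrefl]
    have hGb : ∀ v : Fin 4, ∃ u, Stmt9.mkAdj e01 e02 e03 e12 e13 e23 v u = true :=
      fun v => (hG v).imp (fun u hu => (hb v u).mp hu)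
    rcases Stmt9.classifyB e01 e02 e03 e12 e13 e23 hGb with htri | hstar | hpath | hcyc | htde
    · exfalso
      obtain ⟨x, y, z, hxy, hxz, hyz, b1, b2, b3⟩ := htri
      exact Stmt9.no_CombT_triangle hG ((hb x y).mpr b1) ((hb x z).mpr b2)
        ((hb y z).mpr b3) H
    · exfalso
      obtain ⟨v, hS1, hS2⟩ := hstar
      exact Stmt9.no_CombT_star hG (fun p q hpq => hS1 p q ((hb p q).mp hpq))
        (fun u hu => (hb v u).mpr (hS2 u hu)) H
    · left
      obtain ⟨f, hf⟩ := hpath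
      exact ⟨f, fun i j => (hb _ _).trans (hf i j)⟩
    · right; left
      obtain ⟨f, hf⟩ := hcyc
      exact ⟨f, fun i j => (hb _ _).trans (hf i j)⟩
    · right; right
      obtain ⟨p, q, r, s, d1, d2, d3, d4, d5, d6, hf⟩ := htde
      exact ⟨rfl, p, q, r, s, d1, d2, d3, d4, d5, d6,
        fun u v => (hb _ _).trans (hf u v)⟩
  · rintro ⟨hn4, hcase⟩
    subst hn4
    rcases hcase with ⟨f, hf⟩ | ⟨f, hf⟩ | ⟨-, p, q, r, s, d1, d2, d3, d4, d5, d6, hf⟩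
    · exact Stmt9.combT_path f hf
    · exact Stmt9.combT_cycle f hf
    · exact Stmt9.combT_tde d1 d2 d3 d4 d5 d6 hf
end

section
/- Let I be a monomial ideal of S = k[x_1,…,x_n] and let a ∈ ℤ^n. Then Δ_a(I) is a subcomplex of Δ(I), i.e. every face of Δ_a(I) is a face of Δ(I). -/
open MvPolynomial

/-- `I` is a monomial ideal: it is generated by a set of monomials `x^b`. -/
def IsMonomialIdeal (k : Type) [Field k] {n : ℕ} (I : Ideal (MvPolynomial (Fin n) k)) :
    Prop :=
  ∃ B : Set (Fin n →₀ ℕ),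
    I = Ideal.span ((fun b => (monomial b (1 : k) : MvPolynomial (Fin n) k)) '' B)

/-- `x^b` is a minimal monomial generator of the monomial ideal `I`: `x^b ∈ I` and no
proper monomial divisor of `x^b` lies in `I`. -/
def IsMinimalGenerator (k : Type) [Field k] {n : ℕ}
    (I : Ideal (MvPolynomial (Fin n) k)) (b : Fin n →₀ ℕ) : Prop :=
  (monomial b (1 : k) : MvPolynomial (Fin n) k) ∈ I ∧
    ∀ c : Fin n →₀ ℕ, c ≤ b → (monomial c (1 : k) : MvPolynomial (Fin n) k) ∈ I → c = b

/-- The simplicial complex `Δ(I)` of all `F` with `∏_{i ∈ F} x_i ∉ √I`. -/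
def deltaOf (k : Type) [Field k] {n : ℕ} (I : Ideal (MvPolynomial (Fin n) k)) :
    Set (Finset (Fin n)) :=
  { F | (∏ i ∈ F, X i : MvPolynomial (Fin n) k) ∉ I.radical }

/-- For `a ∈ ℤ^n`, the simplicial complex `Δ_a(I)`: all `F` with `F ∩ G_a = ∅` (where
`G_a = {i : a_i < 0}`) such that for every minimal monomial generator `x^b` of `I`
there is an index `i ∉ F ∪ G_a` with `b_i > a_i`. -/
def deltaAInt (k : Type) [Field k] {n : ℕ} (I : Ideal (MvPolynomial (Fin n) k))
    (a : Fin n → ℤ) : Set (Finset (Fin n)) :=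
  { F | (∀ i ∈ F, 0 ≤ a i) ∧
    ∀ b : Fin n →₀ ℕ, IsMinimalGenerator k I b →
      ∃ i : Fin n, i ∉ F ∧ 0 ≤ a i ∧ a i < (b i : ℤ) }

lemma exists_minGen (k : Type) [Field k] {n : ℕ} (I : Ideal (MvPolynomial (Fin n) k))
    (c : Fin n →₀ ℕ) (hc : (monomial c (1:k) : MvPolynomial (Fin n) k) ∈ I) :
    ∃ b, ((monomial b (1 : k) : MvPolynomial (Fin n) k) ∈ I ∧
      ∀ c' : Fin n →₀ ℕ, c' ≤ b → (monomial c' (1 : k) : MvPolynomial (Fin n) k) ∈ I → c' = b)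
      ∧ b ≤ c := by
  suffices H : ∀ N (c : Fin n →₀ ℕ), (∑ i, c i) = N →
      (monomial c (1:k) : MvPolynomial (Fin n) k) ∈ I →
      ∃ b, ((monomial b (1 : k) : MvPolynomial (Fin n) k) ∈ I ∧
        ∀ c' : Fin n →₀ ℕ, c' ≤ b → (monomial c' (1 : k) : MvPolynomial (Fin n) k) ∈ I → c' = b)
        ∧ b ≤ c from H _ c rfl hc
  intro N
  induction N using Nat.strong_induction_on with
  | _ N ih =>
    intro c hd hc
    by_cases h : ∀ c', c' ≤ c → (monomial c' (1:k) : MvPolynomial (Fin n) k) ∈ I → c' = c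
    · exact ⟨c, ⟨hc, h⟩, le_refl c⟩
    · push_neg at h
      obtain ⟨c', hle, hmem, hne⟩ := h
      have hle' : ∀ i, c' i ≤ c i := fun i => Finsupp.le_def.mp hle i
      have hlt : (∑ i, c' i) < N := by
        subst hd
        refine Finset.sum_lt_sum (fun i _ => hle' i) ?_
        by_contra hall; push_neg at hall
        exact hne (Finsupp.ext fun i => le_antisymm (hle' i)
          (hall i (Finset.mem_univ i)))
      obtain ⟨b, hb, hbc⟩ := ih _ hlt c' rfl hmem
      exact ⟨b, hb, hbc.trans hle⟩

lemma prod_X_eq (k : Type) [Field k] {n : ℕ} (F : Finset (Fin n)) :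
    (∏ i ∈ F, X i : MvPolynomial (Fin n) k)
      = monomial (∑ i ∈ F, Finsupp.single i 1) (1:k) := by
  induction F using Finset.induction with
  | empty => simp [monomial_eq]
  | insert _ _ hx ih =>
    rw [Finset.prod_insert hx, Finset.sum_insert hx, ih, X, monomial_mul, one_mul]

/-- For a monomial ideal `I` and `a ∈ ℤ^n`, every face of `Δ_a(I)` is a face of
`Δ(I)`. -/
theorem stmt_12 (k : Type) [Field k] (n : ℕ)
    (I : Ideal (MvPolynomial (Fin n) k)) (hI : IsMonomialIdeal k I)
    (a : Fin n → ℤ) :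
    ∀ F : Finset (Fin n), F ∈ deltaAInt k I a → F ∈ deltaOf k I := by
  intro F hF hrad
  obtain ⟨hFa, hFmin⟩ := hF
  rw [prod_X_eq] at hrad
  obtain ⟨m, hm⟩ := hrad
  rw [monomial_pow, one_pow] at hm
  obtain ⟨b, hb, hbc⟩ := exists_minGen k I _ hm
  obtain ⟨i, hiF, hai, habi⟩ := hFmin b hb
  have hci : (m • ∑ j ∈ F, Finsupp.single j (1:ℕ)) i = 0 := by
    simp [Finsupp.single_apply, Finset.sum_apply']
    intro hiF'; exact absurd hiF' hiF
  have : b i = 0 := Nat.le_zero.mp (hci ▸ Finsupp.le_def.mp hbc i)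
  rw [this] at habi
  exact absurd hai (not_le.mpr (by exact_mod_cast habi))
end

section
/- Let I be a monomial ideal of S = k[x_1,…,x_n] without embedded associated prime ideals (i.e. every associated prime of S/I is a minimal prime of I), and let a ∈ ℕ^n. Then every facet of Δ_a(I) is a facet of Δ(I). -/
open MvPolynomial

namespace Stmt13Aux

variable {k : Type} [Field k] {n : ℕ}

/-- The algebra map killing the variables outside `F`. -/
noncomputable def kill (k : Type) [Field k] {n : ℕ} (F : Finset (Fin n)) :
    MvPolynomial (Fin n) k →ₐ[k] MvPolynomial (Fin n) k :=
  aeval fun i => if i ∈ F then X i else 0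

lemma kill_monomial (F : Finset (Fin n)) (d : Fin n →₀ ℕ) (c : k) :
    kill k F (monomial d c) =
      if ∀ i, d i ≠ 0 → i ∈ F then monomial d c else 0 := by
  rw [kill, aeval_monomial]
  split_ifs with h
  · rw [monomial_eq]
    congr 1
    apply Finsupp.prod_congr
    intro i hi
    rw [if_pos (h i (Finsupp.mem_support_iff.mp hi))]
  · push_neg at h
    obtain ⟨i, hi0, hiF⟩ := h
    refine mul_eq_zero_of_right _ ?_
    rw [Finsupp.prod]
    refine Finset.prod_eq_zero (Finsupp.mem_support_iff.mpr hi0) ?_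
    rw [if_neg hiF, zero_pow hi0]

lemma coeff_kill (F : Finset (Fin n)) (m : Fin n →₀ ℕ) (hm : ∀ i, m i ≠ 0 → i ∈ F)
    (p : MvPolynomial (Fin n) k) : coeff m (kill k F p) = coeff m p := by
  induction p using MvPolynomial.induction_on' with
  | monomial d c =>
    rw [kill_monomial]
    split_ifs with h
    · rfl
    · rw [coeff_zero, coeff_monomial, if_neg]
      rintro rfl
      exact h hm
  | add p q hp hq => rw [map_add, coeff_add, coeff_add, hp, hq]

/-- The monomial prime corresponding to the complement of `F`. -/
noncomputable def PF (k : Type) [Field k] {n : ℕ} (F : Finset (Fin n)) : Ideal (MvPolynomial (Fin n) k) :=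
  Ideal.span (X '' {i | i ∉ F})

lemma PF_eq_ker (F : Finset (Fin n)) :
    PF k F = RingHom.ker (kill k F).toRingHom := by
  apply le_antisymm
  · rw [PF, Ideal.span_le]
    rintro _ ⟨i, hi, rfl⟩
    simp only [SetLike.mem_coe, RingHom.mem_ker, AlgHom.toRingHom_eq_coe, RingHom.coe_coe]
    rw [kill, aeval_X, if_neg hi]
  · intro p hp
    rw [PF, mem_ideal_span_X_image]
    intro m hmsup
    by_contra hcon
    push_neg at hcon
    have hm : ∀ i, m i ≠ 0 → i ∈ F := by
      intro i hi
      by_contra hiF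
      exact hi (hcon i hiF)
    have h0 : kill k F p = 0 := hp
    have := coeff_kill F m hm p
    rw [h0, coeff_zero] at this
    exact (MvPolynomial.mem_support_iff.mp hmsup) this.symm

lemma PF_prime (F : Finset (Fin n)) : (PF k F).IsPrime := by
  rw [PF_eq_ker]; exact RingHom.ker_isPrime _

lemma X_mem_PF {F : Finset (Fin n)} {j : Fin n} (hj : j ∉ F) :
    (X j : MvPolynomial (Fin n) k) ∈ PF k F :=
  Ideal.subset_span ⟨j, hj, rfl⟩

lemma X_not_mem_PF {F : Finset (Fin n)} {j : Fin n} (hj : j ∈ F) :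
    (X j : MvPolynomial (Fin n) k) ∉ PF k F := by
  rw [PF_eq_ker]
  intro h
  have h0 : kill k F (X j) = 0 := h
  rw [kill, aeval_X, if_pos hj] at h0
  exact MvPolynomial.X_ne_zero j h0

lemma PF_mono {F F' : Finset (Fin n)} (h : F ⊆ F') : PF k F' ≤ PF k F := by
  apply Ideal.span_mono
  apply Set.image_mono
  intro i hi hiF
  exact hi (h hiF)

lemma prod_monomial (G : Finset (Fin n)) (g : Fin n → (Fin n →₀ ℕ)) :
    (∏ i ∈ G, (monomial (g i) (1 : k))) = monomial (∑ i ∈ G, g i) 1 := by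
  classical
  induction G using Finset.induction with
  | empty => simp
  | insert x s hx ih =>
    rw [Finset.prod_insert hx, Finset.sum_insert hx, ih, monomial_mul, one_mul]

lemma prod_X_pow (G : Finset (Fin n)) (N : ℕ) :
    ((∏ i ∈ G, X i) ^ N : MvPolynomial (Fin n) k) =
      monomial (∑ i ∈ G, Finsupp.single i N) 1 := by
  rw [← Finset.prod_pow, ← prod_monomial]
  exact Finset.prod_congr rfl fun i _ => X_pow_eq_monomial

lemma sum_single_apply (G : Finset (Fin n)) (N : ℕ) (i : Fin n) :
    (∑ j ∈ G, Finsupp.single j N) i = if i ∈ G then N else 0 := by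
  classical
  rw [Finset.sum_apply']
  simp_rw [Finsupp.single_apply]
  exact Finset.sum_ite_eq' G i fun _ => N

end Stmt13Aux


/-- For `a ∈ ℕ^n`, the simplicial complex `Δ_a(I)` of all `F ⊆ {1,…,n}` such that for
every minimal monomial generator `x^b` of `I` there is an index `i ∉ F` with `b_i > a_i`. -/
def deltaA (k : Type) [Field k] {n : ℕ} (I : Ideal (MvPolynomial (Fin n) k))
    (a : Fin n → ℕ) : Set (Finset (Fin n)) :=
  { F | ∀ b : Fin n →₀ ℕ, IsMinimalGenerator k I b → ∃ i : Fin n, i ∉ F ∧ a i < b i }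

/-- If the monomial ideal `I` has no embedded associated primes (every associated
prime of `S/I` is a minimal prime of `I`) and `a ∈ ℕ^n`, then every facet of `Δ_a(I)`
is a facet of `Δ(I)`. -/
theorem stmt_13 (k : Type) [Field k] (n : ℕ)
    (I : Ideal (MvPolynomial (Fin n) k)) (hI : IsMonomialIdeal k I)
    (hunmixed : ∀ p ∈ associatedPrimes (MvPolynomial (Fin n) k)
        (MvPolynomial (Fin n) k ⧸ I), p ∈ I.minimalPrimes)
    (a : Fin n → ℕ) :
    ∀ F : Finset (Fin n),
      F ∈ deltaA k I a → (∀ F' ∈ deltaA k I a, F ⊆ F' → F = F') →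
      F ∈ deltaOf k I ∧ ∀ F' ∈ deltaOf k I, F ⊆ F' → F = F' := by
    classical
  obtain ⟨B, hB⟩ := hI
  intro F hF hFmax
  have hmem : ∀ d : Fin n →₀ ℕ,
      (monomial d (1 : k) : MvPolynomial (Fin n) k) ∈ I ↔ ∃ b ∈ B, b ≤ d := by
    intro d
    rw [hB, mem_ideal_span_monomial_image]
    constructor
    · intro h
      refine h d ?_
      simp [support_monomial]
    · rintro ⟨b, hb, hbd⟩ m hm
      simp [support_monomial] at hm
      subst hm
      exact ⟨b, hb, hbd⟩
  have hdvd : ∀ b d : Fin n →₀ ℕ, b ≤ d →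
      (monomial b (1 : k) : MvPolynomial (Fin n) k) ∈ I →
      (monomial d (1 : k) : MvPolynomial (Fin n) k) ∈ I := by
    intro b d hbd hbI
    have heq : (monomial d (1 : k) : MvPolynomial (Fin n) k)
        = monomial (d - b) 1 * monomial b 1 := by
      rw [monomial_mul, one_mul, tsub_add_cancel_of_le hbd]
    rw [heq]
    exact I.mul_mem_left _ hbI
  have hminex : ∀ d : Fin n →₀ ℕ,
      (monomial d (1 : k) : MvPolynomial (Fin n) k) ∈ I →
      ∃ c, c ≤ d ∧ IsMinimalGenerator k I c := by
    intro d hd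
    obtain ⟨c, ⟨hcd, hcI⟩, hmin⟩ := (wellFounded_lt (α := Fin n →₀ ℕ)).has_min
      {c | c ≤ d ∧ (monomial c (1 : k) : MvPolynomial (Fin n) k) ∈ I} ⟨d, le_rfl, hd⟩
    refine ⟨c, hcd, hcI, ?_⟩
    intro c' hc' hc'I
    by_contra hne
    exact hmin c' ⟨hc'.trans hcd, hc'I⟩ (lt_of_le_of_ne hc' hne)
  have hBF : ∀ b ∈ B, ∃ i, i ∉ F ∧ b i ≠ 0 := by
    intro b hb
    obtain ⟨c, hcb, hc⟩ := hminex b ((hmem b).mpr ⟨b, hb, le_rfl⟩)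
    obtain ⟨i, hiF, hai⟩ := hF c hc
    refine ⟨i, hiF, ?_⟩
    have := Finsupp.le_def.mp hcb i
    omega
  have hIPF : I ≤ Stmt13Aux.PF k F := by
    rw [hB, Ideal.span_le]
    rintro _ ⟨b, hb, rfl⟩
    rw [SetLike.mem_coe, Stmt13Aux.PF, mem_ideal_span_X_image]
    intro m hm
    have hm' : m = b := by
      rw [support_monomial, if_neg one_ne_zero] at hm
      exact Finset.mem_singleton.mp hm
    rw [hm']
    obtain ⟨i, hiF, hbi⟩ := hBF b hb
    exact ⟨i, hiF, hbi⟩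
  have hFdelta : F ∈ deltaOf k I := by
    simp only [deltaOf, Set.mem_setOf_eq]
    intro hrad
    obtain ⟨N, hN⟩ := Ideal.mem_radical_iff.mp hrad
    rw [Stmt13Aux.prod_X_pow] at hN
    obtain ⟨b, hb, hbd⟩ := (hmem _).mp hN
    obtain ⟨i, hiF, hbi⟩ := hBF b hb
    have h1 := Finsupp.le_def.mp hbd i
    rw [Stmt13Aux.sum_single_apply, if_neg hiF] at h1
    omega
  have key : ∀ j : Fin n, j ∉ F → ∃ b : Fin n →₀ ℕ, IsMinimalGenerator k I b ∧
      a j < b j ∧ ∀ i, i ∉ F → i ≠ j → b i ≤ a i := by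
    intro j hj
    have hnot : insert j F ∉ deltaA k I a := by
      intro hmem'
      have heq := hFmax _ hmem' (F.subset_insert j)
      rw [heq] at hj
      exact hj (F.mem_insert_self j)
    simp only [deltaA, Set.mem_setOf_eq] at hnot
    push_neg at hnot
    obtain ⟨b, hbgen, hball⟩ := hnot
    refine ⟨b, hbgen, ?_, ?_⟩
    · obtain ⟨i, hiF, hai⟩ := hF b hbgen
      rcases eq_or_ne i j with rfl | hne
      · exact hai
      · exfalso
        have := hball i (by simp [Finset.mem_insert, hne, hiF])
        omega
    · intro i hiF hne
      exact hball i (by simp [Finset.mem_insert, hne, hiF])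
  choose! bb hbbgen hbbj hbble using key
  set M : ℕ := ∑ j : Fin n, ∑ i : Fin n, bb j i with hM
  have hMle : ∀ j i : Fin n, bb j i ≤ M := by
    intro j i
    calc bb j i ≤ ∑ i : Fin n, bb j i :=
          Finset.single_le_sum (fun _ _ => Nat.zero_le _) (Finset.mem_univ i)
    _ ≤ M := Finset.single_le_sum (f := fun j => ∑ i : Fin n, bb j i)
          (fun _ _ => Nat.zero_le _) (Finset.mem_univ j)
  set c : Fin n →₀ ℕ := Finsupp.equivFunOnFinite.symm (fun i => if i ∈ F then M else a i)
    with hcdef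
  have hcapp : ∀ i, c i = if i ∈ F then M else a i := fun i => rfl
  have hcnot : (monomial c (1 : k) : MvPolynomial (Fin n) k) ∉ I := by
    intro hcI
    obtain ⟨c', hc'le, hc'gen⟩ := hminex c hcI
    obtain ⟨i, hiF, hai⟩ := hF c' hc'gen
    have h1 := Finsupp.le_def.mp hc'le i
    rw [hcapp i, if_neg hiF] at h1
    omega
  have hx : (Ideal.Quotient.mk I (monomial c 1) : MvPolynomial (Fin n) k ⧸ I) ≠ 0 := by
    rw [Ne, Ideal.Quotient.eq_zero_iff_mem]
    exact hcnot
  obtain ⟨Q, hQass, hannQ⟩ := exists_le_isAssociatedPrime_of_isNoetherianRing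
    (MvPolynomial (Fin n) k) _ hx
  have hQmin : Q ∈ I.minimalPrimes := hunmixed Q hQass
  have hQprime : Q.IsPrime := hQass.1
  have hPFQ : Stmt13Aux.PF k F ≤ Q := by
    rw [Stmt13Aux.PF, Ideal.span_le]
    rintro _ ⟨j, hj, rfl⟩
    have hjF : j ∉ F := hj
    have hmul : (X j : MvPolynomial (Fin n) k) ^ (bb j j) * monomial c 1 ∈ I := by
      rw [X_pow_eq_monomial, monomial_mul, one_mul]
      refine hdvd (bb j) _ ?_ (hbbgen j hjF).1
      rw [Finsupp.le_def]
      intro i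
      rw [Finsupp.add_apply, Finsupp.single_apply, hcapp i]
      by_cases hiF : i ∈ F
      · have := hMle j i
        simp only [if_pos hiF]
        omega
      · rcases eq_or_ne i j with rfl | hne
        · simp [hiF]
        · have := hbble j hjF i hiF hne
          simp only [if_neg hiF, if_neg (Ne.symm hne)]
          omega
    have hpow : (X j : MvPolynomial (Fin n) k) ^ (bb j j) ∈ Q := by
      apply hannQ
      rw [Submodule.mem_colon_singleton, Submodule.mem_bot]
      have hsm : (X j ^ (bb j) j : MvPolynomial (Fin n) k) •
            (Ideal.Quotient.mk I) ((monomial c) 1)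
          = Ideal.Quotient.mk I (X j ^ (bb j) j * monomial c 1) := rfl
      rw [hsm, Ideal.Quotient.eq_zero_iff_mem]
      exact hmul
    exact hQprime.mem_of_pow_mem _ hpow
  have hPFeqQ : Stmt13Aux.PF k F = Q :=
    le_antisymm hPFQ (hQmin.2 ⟨Stmt13Aux.PF_prime F, hIPF⟩ hPFQ)
  refine ⟨hFdelta, ?_⟩
  intro F' hF' hFF'
  refine Finset.Subset.antisymm hFF' ?_
  intro j hjF'
  by_contra hjF
  have hIPF' : I ≤ Stmt13Aux.PF k F' := by
    rw [hB, Ideal.span_le]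
    rintro _ ⟨b, hb, rfl⟩
    rw [SetLike.mem_coe, Stmt13Aux.PF, mem_ideal_span_X_image]
    intro m hm
    have hm' : m = b := by
      rw [support_monomial, if_neg one_ne_zero] at hm
      exact Finset.mem_singleton.mp hm
    rw [hm']
    by_contra hno
    push_neg at hno
    simp only [Set.mem_setOf_eq] at hno
    apply hF'
    rw [Ideal.mem_radical_iff]
    refine ⟨∑ i : Fin n, b i, ?_⟩
    rw [Stmt13Aux.prod_X_pow]
    refine hdvd b _ ?_ ((hmem b).mpr ⟨b, hb, le_rfl⟩)
    rw [Finsupp.le_def]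
    intro i
    rw [Stmt13Aux.sum_single_apply]
    by_cases hiF' : i ∈ F'
    · rw [if_pos hiF']
      exact Finset.single_le_sum (fun _ _ => Nat.zero_le _) (Finset.mem_univ i)
    · rw [if_neg hiF']
      have := hno i hiF'
      omega
  have hQ'le : Stmt13Aux.PF k F' ≤ Stmt13Aux.PF k F := Stmt13Aux.PF_mono hFF'
  have hQ'leQ : Stmt13Aux.PF k F' ≤ Q := hPFeqQ ▸ hQ'le
  have hQle' : Q ≤ Stmt13Aux.PF k F' := hQmin.2 ⟨Stmt13Aux.PF_prime F', hIPF'⟩ hQ'leQ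
  have hXj : (X j : MvPolynomial (Fin n) k) ∈ Stmt13Aux.PF k F' := by
    apply hQle'
    rw [← hPFeqQ]
    exact Stmt13Aux.X_mem_PF hjF
  exact Stmt13Aux.X_not_mem_PF hjF' hXj
end

section
/- Let n ≥ 4. If G contains a triangle, i.e. three vertices that are pairwise adjacent in G, then I_G^{(m)} ≠ I_G^m for every m ≥ 2. -/
open MvPolynomial

namespace SP14

variable {k : Type} [Field k] {n : ℕ}

/-- weighted degree of an exponent vector -/
def wt (c : Fin n → ℕ) (v : Fin n →₀ ℕ) : ℕ := ∑ t, c t * v t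

lemma wt_add (c : Fin n → ℕ) (u v : Fin n →₀ ℕ) : wt c (u + v) = wt c u + wt c v := by
  simp [wt, mul_add, Finset.sum_add_distrib]

lemma wt_single (c : Fin n → ℕ) (t : Fin n) (e : ℕ) : wt c (Finsupp.single t e) = c t * e := by
  simp [wt, Finsupp.single_apply, mul_ite]

lemma sum_le_wt (c : Fin n → ℕ) (v : Fin n →₀ ℕ) (s : Finset (Fin n)) :
    ∑ t ∈ s, c t * v t ≤ wt c v :=
  Finset.sum_le_sum_of_subset (Finset.subset_univ s)

/-- the ideal of polynomials all of whose monomials have weight ≥ N -/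
def wtIdeal (k : Type) [Field k] {n : ℕ} (c : Fin n → ℕ) (N : ℕ) :
    Ideal (MvPolynomial (Fin n) k) where
  carrier := {f | ∀ v ∈ f.support, N ≤ wt c v}
  zero_mem' := by simp
  add_mem' := by
    intro f g hf hg v hv
    rcases Finset.mem_union.mp (Finsupp.support_add hv) with h | h
    · exact hf v h
    · exact hg v h
  smul_mem' := by
    intro g f hf v hv
    rw [smul_eq_mul] at hv
    rcases Finset.mem_add.mp (MvPolynomial.support_mul g f hv) with ⟨v1, h1, v2, h2, rfl⟩
    calc N ≤ wt c v2 := hf v2 h2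
    _ ≤ wt c v1 + wt c v2 := Nat.le_add_left _ _
    _ = wt c (v1 + v2) := (wt_add c v1 v2).symm

lemma mem_wtIdeal {c : Fin n → ℕ} {N : ℕ} {f : MvPolynomial (Fin n) k} :
    f ∈ wtIdeal k c N ↔ ∀ v ∈ f.support, N ≤ wt c v := Iff.rfl

lemma wtIdeal_mul_le (c : Fin n → ℕ) (A B : ℕ) :
    wtIdeal k c A * wtIdeal k c B ≤ wtIdeal k c (A + B) := by
  rw [Ideal.mul_le]
  intro f hf g hg v hv
  rcases Finset.mem_add.mp (MvPolynomial.support_mul f g hv) with ⟨v1, h1, v2, h2, rfl⟩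
  rw [wt_add]
  exact Nat.add_le_add (hf v1 h1) (hg v2 h2)

lemma pow_le_wtIdeal (c : Fin n → ℕ) (N : ℕ) (I : Ideal (MvPolynomial (Fin n) k))
    (hI : I ≤ wtIdeal k c N) (m : ℕ) : I ^ m ≤ wtIdeal k c (m * N) := by
  induction m with
  | zero => exact fun f _ v _ => by simp
  | succ m ih =>
      rw [pow_succ, Nat.succ_mul]
      exact le_trans (Ideal.mul_mono ih hI) (wtIdeal_mul_le c _ _)

lemma X_mem_varPrime {i j t : Fin n} (h1 : t ≠ i) (h2 : t ≠ j) :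
    (X t : MvPolynomial (Fin n) k) ∈ varPrime k i j :=
  Ideal.subset_span ⟨t, ⟨h1, h2⟩, rfl⟩

lemma mem_varPrime {i j : Fin n} {f : MvPolynomial (Fin n) k} :
    f ∈ varPrime k i j ↔ ∀ v ∈ f.support, ∃ t, (t ≠ i ∧ t ≠ j) ∧ (v : Fin n →₀ ℕ) t ≠ 0 := by
  rw [varPrime, show ((fun t => (X t : MvPolynomial (Fin n) k)) '' {t | t ≠ i ∧ t ≠ j})
      = (X '' {t | t ≠ i ∧ t ≠ j} : Set (MvPolynomial (Fin n) k)) from rfl,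
    mem_ideal_span_X_image]
  simp [and_assoc]

lemma prod_X_pow_mem (P : Ideal (MvPolynomial (Fin n) k)) (s : Finset (Fin n))
    (u : Fin n → ℕ) (h : ∀ t ∈ s, (X t : MvPolynomial (Fin n) k) ∈ P) :
    (∏ t ∈ s, (X t : MvPolynomial (Fin n) k) ^ u t) ∈ P ^ (∑ t ∈ s, u t) := by
  classical
  induction s using Finset.cons_induction with
  | empty => simp [Ideal.one_eq_top]
  | cons a s ha ih =>
      rw [Finset.prod_cons, Finset.sum_cons, pow_add]
      exact Ideal.mul_mem_mul (Ideal.pow_mem_pow (h a (Finset.mem_cons_self a s)) _)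
        (ih fun t ht => h t (Finset.mem_cons_of_mem ht))

lemma monomial_eq_prod (u : Fin n →₀ ℕ) :
    (monomial u (1 : k)) = ∏ t, (X t : MvPolynomial (Fin n) k) ^ u t := by
  rw [monomial_eq, C_1, one_mul, Finsupp.prod]
  exact Finset.prod_subset (Finset.subset_univ _) (by
    intro t _ ht
    rw [Finsupp.notMem_support_iff.mp ht, pow_zero])

lemma monomial_mem_varPrime_pow (i j : Fin n) (u : Fin n →₀ ℕ) (m : ℕ)
    (h : m ≤ ∑ t ∈ Finset.univ.filter (fun t => t ≠ i ∧ t ≠ j), u t) :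
    (monomial u (1 : k)) ∈ (varPrime k i j) ^ m := by
  classical
  rw [monomial_eq_prod,
    ← Finset.prod_filter_mul_prod_filter_not Finset.univ (fun t => t ≠ i ∧ t ≠ j)]
  refine Ideal.mul_mem_right _ _ ?_
  refine Ideal.pow_le_pow_right h ?_
  exact prod_X_pow_mem _ _ _ (fun t ht => by
    obtain ⟨-, h1, h2⟩ := Finset.mem_filter.mp ht
    exact X_mem_varPrime h1 h2)

lemma wt_ge_nine {n : ℕ} (G : SimpleGraph (Fin n)) (hG : ∀ p : Fin n, ∃ q, G.Adj p q)
    (a b c d : Fin n) (hab : G.Adj a b) (hbc : G.Adj b c) (hac : G.Adj a c)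
    (hda : d ≠ a) (hdb : d ≠ b) (hdc : d ≠ c)
    (v : Fin n →₀ ℕ) (hedge : ∀ i j, G.Adj i j → ∃ t, (t ≠ i ∧ t ≠ j) ∧ v t ≠ 0) :
    9 ≤ wt (fun t => if t = a ∨ t = b ∨ t = c then 3 else if t = d then 7 else 9) v := by
  classical
  set cw : Fin n → ℕ := fun t => if t = a ∨ t = b ∨ t = c then 3 else if t = d then 7 else 9
    with hcwdef
  have hab' : a ≠ b := hab.ne
  have hbc' : b ≠ c := hbc.ne
  have hac' : a ≠ c := hac.ne
  have hcw3 : ∀ t, 3 ≤ cw t := by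
    intro t; rw [hcwdef]; dsimp only; split_ifs <;> norm_num
  have hcwa : cw a = 3 := by simp [hcwdef]
  have hcwb : cw b = 3 := by simp [hcwdef]
  have hcwc : cw c = 3 := by simp [hcwdef]
  have hcwd : cw d = 7 := by simp [hcwdef, hda, hdb, hdc]
  have hsingle : ∀ t, cw t * v t ≤ wt cw v := by
    intro t
    have := sum_le_wt cw v {t}
    simpa using this
  have hpair : ∀ t t', t ≠ t' → cw t * v t + cw t' * v t' ≤ wt cw v := by
    intro t t' h
    have := sum_le_wt cw v {t, t'}
    rwa [Finset.sum_pair h] at this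
  by_cases hA : ∀ t, v t ≠ 0 → (t = a ∨ t = b ∨ t = c)
  · have hvc : 1 ≤ v c := by
      obtain ⟨t, ⟨h1, h2⟩, h3⟩ := hedge a b hab
      rcases hA t h3 with rfl | rfl | rfl
      exacts [absurd rfl h1, absurd rfl h2, Nat.one_le_iff_ne_zero.mpr h3]
    have hva : 1 ≤ v a := by
      obtain ⟨t, ⟨h1, h2⟩, h3⟩ := hedge b c hbc
      rcases hA t h3 with rfl | rfl | rfl
      exacts [Nat.one_le_iff_ne_zero.mpr h3, absurd rfl h1, absurd rfl h2]
    have hvb : 1 ≤ v b := by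
      obtain ⟨t, ⟨h1, h2⟩, h3⟩ := hedge a c hac
      rcases hA t h3 with rfl | rfl | rfl
      exacts [absurd rfl h1, Nat.one_le_iff_ne_zero.mpr h3, absurd rfl h2]
    have htriple : cw a * v a + cw b * v b + cw c * v c ≤ wt cw v := by
      have := sum_le_wt cw v {a, b, c}
      rwa [Finset.sum_insert (by simp [hab', hac']), Finset.sum_pair hbc', ← add_assoc] at this
    rw [hcwa, hcwb, hcwc] at htriple
    omega
  · push_neg at hA
    obtain ⟨t0, ht0v, ht0a, ht0b, ht0c⟩ := hA
    by_cases ht0d : t0 = d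
    · subst ht0d
      by_cases h2d : 2 ≤ v t0
      · have := hsingle t0
        rw [hcwd] at this
        omega
      · by_cases hone : ∀ t, v t ≠ 0 → t = t0
        · obtain ⟨q, hq⟩ := hG t0
          obtain ⟨t, ⟨h1, _⟩, h3⟩ := hedge t0 q hq
          exact absurd (hone t h3) h1
        · push_neg at hone
          obtain ⟨t1, ht1v, ht1d⟩ := hone
          have hp := hpair t0 t1 (Ne.symm ht1d)
          have h31 : 3 * 1 ≤ cw t1 * v t1 :=
            Nat.mul_le_mul (hcw3 t1) (Nat.one_le_iff_ne_zero.mpr ht1v)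
          rw [hcwd] at hp
          omega
    · have hcwt0 : cw t0 = 9 := by simp [hcwdef, ht0a, ht0b, ht0c, ht0d]
      have := hsingle t0
      rw [hcwt0] at this
      have : 9 * 1 ≤ 9 * v t0 := Nat.mul_le_mul_left _ (Nat.one_le_iff_ne_zero.mpr ht0v)
      omega

lemma pick_pair {n : ℕ} {a b c d i j : Fin n} (hab : a ≠ b) (hac : a ≠ c) (hbc : b ≠ c)
    (hda : d ≠ a) (hdb : d ≠ b) (hdc : d ≠ c) :
    ∃ t₁ t₂ : Fin n, t₁ ≠ t₂ ∧ (t₁ = a ∨ t₁ = b ∨ t₁ = c) ∧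
      (t₂ = a ∨ t₂ = b ∨ t₂ = c ∨ t₂ = d) ∧ t₁ ≠ i ∧ t₁ ≠ j ∧ t₂ ≠ i ∧ t₂ ≠ j := by
  classical
  have h4 : ({a, b, c, d} : Finset (Fin n)).card = 4 := by
    rw [Finset.card_insert_of_notMem (by simp [hab, hac, hda.symm]),
      Finset.card_insert_of_notMem (by simp [hbc, hdb.symm]),
      Finset.card_insert_of_notMem (by simp [hdc.symm]), Finset.card_singleton]
  have h2 : (({i, j} : Finset (Fin n))).card ≤ 2 :=
    (Finset.card_insert_le _ _).trans (by simp)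
  have hsd := Finset.le_card_sdiff ({i, j} : Finset (Fin n)) ({a, b, c, d} : Finset (Fin n))
  have hcard : 2 ≤ (({a, b, c, d} : Finset (Fin n)) \ {i, j}).card := by omega
  obtain ⟨x, y, hx, hy, hxy⟩ := Finset.one_lt_card_iff.mp
    (show 1 < (({a, b, c, d} : Finset (Fin n)) \ {i, j}).card by omega)
  rw [Finset.mem_sdiff, Finset.mem_insert, Finset.mem_insert, Finset.mem_insert,
    Finset.mem_singleton] at hx hy
  obtain ⟨hxm, hxij⟩ := hx
  obtain ⟨hym, hyij⟩ := hy
  simp only [Finset.mem_insert, Finset.mem_singleton] at hxij hyij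
  push_neg at hxij hyij
  by_cases hxd : x = d
  · have hym' : y = a ∨ y = b ∨ y = c := by
      rcases hym with h | h | h | h
      exacts [Or.inl h, Or.inr (Or.inl h), Or.inr (Or.inr h), absurd (h.trans hxd.symm) hxy.symm]
    exact ⟨y, x, hxy.symm, hym', by tauto, hyij.1, hyij.2, hxij.1, hxij.2⟩
  · have hxm' : x = a ∨ x = b ∨ x = c := by tauto
    exact ⟨x, y, hxy, hxm', hym, hxij.1, hxij.2, hyij.1, hyij.2⟩

end SP14

open SP14 in
/-- Let `n ≥ 4`. If `G` contains a triangle (three pairwise adjacent vertices), then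
`I_G^{(m)} ≠ I_G^m` for every `m ≥ 2`. -/
theorem stmt_14 (k : Type) [Field k] (n : ℕ) (hn : 4 ≤ n)
    (G : SimpleGraph (Fin n)) (hG : ∀ v : Fin n, ∃ u : Fin n, G.Adj v u)
    (a b c : Fin n) (hab : G.Adj a b) (hbc : G.Adj b c) (hac : G.Adj a c)
    (m : ℕ) (hm : 2 ≤ m) :
    symbolicPower k G m ≠ (symbolicPower k G 1) ^ m := by
  classical
  intro heq
  have hab' : a ≠ b := hab.ne
  have hbc' : b ≠ c := hbc.ne
  have hac' : a ≠ c := hac.ne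
  -- find a fourth vertex `d`
  have h3 : ({a, b, c} : Finset (Fin n)).card ≤ 3 :=
    (Finset.card_insert_le _ _).trans (Nat.succ_le_succ ((Finset.card_insert_le _ _).trans
      (by simp)))
  have hne : ({a, b, c} : Finset (Fin n)) ≠ Finset.univ := by
    intro h
    rw [h, Finset.card_univ, Fintype.card_fin] at h3
    omega
  obtain ⟨d, -, hd⟩ := Finset.exists_of_ssubset (Finset.ssubset_univ_iff.mpr hne)
  simp only [Finset.mem_insert, Finset.mem_singleton] at hd
  push_neg at hd
  obtain ⟨hda, hdb, hdc⟩ := hd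
  -- the weight function and the witness exponent vector
  set cw : Fin n → ℕ := fun t => if t = a ∨ t = b ∨ t = c then 3 else if t = d then 7 else 9
    with hcwdef
  set u₀ : Fin n →₀ ℕ := Finsupp.single a (m - 1) + Finsupp.single b (m - 1) +
    Finsupp.single c (m - 1) + Finsupp.single d 1 with hu0def
  have hva : u₀ a = m - 1 := by
    simp [hu0def, Finsupp.single_apply, Ne.symm hab', Ne.symm hac', hda]
  have hvb : u₀ b = m - 1 := by
    simp [hu0def, Finsupp.single_apply, hab', Ne.symm hbc', hdb]
  have hvc : u₀ c = m - 1 := by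
    simp [hu0def, Finsupp.single_apply, hac', hbc', hdc]
  have hvd : u₀ d = 1 := by
    simp [hu0def, Finsupp.single_apply, Ne.symm hda, Ne.symm hdb, Ne.symm hdc]
  -- the witness lies in the symbolic power
  have hw_sym : (monomial u₀ (1 : k)) ∈ symbolicPower k G m := by
    rw [symbolicPower]
    simp only [Ideal.mem_iInf]
    intro i j hij
    obtain ⟨t₁, t₂, ht12, ht1m, ht2m, h1i, h1j, h2i, h2j⟩ :=
      pick_pair (i := i) (j := j) hab' hac' hbc' hda hdb hdc
    apply monomial_mem_varPrime_pow
    have h1 : u₀ t₁ = m - 1 := by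
      rcases ht1m with rfl | rfl | rfl
      exacts [hva, hvb, hvc]
    have h2 : 1 ≤ u₀ t₂ := by
      rcases ht2m with rfl | rfl | rfl | rfl <;> omega
    calc m ≤ u₀ t₁ + u₀ t₂ := by omega
    _ = ∑ t ∈ ({t₁, t₂} : Finset (Fin n)), u₀ t := (Finset.sum_pair ht12).symm
    _ ≤ ∑ t ∈ Finset.univ.filter (fun t => t ≠ i ∧ t ≠ j), u₀ t :=
        Finset.sum_le_sum_of_subset (by
          intro t ht
          simp only [Finset.mem_insert, Finset.mem_singleton] at ht
          simp only [Finset.mem_filter, Finset.mem_univ, true_and]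
          rcases ht with rfl | rfl
          exacts [⟨h1i, h1j⟩, ⟨h2i, h2j⟩])
  -- the ordinary power is contained in the weight ideal
  have hI1 : symbolicPower k G 1 ≤ wtIdeal k cw 9 := by
    intro f hf
    rw [mem_wtIdeal]
    intro v hv
    refine wt_ge_nine G hG a b c d hab hbc hac hda hdb hdc v ?_
    intro i j hij
    rw [symbolicPower] at hf
    simp only [Ideal.mem_iInf] at hf
    have hfij : f ∈ varPrime k i j := by
      have := hf i j hij
      rwa [pow_one] at this
    exact mem_varPrime.mp hfij v hv
  -- derive the contradiction
  have hmem : (monomial u₀ (1 : k)) ∈ (symbolicPower k G 1) ^ m := heq ▸ hw_sym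
  have hwt := pow_le_wtIdeal cw 9 _ hI1 m hmem
  rw [mem_wtIdeal] at hwt
  have hsup : u₀ ∈ (monomial u₀ (1 : k)).support := by
    rw [support_monomial]
    simp
  have hle := hwt u₀ hsup
  have hcwa : cw a = 3 := by simp [hcwdef]
  have hcwb : cw b = 3 := by simp [hcwdef]
  have hcwc : cw c = 3 := by simp [hcwdef]
  have hcwd : cw d = 7 := by simp [hcwdef, hda, hdb, hdc]
  have hwtu : wt cw u₀ = 3 * (m - 1) + 3 * (m - 1) + 3 * (m - 1) + 7 := by
    rw [hu0def, wt_add, wt_add, wt_add, wt_single, wt_single, wt_single, wt_single,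
      hcwa, hcwb, hcwc, hcwd]
  rw [hwtu] at hle
  omega
end

section
/- Let n ≥ 4. If G contains a triangle of non-edges, i.e. three vertices that are pairwise non-adjacent in G, then I_G^{(m)} ≠ I_G^m for every m ≥ 2. -/
open MvPolynomial

/-- Polynomials all of whose coefficients in degrees `< d` vanish. -/
def lowVanish (k : Type) [Field k] (n d : ℕ) : Ideal (MvPolynomial (Fin n) k) where
  carrier := {f | ∀ μ : Fin n →₀ ℕ, (∑ t, μ t) < d → coeff μ f = 0}
  zero_mem' := by intro μ _; simp
  add_mem' := by intro f g hf hg μ hμ; simp [coeff_add, hf μ hμ, hg μ hμ]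
  smul_mem' := by
    intro p f hf μ hμ
    rw [smul_eq_mul, coeff_mul]
    apply Finset.sum_eq_zero
    rintro ⟨x1, x2⟩ hx
    rw [Finset.HasAntidiagonal.mem_antidiagonal] at hx
    have h2 : (∑ t, x2 t) < d := by
      have hle : ∀ t ∈ Finset.univ, x2 t ≤ μ t := by
        intro t _
        have : x1 t + x2 t = μ t := by rw [← hx]; simp
        omega
      exact lt_of_le_of_lt (Finset.sum_le_sum hle) hμ
    simp [hf x2 h2]

lemma lowVanish_mul (k : Type) [Field k] (n a b : ℕ) :
    lowVanish k n a * lowVanish k n b ≤ lowVanish k n (a + b) := by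
  rw [Ideal.mul_le]
  intro f hf g hg μ hμ
  rw [coeff_mul]
  apply Finset.sum_eq_zero
  rintro ⟨x1, x2⟩ hx
  rw [Finset.HasAntidiagonal.mem_antidiagonal] at hx
  have hsum : (∑ t, x1 t) + (∑ t, x2 t) = ∑ t, μ t := by
    rw [← Finset.sum_add_distrib]
    apply Finset.sum_congr rfl
    intro t _
    rw [← hx]; simp
  rcases lt_or_ge (∑ t, x1 t) a with h | h
  · simp [hf x1 h]
  · have : (∑ t, x2 t) < b := by omega
    simp [hg x2 this]

lemma lowVanish_pow (k : Type) [Field k] (n m : ℕ) :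
    (lowVanish k n 2) ^ m ≤ lowVanish k n (2 * m) := by
  induction m with
  | zero =>
      intro f _ μ hμ
      omega
  | succ m ih =>
      rw [pow_succ]
      calc (lowVanish k n 2) ^ m * lowVanish k n 2
          ≤ lowVanish k n (2 * m) * lowVanish k n 2 := Ideal.mul_mono_left ih
        _ ≤ lowVanish k n (2 * m + 2) := lowVanish_mul k n (2 * m) 2
        _ = lowVanish k n (2 * (m + 1)) := by ring_nf

lemma coeff_single_mul (k : Type) [Field k] {n : ℕ} (t : Fin n)
    (p f : MvPolynomial (Fin n) k) (h0 : coeff 0 f = 0)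
    (h1 : coeff (Finsupp.single t 1) f = 0) :
    coeff (Finsupp.single t 1) (p * f) = 0 := by
  rw [coeff_mul]
  apply Finset.sum_eq_zero
  rintro ⟨x1, x2⟩ hx
  rw [Finset.HasAntidiagonal.mem_antidiagonal] at hx
  have happ : ∀ s, x1 s + x2 s = (Finsupp.single t 1 : Fin n →₀ ℕ) s := by
    intro s; rw [← hx]; simp
  have : x2 = 0 ∨ x2 = Finsupp.single t 1 := by
    by_cases h : x2 t = 0
    · left; ext s
      have := happ s
      by_cases hs : s = t
      · subst hs; simp [h]
      · rw [Finsupp.single_apply, if_neg (fun h : t = s => hs h.symm)] at this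
        simp; omega
    · right; ext s
      have := happ s
      by_cases hs : s = t
      · subst hs
        simp [Finsupp.single_apply] at this ⊢
        omega
      · rw [Finsupp.single_apply, if_neg (fun h : t = s => hs h.symm)] at this
        rw [Finsupp.single_apply, if_neg (fun h : t = s => hs h.symm)]
        omega
  rcases this with rfl | rfl
  · simp [h0]
  · simp [h1]

/-- The ideal of polynomials with vanishing constant coefficient and vanishing
coefficient at `x_t`. -/
def coeffVanish (k : Type) [Field k] {n : ℕ} (t : Fin n) :
    Ideal (MvPolynomial (Fin n) k) where
  carrier := {f | coeff 0 f = 0 ∧ coeff (Finsupp.single t 1) f = 0}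
  zero_mem' := by simp
  add_mem' := by
    intro f g hf hg
    exact ⟨by simp [coeff_add, hf.1, hg.1], by simp [coeff_add, hf.2, hg.2]⟩
  smul_mem' := by
    intro p f hf
    refine ⟨?_, coeff_single_mul k t p f hf.1 hf.2⟩
    rw [smul_eq_mul, coeff_mul]
    apply Finset.sum_eq_zero
    rintro ⟨x1, x2⟩ hx
    rw [Finset.HasAntidiagonal.mem_antidiagonal] at hx
    have : x2 = 0 := by
      ext s
      have : x1 s + x2 s = (0 : Fin n →₀ ℕ) s := by rw [← hx]; simp
      simp at this ⊢
      omega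
    subst this
    simp [hf.1]

lemma X_mem_varPrime (k : Type) [Field k] {n : ℕ} {i j t : Fin n}
    (ht1 : t ≠ i) (ht2 : t ≠ j) : (X t : MvPolynomial (Fin n) k) ∈ varPrime k i j :=
  Ideal.subset_span ⟨t, ⟨ht1, ht2⟩, rfl⟩

lemma varPrime_le_coeffVanish (k : Type) [Field k] {n : ℕ} (i j t : Fin n)
    (ht : t = i ∨ t = j) : varPrime k i j ≤ coeffVanish k t := by
  rw [varPrime, Ideal.span_le]
  rintro _ ⟨s, ⟨hs1, hs2⟩, rfl⟩
  have hst : s ≠ t := by rcases ht with rfl | rfl <;> assumption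
  constructor
  · simp [coeff_X']
  · rw [coeff_X']
    rw [if_neg]
    intro h
    exact hst (by
      have := Finsupp.single_left_injective (α := Fin n) (one_ne_zero (α := ℕ)) h
      exact this)

lemma pow_mul_pow_mem {R : Type*} [CommRing R] {P : Ideal R} {x y : R}
    (hx : x ∈ P) (hy : y ∈ P) {r s m : ℕ} (h : m ≤ r + s) :
    x ^ r * y ^ s ∈ P ^ m :=
  Ideal.pow_le_pow_right h
    ((pow_add P r s) ▸ Ideal.mul_mem_mul (Ideal.pow_mem_pow hx r) (Ideal.pow_mem_pow hy s))

lemma symbolicPower_one_le_lowVanish (k : Type) [Field k] {n : ℕ}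
    (G : SimpleGraph (Fin n)) (hG : ∀ v : Fin n, ∃ u : Fin n, G.Adj v u) (hn : 1 ≤ n) :
    symbolicPower k G 1 ≤ lowVanish k n 2 := by
  intro f hf
  simp only [symbolicPower, Submodule.mem_iInf, pow_one] at hf
  intro μ hμ
  by_cases h0 : μ = 0
  · subst h0
    have v0 : Fin n := ⟨0, hn⟩
    obtain ⟨u, hu⟩ := hG v0
    exact ((varPrime_le_coeffVanish k v0 u v0 (Or.inl rfl)) (hf v0 u hu)).1
  · obtain ⟨t, ht⟩ : ∃ t, μ t ≠ 0 := by
      by_contra h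
      push_neg at h
      exact h0 (Finsupp.ext fun s => h s)
    have hμt : μ = Finsupp.single t 1 := by
      have hsub : ∀ s, s ≠ t → μ s = 0 := by
        intro s hs
        by_contra hss
        have hpair : μ s + μ t ≤ ∑ x, μ x := by
          have : ∑ x ∈ ({s, t} : Finset (Fin n)), μ x ≤ ∑ x, μ x :=
            Finset.sum_le_sum_of_subset (Finset.subset_univ _)
          rwa [Finset.sum_pair hs] at this
        omega
      have hle : μ t ≤ ∑ x, μ x :=
        Finset.single_le_sum (f := fun x => μ x) (fun _ _ => Nat.zero_le _)
          (Finset.mem_univ t)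
      ext s
      by_cases hs : s = t
      · subst hs; simp; omega
      · rw [hsub s hs, Finsupp.single_apply, if_neg (fun h : t = s => hs h.symm)]
    subst hμt
    obtain ⟨u, hu⟩ := hG t
    exact ((varPrime_le_coeffVanish k t u t (Or.inl rfl)) (hf t u hu)).2

/-- Let `n ≥ 4`. If `G` contains a triangle of non-edges (three pairwise non-adjacent
vertices), then `I_G^{(m)} ≠ I_G^m` for every `m ≥ 2`. -/
theorem stmt_15 (k : Type) [Field k] (n : ℕ) (hn : 4 ≤ n)
    (G : SimpleGraph (Fin n)) (hG : ∀ v : Fin n, ∃ u : Fin n, G.Adj v u)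
    (a b c : Fin n) (hab : a ≠ b) (hbc : b ≠ c) (hac : a ≠ c)
    (nab : ¬ G.Adj a b) (nbc : ¬ G.Adj b c) (nac : ¬ G.Adj a c)
    (m : ℕ) (hm : 2 ≤ m) :
    symbolicPower k G m ≠ (symbolicPower k G 1) ^ m := by
  intro heq
  set f : MvPolynomial (Fin n) k := X a ^ (m - 1) * X b ^ (m - 1) * X c with hfdef
  -- f is in the symbolic power
  have hfm : f ∈ symbolicPower k G m := by
    simp only [symbolicPower, Submodule.mem_iInf]
    intro i j hij
    have hijne : i ≠ j := G.ne_of_adj hij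
    have htwo : ∀ u v : Fin n, u ≠ v → ¬ G.Adj u v →
        (u = i ∨ u = j) → (v = i ∨ v = j) → False := by
      rintro u v huv hadj (rfl | rfl) (rfl | rfl)
      · exact huv rfl
      · exact hadj hij
      · exact hadj hij.symm
      · exact huv rfl
    by_cases ha : a = i ∨ a = j
    · have hb : ¬(b = i ∨ b = j) := fun hb => htwo a b hab nab ha hb
      have hc : ¬(c = i ∨ c = j) := fun hc => htwo a c hac nac ha hc
      push_neg at hb hc
      have hcore : (X b : MvPolynomial (Fin n) k) ^ (m - 1) * X c ^ 1 ∈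
          (varPrime k i j) ^ m :=
        pow_mul_pow_mem (X_mem_varPrime k hb.1 hb.2) (X_mem_varPrime k hc.1 hc.2)
          (by omega)
      have : f = X a ^ (m - 1) * (X b ^ (m - 1) * X c ^ 1) := by rw [hfdef]; ring
      rw [this]
      exact Ideal.mul_mem_left _ _ hcore
    · push_neg at ha
      by_cases hb : b = i ∨ b = j
      · have hc : ¬(c = i ∨ c = j) := fun hc => htwo b c hbc nbc hb hc
        push_neg at hc
        have hcore : (X a : MvPolynomial (Fin n) k) ^ (m - 1) * X c ^ 1 ∈
            (varPrime k i j) ^ m :=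
          pow_mul_pow_mem (X_mem_varPrime k ha.1 ha.2) (X_mem_varPrime k hc.1 hc.2)
            (by omega)
        have : f = X b ^ (m - 1) * (X a ^ (m - 1) * X c ^ 1) := by rw [hfdef]; ring
        rw [this]
        exact Ideal.mul_mem_left _ _ hcore
      · push_neg at hb
        have hcore : (X a : MvPolynomial (Fin n) k) ^ (m - 1) * X b ^ (m - 1) ∈
            (varPrime k i j) ^ m :=
          pow_mul_pow_mem (X_mem_varPrime k ha.1 ha.2) (X_mem_varPrime k hb.1 hb.2)
            (by omega)
        have : f = X c * (X a ^ (m - 1) * X b ^ (m - 1)) := by rw [hfdef]; ring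
        rw [this]
        exact Ideal.mul_mem_left _ _ hcore
  rw [heq] at hfm
  -- but f has degree 2m-1 < 2m
  have hle : (symbolicPower k G 1) ^ m ≤ lowVanish k n (2 * m) := by
    calc (symbolicPower k G 1) ^ m ≤ (lowVanish k n 2) ^ m :=
          Ideal.pow_right_mono (symbolicPower_one_le_lowVanish k G hG (by omega)) m
      _ ≤ lowVanish k n (2 * m) := lowVanish_pow k n m
  have hlow := hle hfm
  set D : Fin n →₀ ℕ := Finsupp.single a (m - 1) + Finsupp.single b (m - 1) +
    Finsupp.single c 1 with hD
  have hfD : f = monomial D 1 := by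
    rw [hfdef, hD, ← pow_one (X c : MvPolynomial (Fin n) k),
      X_pow_eq_monomial, X_pow_eq_monomial, X_pow_eq_monomial]
    simp only [monomial_mul, one_mul, mul_one]
  have hDsum : ∑ t, D t = 2 * m - 1 := by
    rw [hD]
    simp only [Finsupp.add_apply, Finsupp.single_apply]
    rw [Finset.sum_add_distrib, Finset.sum_add_distrib]
    simp [Finset.sum_ite_eq']
    omega
  have := hlow D (by rw [hDsum]; omega)
  rw [hfD, coeff_monomial, if_pos rfl] at this
  exact one_ne_zero this
end

section
/- Let n ≥ 5 and m ≥ 3. Then for every simple graph G on the vertex set {1,…,n} with no isolated vertices, I_G^{(m)} ≠ I_G^m. -/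
open MvPolynomial

variable {k : Type} [Field k] {n : ℕ}

lemma mem_varPrime {f : MvPolynomial (Fin n) k} {i j : Fin n} :
    f ∈ varPrime k i j ↔ ∀ d ∈ f.support, ∃ t, t ≠ i ∧ t ≠ j ∧ d t ≠ 0 := by
  unfold varPrime
  rw [show ((fun t => (X t : MvPolynomial (Fin n) k)) '' {t | t ≠ i ∧ t ≠ j})
      = (X '' {t | t ≠ i ∧ t ≠ j}) from rfl, mem_ideal_span_X_image]
  simp only [Set.mem_setOf_eq]
  constructor
  · intro h d hd
    obtain ⟨t, ⟨h1, h2⟩, h3⟩ := h d hd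
    exact ⟨t, h1, h2, h3⟩
  · intro h d hd
    obtain ⟨t, h1, h2, h3⟩ := h d hd
    exact ⟨t, ⟨h1, h2⟩, h3⟩

lemma varPrime_eq (i j : Fin n) :
    varPrime k i j
      = Ideal.span ((fun t => (X t : MvPolynomial (Fin n) k)) ''
          ↑(Finset.univ \ {i, j} : Finset (Fin n))) := by
  unfold varPrime
  congr 1
  congr 1
  ext t
  simp [not_or]

lemma monomial_mem_pow (s : Finset (Fin n)) (m : ℕ) :
    ∀ d : Fin n →₀ ℕ, m ≤ ∑ t ∈ s, d t →
      monomial d (1 : k) ∈ (Ideal.span ((fun t => (X t : MvPolynomial (Fin n) k)) '' ↑s)) ^ m := by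
  induction m with
  | zero => intro d _; simpa using Submodule.mem_top
  | succ m ih =>
    intro d hd
    have hex : ∃ t ∈ s, d t ≠ 0 := by
      by_contra h
      push_neg at h
      have : ∑ t ∈ s, d t = 0 := Finset.sum_eq_zero h
      omega
    obtain ⟨t, hts, hdt⟩ := hex
    set d' : Fin n →₀ ℕ := d - Finsupp.single t 1 with hd'
    have hle : Finsupp.single t 1 ≤ d := Finsupp.single_le_iff.mpr (Nat.one_le_iff_ne_zero.mpr hdt)
    have hsum : m ≤ ∑ t' ∈ s, d' t' := by
      have h1 : d' t + ∑ t' ∈ s.erase t, d' t'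
          = ∑ t' ∈ s, d' t' := Finset.add_sum_erase _ _ hts
      have h2 : d t + ∑ t' ∈ s.erase t, d t' = ∑ t' ∈ s, d t' := Finset.add_sum_erase _ _ hts
      have h3 : ∑ t' ∈ s.erase t, d' t' = ∑ t' ∈ s.erase t, d t' := by
        refine Finset.sum_congr rfl fun x hx => ?_
        have hxt : ¬ t = x := Ne.symm (Finset.ne_of_mem_erase hx)
        rw [hd', Finsupp.tsub_apply, Finsupp.single_apply, if_neg hxt, Nat.sub_zero]
      have h4 : d' t = d t - 1 := by
        rw [hd', Finsupp.tsub_apply, Finsupp.single_apply, if_pos rfl]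
      omega
    have heq : monomial d (1 : k) = X t * monomial d' 1 := by
      rw [X, monomial_mul, one_mul, add_tsub_cancel_of_le hle]
    rw [heq, pow_succ']
    exact Ideal.mul_mem_mul (Ideal.subset_span ⟨t, by simpa using hts, rfl⟩) (ih _ hsum)

lemma phi_monomial (d : Fin n →₀ ℕ) (a : k) :
    aeval (fun _ : Fin n => (Polynomial.X : Polynomial k)) (monomial d a)
      = Polynomial.C a * Polynomial.X ^ (∑ t : Fin n, d t) := by
  rw [aeval_monomial, Polynomial.algebraMap_eq]
  congr 1
  rw [Finsupp.prod, Finset.prod_pow_eq_pow_sum]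
  congr 1
  exact (Finset.sum_subset (Finset.subset_univ d.support)
    (fun x _ hx => Finsupp.notMem_support_iff.mp hx))

lemma pow_mem_bound (I : Ideal (MvPolynomial (Fin n) k)) (c : ℕ)
    (hI : ∀ f ∈ I, ∀ d ∈ f.support, c ≤ ∑ t : Fin n, d t) (m : ℕ)
    {f : MvPolynomial (Fin n) k} (hf : f ∈ I ^ m) :
    (aeval (fun _ : Fin n => (Polynomial.X : Polynomial k))) f
      ∈ Ideal.span {(Polynomial.X : Polynomial k) ^ (c * m)} := by
  set φ : MvPolynomial (Fin n) k →+* Polynomial k :=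
    (aeval (fun _ : Fin n => (Polynomial.X : Polynomial k))).toRingHom with hφ
  have hmap : Ideal.map φ I ≤ Ideal.span {(Polynomial.X : Polynomial k) ^ c} := by
    rw [Ideal.map_le_iff_le_comap]
    intro g hg
    rw [Ideal.mem_comap]
    nth_rewrite 1 [g.as_sum]
    rw [map_sum]
    refine Ideal.sum_mem _ fun d hd => ?_
    have : φ (monomial d (coeff d g)) = Polynomial.C (coeff d g) * Polynomial.X ^ (∑ t : Fin n, d t) :=
      phi_monomial d (coeff d g)
    rw [this]
    exact Ideal.mul_mem_left _ _ (Ideal.mem_span_singleton.mpr (pow_dvd_pow _ (hI g hg d hd)))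
  have h1 : φ f ∈ (Ideal.span {(Polynomial.X : Polynomial k) ^ c}) ^ m := by
    have h2 := Ideal.mem_map_of_mem φ hf
    rw [Ideal.map_pow] at h2
    exact Ideal.pow_right_mono hmap m h2
  rw [Ideal.span_singleton_pow, ← pow_mul] at h1
  exact h1

lemma mem_symbolicPower {G : SimpleGraph (Fin n)} {m : ℕ} {f : MvPolynomial (Fin n) k} :
    f ∈ symbolicPower k G m ↔ ∀ i j, G.Adj i j → f ∈ (varPrime k i j) ^ m := by
  unfold symbolicPower
  simp [Ideal.mem_iInf]

lemma deg_two (G : SimpleGraph (Fin n)) (hG : ∀ v, ∃ u, G.Adj v u) (h5 : 0 < n) :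
    ∀ f ∈ symbolicPower k G 1, ∀ d ∈ f.support, 2 ≤ ∑ t : Fin n, d t := by
  intro f hf d hd
  have hP : ∀ i j : Fin n, G.Adj i j → ∃ t, t ≠ i ∧ t ≠ j ∧ d t ≠ 0 := by
    intro i j hij
    have := (mem_symbolicPower.mp hf) i j hij
    rw [pow_one] at this
    exact mem_varPrime.mp this d hd
  by_contra hlt
  push_neg at hlt
  by_cases hz : ∀ t, d t = 0
  · obtain ⟨u, hu⟩ := hG ⟨0, h5⟩
    obtain ⟨t, _, _, ht⟩ := hP _ u hu
    exact ht (hz t)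
  · push_neg at hz
    obtain ⟨t, ht⟩ := hz
    obtain ⟨u, hu⟩ := hG t
    obtain ⟨s, hs1, _, hs3⟩ := hP t u hu
    have hsum : d s + d t ≤ ∑ t' : Fin n, d t' := by
      have h0 : ∑ x ∈ ({s, t} : Finset (Fin n)), d x ≤ ∑ x : Fin n, d x :=
        Finset.sum_le_sum_of_subset (Finset.subset_univ _)
      rwa [Finset.sum_pair hs1] at h0
    omega

lemma deg_three (G : SimpleGraph (Fin n)) (hG : ∀ v, ∃ u, G.Adj v u) (h5 : 0 < n)
    (hc : ∀ a b : Fin n, a ≠ b → G.Adj a b) :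
    ∀ f ∈ symbolicPower k G 1, ∀ d ∈ f.support, 3 ≤ ∑ t : Fin n, d t := by
  intro f hf d hd
  have hP : ∀ i j : Fin n, G.Adj i j → ∃ t, t ≠ i ∧ t ≠ j ∧ d t ≠ 0 := by
    intro i j hij
    have := (mem_symbolicPower.mp hf) i j hij
    rw [pow_one] at this
    exact mem_varPrime.mp this d hd
  by_contra hlt
  push_neg at hlt
  by_cases hz : ∀ t, d t = 0
  · obtain ⟨u, hu⟩ := hG ⟨0, h5⟩
    obtain ⟨t, _, _, ht⟩ := hP _ u hu
    exact ht (hz t)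
  · push_neg at hz
    obtain ⟨t, ht⟩ := hz
    by_cases hz2 : ∀ s, s ≠ t → d s = 0
    · obtain ⟨u, hu⟩ := hG t
      obtain ⟨s, hs1, _, hs3⟩ := hP t u hu
      exact hs3 (hz2 s hs1)
    · push_neg at hz2
      obtain ⟨s, hst, hs⟩ := hz2
      obtain ⟨r, hr1, hr2, hr3⟩ := hP t s (hc t s (Ne.symm hst))
      have hsum : d t + d s + d r ≤ ∑ t' : Fin n, d t' := by
        have h0 : ∑ x ∈ ({t, s, r} : Finset (Fin n)), d x ≤ ∑ x : Fin n, d x :=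
          Finset.sum_le_sum_of_subset (Finset.subset_univ _)
        rw [Finset.sum_insert (by simp [Ne.symm hst, Ne.symm hr1]),
          Finset.sum_insert (by simp [Ne.symm hr2]), Finset.sum_singleton] at h0
        omega
      omega

lemma main_case (G : SimpleGraph (Fin n)) (m c : ℕ) (hm : 1 ≤ m) (hc0 : 1 ≤ c)
    (hdeg : ∀ f ∈ symbolicPower k G 1, ∀ d ∈ f.support, c ≤ ∑ t : Fin n, d t)
    (d : Fin n →₀ ℕ)
    (hmem : ∀ i j, G.Adj i j → m ≤ ∑ t ∈ Finset.univ \ {i, j}, d t)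
    (hlt : ∑ t : Fin n, d t < c * m) :
    symbolicPower k G m ≠ (symbolicPower k G 1) ^ m := by
  intro hEq
  have hM : monomial d (1 : k) ∈ symbolicPower k G m := by
    rw [mem_symbolicPower]
    intro i j hij
    rw [varPrime_eq]
    exact monomial_mem_pow _ m d (hmem i j hij)
  rw [hEq] at hM
  have h2 := pow_mem_bound _ c hdeg m hM
  rw [phi_monomial, Polynomial.C_1, one_mul] at h2
  have hdvd := Ideal.mem_span_singleton.mp h2
  have h3 := Polynomial.natDegree_le_of_dvd hdvd (pow_ne_zero _ Polynomial.X_ne_zero)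
  rw [Polynomial.natDegree_X_pow, Polynomial.natDegree_X_pow] at h3
  omega

lemma sum_single_apply (a : Fin n) (v : ℕ) :
    ∑ t : Fin n, (Finsupp.single a v : Fin n →₀ ℕ) t = v := by
  simp [Finsupp.single_apply, Finset.sum_ite_eq]

lemma val4_le {a b c e : Fin n} (hab : a ≠ b) (hac : a ≠ c) (hae : a ≠ e)
    (hbc : b ≠ c) (hbe : b ≠ e) (hce : c ≠ e) {u v : ℕ} (huv : u ≤ v) (x : Fin n) :
    (Finsupp.single a v + Finsupp.single b v + Finsupp.single c v
      + Finsupp.single e u : Fin n →₀ ℕ) x ≤ v := by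
  simp only [Finsupp.add_apply, Finsupp.single_apply]
  split_ifs <;> first | omega | (exfalso; simp_all)

lemma val5_p {p q w1 w2 w3 : Fin n} (hpq : p ≠ q) (h1p : w1 ≠ p)
    (h2p : w2 ≠ p) (h3p : w3 ≠ p) (A : ℕ) :
    (Finsupp.single p A + Finsupp.single q A + Finsupp.single w1 1 + Finsupp.single w2 1
      + Finsupp.single w3 1 : Fin n →₀ ℕ) p = A := by
  simp only [Finsupp.add_apply, Finsupp.single_apply]
  split_ifs <;> first | omega | (exfalso; simp_all)

lemma val5_other {p q w1 w2 w3 : Fin n}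
    (h12 : w1 ≠ w2) (h13 : w1 ≠ w3) (h23 : w2 ≠ w3) (A : ℕ) {x : Fin n}
    (hxp : x ≠ p) (hxq : x ≠ q) :
    (Finsupp.single p A + Finsupp.single q A + Finsupp.single w1 1 + Finsupp.single w2 1
      + Finsupp.single w3 1 : Fin n →₀ ℕ) x ≤ 1 := by
  simp only [Finsupp.add_apply, Finsupp.single_apply]
  split_ifs <;> first | omega | (exfalso; simp_all)

lemma val5_q {p q w1 w2 w3 : Fin n} (hpq : p ≠ q) (h1q : w1 ≠ q)
    (h2q : w2 ≠ q) (h3q : w3 ≠ q) (A : ℕ) :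
    (Finsupp.single p A + Finsupp.single q A + Finsupp.single w1 1 + Finsupp.single w2 1
      + Finsupp.single w3 1 : Fin n →₀ ℕ) q = A := by
  simp only [Finsupp.add_apply, Finsupp.single_apply]
  split_ifs <;> first | omega | (exfalso; simp_all)

lemma sum4 (a b c e : Fin n) (u v : ℕ) :
    ∑ t : Fin n, (Finsupp.single a v + Finsupp.single b v + Finsupp.single c v
      + Finsupp.single e u : Fin n →₀ ℕ) t = v + v + v + u := by
  simp only [Finsupp.add_apply, Finset.sum_add_distrib, sum_single_apply]

lemma sum5 (p q w1 w2 w3 : Fin n) (A : ℕ) :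
    ∑ t : Fin n, (Finsupp.single p A + Finsupp.single q A + Finsupp.single w1 1
      + Finsupp.single w2 1 + Finsupp.single w3 1 : Fin n →₀ ℕ) t = A + A + 1 + 1 + 1 := by
  simp only [Finsupp.add_apply, Finset.sum_add_distrib, sum_single_apply]

/-- Let `n ≥ 5` and `m ≥ 3`. Then for every simple graph `G` on `n` vertices with no
isolated vertices, `I_G^{(m)} ≠ I_G^m`. -/
theorem stmt_16 (k : Type) [Field k] (n : ℕ) (hn : 5 ≤ n)
    (m : ℕ) (hm : 3 ≤ m) :
    ∀ G : SimpleGraph (Fin n), (∀ v : Fin n, ∃ u : Fin n, G.Adj v u) →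
      symbolicPower k G m ≠ (symbolicPower k G 1) ^ m := by
  intro G hG
  have h5 : 0 < n := by omega
  by_cases hcomp : ∀ a b : Fin n, a ≠ b → G.Adj a b
  · -- complete graph case, c = 3
    have ha0 : (0 : ℕ) < n := by omega
    have hb0 : (1 : ℕ) < n := by omega
    have hc0 : (2 : ℕ) < n := by omega
    have he0 : (3 : ℕ) < n := by omega
    set a : Fin n := ⟨0, ha0⟩
    set b : Fin n := ⟨1, hb0⟩
    set c : Fin n := ⟨2, hc0⟩
    set e : Fin n := ⟨3, he0⟩
    have hab : a ≠ b := by simp [Fin.ext_iff]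
    have hac : a ≠ c := by simp [Fin.ext_iff]
    have hae : a ≠ e := by simp [Fin.ext_iff]
    have hbc : b ≠ c := by simp [Fin.ext_iff, b, c]
    have hbe : b ≠ e := by simp [Fin.ext_iff, b, e]
    have hce : c ≠ e := by simp [Fin.ext_iff, c, e]
    have huv : (2 : ℕ) ≤ m - 1 := by omega
    refine main_case G m 3 (by omega) (by omega) (deg_three G hG h5 hcomp)
      (Finsupp.single a (m - 1) + Finsupp.single b (m - 1) + Finsupp.single c (m - 1)
        + Finsupp.single e 2) ?_ ?_
    · intro i j hij
      have hij' : i ≠ j := G.ne_of_adj hij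
      have hsd : ∑ t ∈ Finset.univ \ {i, j}, (Finsupp.single a (m - 1)
        + Finsupp.single b (m - 1) + Finsupp.single c (m - 1)
        + Finsupp.single e 2 : Fin n →₀ ℕ) t
          + ((Finsupp.single a (m - 1)
        + Finsupp.single b (m - 1) + Finsupp.single c (m - 1)
        + Finsupp.single e 2 : Fin n →₀ ℕ) i + (Finsupp.single a (m - 1)
        + Finsupp.single b (m - 1) + Finsupp.single c (m - 1)
        + Finsupp.single e 2 : Fin n →₀ ℕ) j) = ∑ t : Fin n, (Finsupp.single a (m - 1)
        + Finsupp.single b (m - 1) + Finsupp.single c (m - 1)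
        + Finsupp.single e 2 : Fin n →₀ ℕ) t := by
        have h0 := Finset.sum_sdiff (f := fun t => (Finsupp.single a (m - 1)
        + Finsupp.single b (m - 1) + Finsupp.single c (m - 1)
        + Finsupp.single e 2 : Fin n →₀ ℕ) t)
          (Finset.subset_univ ({i, j} : Finset (Fin n)))
        rw [Finset.sum_pair hij'] at h0
        exact h0
      have h1 := val4_le hab hac hae hbc hbe hce huv i
      have h2 := val4_le hab hac hae hbc hbe hce huv j
      have hD := sum4 a b c e 2 (m - 1)
      omega
    · have hD := sum4 a b c e 2 (m - 1)
      omega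
  · -- non-complete case, c = 2
    push_neg at hcomp
    obtain ⟨p, q, hpq, hnadj⟩ := hcomp
    have hcard : 3 ≤ (Finset.univ \ {p, q} : Finset (Fin n)).card := by
      rw [Finset.card_sdiff_of_subset (Finset.subset_univ _), Finset.card_pair hpq, Finset.card_univ,
        Fintype.card_fin]
      omega
    obtain ⟨T, hT, hT3⟩ := Finset.exists_subset_card_eq hcard
    obtain ⟨w1, w2, w3, h12, h13, h23, hTeq⟩ := Finset.card_eq_three.mp hT3
    have hw1 : w1 ∈ Finset.univ \ {p, q} := hT (by simp [hTeq])
    have hw2 : w2 ∈ Finset.univ \ {p, q} := hT (by simp [hTeq])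
    have hw3 : w3 ∈ Finset.univ \ {p, q} := hT (by simp [hTeq])
    simp only [Finset.mem_sdiff, Finset.mem_univ, Finset.mem_insert, Finset.mem_singleton,
      true_and, not_or] at hw1 hw2 hw3
    obtain ⟨hw1p, hw1q⟩ := hw1
    obtain ⟨hw2p, hw2q⟩ := hw2
    obtain ⟨hw3p, hw3q⟩ := hw3
    have hvp := val5_p hpq hw1p hw2p hw3p (m - 2)
    have hvq := val5_q hpq hw1q hw2q hw3q (m - 2)
    have hv1 := fun (x : Fin n) (hxp : x ≠ p) (hxq : x ≠ q) =>
      val5_other h12 h13 h23 (m - 2) hxp hxq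
    have hD := sum5 p q w1 w2 w3 (m - 2)
    refine main_case G m 2 (by omega) (by omega) (deg_two G hG h5)
      (Finsupp.single p (m - 2) + Finsupp.single q (m - 2) + Finsupp.single w1 1
        + Finsupp.single w2 1 + Finsupp.single w3 1) ?_ ?_
    · intro i j hij
      have hij' : i ≠ j := G.ne_of_adj hij
      have hnot1 : ¬(i = p ∧ j = q) := fun ⟨h1, h2⟩ => hnadj (h1 ▸ h2 ▸ hij)
      have hnot2 : ¬(i = q ∧ j = p) := fun ⟨h1, h2⟩ => hnadj (G.adj_symm (h1 ▸ h2 ▸ hij))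
      have hsd : ∑ t ∈ Finset.univ \ {i, j}, (Finsupp.single p (m - 2)
        + Finsupp.single q (m - 2) + Finsupp.single w1 1 + Finsupp.single w2 1
        + Finsupp.single w3 1 : Fin n →₀ ℕ) t
          + ((Finsupp.single p (m - 2)
        + Finsupp.single q (m - 2) + Finsupp.single w1 1 + Finsupp.single w2 1
        + Finsupp.single w3 1 : Fin n →₀ ℕ) i + (Finsupp.single p (m - 2)
        + Finsupp.single q (m - 2) + Finsupp.single w1 1 + Finsupp.single w2 1
        + Finsupp.single w3 1 : Fin n →₀ ℕ) j) = ∑ t : Fin n, (Finsupp.single p (m - 2)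
        + Finsupp.single q (m - 2) + Finsupp.single w1 1 + Finsupp.single w2 1
        + Finsupp.single w3 1 : Fin n →₀ ℕ) t := by
        have h0 := Finset.sum_sdiff (f := fun t => (Finsupp.single p (m - 2)
        + Finsupp.single q (m - 2) + Finsupp.single w1 1 + Finsupp.single w2 1
        + Finsupp.single w3 1 : Fin n →₀ ℕ) t)
          (Finset.subset_univ ({i, j} : Finset (Fin n)))
        rw [Finset.sum_pair hij'] at h0
        exact h0
      have hpair : (Finsupp.single p (m - 2) + Finsupp.single q (m - 2) + Finsupp.single w1 1
          + Finsupp.single w2 1 + Finsupp.single w3 1 : Fin n →₀ ℕ) i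
          + (Finsupp.single p (m - 2) + Finsupp.single q (m - 2) + Finsupp.single w1 1
          + Finsupp.single w2 1 + Finsupp.single w3 1 : Fin n →₀ ℕ) j ≤ m - 1 := by
        by_cases hi : i = p
        · have hjq : j ≠ q := fun h => hnot1 ⟨hi, h⟩
          have hjp : j ≠ p := fun h => hij' (hi.trans h.symm)
          have := hv1 j hjp hjq
          rw [hi, hvp]
          omega
        · by_cases hi2 : i = q
          · have hjp : j ≠ p := fun h => hnot2 ⟨hi2, h⟩
            have hjq : j ≠ q := fun h => hij' (hi2.trans h.symm)
            have := hv1 j hjp hjq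
            rw [hi2, hvq]
            omega
          · have h1 := hv1 i hi hi2
            by_cases hj : j = p
            · have := hvp; rw [hj]; omega
            · by_cases hj2 : j = q
              · have := hvq; rw [hj2]; omega
              · have h2 := hv1 j hj hj2
                omega
      omega
    · omega
end
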